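/- arXiv:1003.5457 — 9 statements merged into one kernel-verified Lean document; each statement's English description precedes it below -/
import Mathlib

section
/- Let φ : ℝ → [0,∞] be a proper closed convex function with φ(1) = 0, and let φ* be its convex conjugate φ*(t) = sup_x (t·x − φ(x)). Then φ*(0) = 0 and the endpoints of the domain of φ* satisfy a_{φ*} = lim_{y→−∞} φ(y)/y and b_{φ*} = lim_{y→+∞} φ(y)/y. -/
open MeasureTheory Filter Topology Set
open scoped ENNReal NNReal Classical

noncomputable section

variable {X : Type*} [MeasurableSpace X]

/-- The φ-divergence ∫ φ(dQ/dP) dP for a signed measure `Q` absolutely continuous w.r.t. `P`. -/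
def div (φ : ℝ → ℝ≥0∞) (Q : SignedMeasure X) (P : Measure X) : ℝ≥0∞ :=
  ∫⁻ x, φ (Q.rnDeriv P x) ∂P

/-- The φ-divergence, set to `⊤` when `Q` is not absolutely continuous w.r.t. `P`. -/
def divext (φ : ℝ → ℝ≥0∞) (Q : SignedMeasure X) (P : Measure X) : ℝ≥0∞ :=
  if Q ≪ᵥ P.toENNRealVectorMeasure then div φ Q P else ⊤

/-- Integral of a real function against a signed measure. -/
def sint (Q : SignedMeasure X) (f : X → ℝ) : ℝ :=
  ∫ x, f x ∂Q.toJordanDecomposition.posPart - ∫ x, f x ∂Q.toJordanDecomposition.negPart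

/-- The τ_F topology on signed measures: the coarsest topology making `Q ↦ ∫ f dQ`
continuous for every `f` which is bounded measurable or belongs to `F`. -/
def tauTop (F : Set (X → ℝ)) : TopologicalSpace (SignedMeasure X) :=
  ⨅ f ∈ {f : X → ℝ | Measurable f ∧ ∃ C, ∀ x, |f x| ≤ C} ∪ F,
    TopologicalSpace.induced (fun Q => sint Q f) inferInstance

/-- Fenchel–Legendre conjugate of an `[0,∞]`-valued function on ℝ. -/
def conjE (φ : ℝ → ℝ≥0∞) (t : ℝ) : EReal :=
  ⨆ x : ℝ, ((t * x : ℝ) : EReal) - ((φ x : ℝ≥0∞) : EReal)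

/-- The nonnegative part of an extended real, as an element of `[0,∞]`. -/
def etoE (e : EReal) : ℝ≥0∞ := if e = ⊤ then ⊤ else ENNReal.ofReal e.toReal

/-- Extended-real-valued integral of an `EReal`-valued function. -/
def eint (P : Measure X) (g : X → EReal) : EReal :=
  ((∫⁻ x, etoE (g x) ∂P : ℝ≥0∞) : EReal) - ((∫⁻ x, etoE (-(g x)) ∂P : ℝ≥0∞) : EReal)


section Aux
variable {φ : ℝ → ℝ≥0∞}

lemma ennreal_coe_ereal_toReal {x : ℝ≥0∞} (h : x ≠ ⊤) :
    ((x : ℝ≥0∞) : EReal) = ((x.toReal : ℝ) : EReal) := by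
  rw [← EReal.toReal_coe_ennreal]
  exact (EReal.coe_toReal (by simpa using h) (by simp)).symm

lemma conjE_le {t c : ℝ} (h : ∀ x : ℝ, φ x ≠ ⊤ → t * x - (φ x).toReal ≤ c) :
    conjE φ t ≤ (c : EReal) := by
  refine iSup_le fun x => ?_
  by_cases hx : φ x = ⊤
  · rw [hx, EReal.coe_ennreal_top, EReal.sub_top]; exact bot_le
  · rw [ennreal_coe_ereal_toReal hx, ← EReal.coe_sub]
    exact_mod_cast h x hx

lemma coe_le_conjE (hone : φ 1 = 0) (t : ℝ) : (t : EReal) ≤ conjE φ t := by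
  have h := le_iSup (fun x : ℝ => ((t * x : ℝ) : EReal) - ((φ x : ℝ≥0∞) : EReal)) 1
  simpa [hone, conjE] using h

lemma lb_of_conjE_le {t C : ℝ} (h : conjE φ t ≤ (C : EReal)) :
    ∀ y : ℝ, φ y ≠ ⊤ → t * y - C ≤ (φ y).toReal := by
  intro y hy
  have h2 := (le_iSup (fun x : ℝ => ((t * x : ℝ) : EReal) - ((φ x : ℝ≥0∞) : EReal)) y).trans h
  rw [ennreal_coe_ereal_toReal hy, ← EReal.coe_sub] at h2
  have h3 : t * y - (φ y).toReal ≤ C := by exact_mod_cast h2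
  linarith

lemma conjE_zero (hone : φ 1 = 0) : conjE φ 0 = 0 := by
  refine le_antisymm ?_ ?_
  · have : ((0 : ℝ) : EReal) = 0 := rfl
    rw [← this]
    refine conjE_le fun x hx => ?_
    simp [ENNReal.toReal_nonneg]
  · simpa using coe_le_conjE hone 0

lemma slope_key (hconv : ConvexOn ℝ≥0 Set.univ φ) (hone : φ 1 = 0) {u x : ℝ}
    (h1 : 0 ≤ (x - u) / (x - 1)) (h2 : 0 ≤ (u - 1) / (x - 1)) (hx : x ≠ 1) :
    φ u ≤ (Real.toNNReal ((u - 1) / (x - 1)) : ℝ≥0∞) * φ x := by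
  set a : ℝ≥0 := Real.toNNReal ((x - u) / (x - 1)) with ha
  set b : ℝ≥0 := Real.toNNReal ((u - 1) / (x - 1)) with hb
  have hx1 : x - 1 ≠ 0 := sub_ne_zero.2 hx
  have hab : a + b = 1 := by
    have : ((a : ℝ≥0) : ℝ) + ((b : ℝ≥0) : ℝ) = 1 := by
      rw [ha, hb, Real.coe_toNNReal _ h1, Real.coe_toNNReal _ h2]
      field_simp
      ring
    exact_mod_cast this
  have hcomb : a • (1 : ℝ) + b • x = u := by
    simp only [NNReal.smul_def, smul_eq_mul, ha, hb,
      Real.coe_toNNReal _ h1, Real.coe_toNNReal _ h2]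
    field_simp
    ring
  have h := hconv.2 (Set.mem_univ (1 : ℝ)) (Set.mem_univ x) (zero_le (a := a)) (zero_le (a := b)) hab
  rw [hcomb, hone] at h
  simpa [ENNReal.smul_def, smul_eq_mul] using h

lemma toReal_slope (hconv : ConvexOn ℝ≥0 Set.univ φ) (hone : φ 1 = 0) {u x : ℝ}
    (h1 : 0 ≤ (x - u) / (x - 1)) (h2 : 0 ≤ (u - 1) / (x - 1)) (hx : x ≠ 1)
    (hxt : φ x ≠ ⊤) :
    φ u ≠ ⊤ ∧ (φ u).toReal ≤ (u - 1) / (x - 1) * (φ x).toReal := by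
  have hkey := slope_key hconv hone h1 h2 hx
  have hne : (Real.toNNReal ((u - 1) / (x - 1)) : ℝ≥0∞) * φ x ≠ ⊤ :=
    ENNReal.mul_ne_top ENNReal.coe_ne_top hxt
  refine ⟨ne_top_of_le_ne_top hne hkey, ?_⟩
  have h := ENNReal.toReal_mono hne hkey
  rwa [ENNReal.toReal_mul, ENNReal.coe_toReal, Real.coe_toNNReal _ h2] at h

/-- Right-side bound: if `φ(y₀) ≥ t y₀` with `1 < y₀`, `0 ≤ t`, then `φ(x) ≥ t (x-1)` for `x > y₀`. -/
lemma bound_right (hconv : ConvexOn ℝ≥0 Set.univ φ) (hone : φ 1 = 0) {t y₀ x : ℝ}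
    (ht : 0 ≤ t) (hy₀ : 1 < y₀) (hφ : φ y₀ ≠ ⊤ → t * y₀ ≤ (φ y₀).toReal)
    (hx : y₀ < x) (hxt : φ x ≠ ⊤) : t * (x - 1) ≤ (φ x).toReal := by
  have hx1 : (0:ℝ) < x - 1 := by linarith
  have h1 : 0 ≤ (x - y₀) / (x - 1) := div_nonneg (by linarith) (by linarith)
  have h2 : 0 ≤ (y₀ - 1) / (x - 1) := div_nonneg (by linarith) (by linarith)
  obtain ⟨hneφ, hts⟩ := toReal_slope hconv hone h1 h2 (by linarith) hxt
  have hty := hφ hneφ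
  have h4 : (φ y₀).toReal * (x - 1) ≤ (y₀ - 1) * (φ x).toReal := by
    have h5 := mul_le_mul_of_nonneg_right hts hx1.le
    have h6 : (y₀ - 1) / (x - 1) * (φ x).toReal * (x - 1) = (y₀ - 1) * (φ x).toReal := by
      field_simp
    rwa [h6] at h5
  nlinarith [ENNReal.toReal_nonneg (a := φ x)]

/-- Left-side bound. -/
lemma bound_left (hconv : ConvexOn ℝ≥0 Set.univ φ) (hone : φ 1 = 0) {t t' y₀ x : ℝ}
    (ht' : t' ≤ 0) (hy₀ : y₀ < 0) (hs : t * (y₀ - 1) ≤ t' * y₀)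
    (hφ : φ y₀ ≠ ⊤ → t' * y₀ ≤ (φ y₀).toReal)
    (hx : x < y₀) (hxt : φ x ≠ ⊤) : t * (x - 1) ≤ (φ x).toReal := by
  have hx1 : x - 1 < 0 := by linarith
  have h1 : 0 ≤ (x - y₀) / (x - 1) := div_nonneg_of_nonpos (by linarith) hx1.le
  have h2 : 0 ≤ (y₀ - 1) / (x - 1) := div_nonneg_of_nonpos (by linarith) hx1.le
  obtain ⟨hneφ, hts⟩ := toReal_slope hconv hone h1 h2 (by linarith) hxt
  have hty := hφ hneφ
  have ht'y : 0 ≤ t' * y₀ := mul_nonneg_of_nonpos_of_nonpos ht' hy₀.le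
  -- py₀ ≤ (y₀-1)/(x-1) * px ; multiply by (x-1) < 0 flips
  have h4 : (y₀ - 1) * (φ x).toReal ≤ (φ y₀).toReal * (x - 1) := by
    have h5 := mul_le_mul_of_nonpos_right hts hx1.le
    have hne : x - 1 ≠ 0 := ne_of_lt hx1
    have h6 : (y₀ - 1) / (x - 1) * (φ x).toReal * (x - 1) = (y₀ - 1) * (φ x).toReal := by
      field_simp
    rwa [h6] at h5
  nlinarith [ENNReal.toReal_nonneg (a := φ x)]

end Aux

/-- For a proper closed convex `φ : ℝ → [0,∞]` with `φ 1 = 0` whose domain is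
an interval with endpoints `a_φ < 1 < b_φ`, the conjugate satisfies `φ*(0) = 0`, and the
endpoints of the domain of `φ*` are `a_{φ*} = lim_{y→−∞} φ(y)/y` and
`b_{φ*} = lim_{y→+∞} φ(y)/y`. -/
theorem stmt0 (φ : ℝ → ℝ≥0∞)
    (hconv : ConvexOn ℝ≥0 Set.univ φ)
    (hlsc : LowerSemicontinuous φ)
    (hone : φ 1 = 0)
    (hint : (1 : ℝ) ∈ interior {x : ℝ | φ x ≠ ⊤}) :
    conjE φ 0 = 0 ∧
    Tendsto (fun y : ℝ => ((φ y : ℝ≥0∞) : EReal) / (y : EReal)) atBot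
      (𝓝 (sInf ((fun t : ℝ => (t : EReal)) '' {t : ℝ | conjE φ t ≠ ⊤}))) ∧
    Tendsto (fun y : ℝ => ((φ y : ℝ≥0∞) : EReal) / (y : EReal)) atTop
      (𝓝 (sSup ((fun t : ℝ => (t : EReal)) '' {t : ℝ | conjE φ t ≠ ⊤}))) := by
  clear hlsc hint
  have h0 : conjE φ 0 = 0 := conjE_zero hone
  set S : Set EReal := (fun t : ℝ => (t : EReal)) '' {t : ℝ | conjE φ t ≠ ⊤} with hSdef
  have h0S : (0 : EReal) ∈ S := ⟨0, by simp [Set.mem_setOf_eq, h0], by simp⟩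
  have hB0 : (0 : EReal) ≤ sSup S := le_sSup h0S
  have hA0 : sInf S ≤ (0 : EReal) := sInf_le h0S
  refine ⟨h0, ?_, ?_⟩
  · -- atBot
    rw [tendsto_order]
    constructor
    · -- (ii)−  : ∀ c < sInf S, eventually c < f y
      intro c hc
      by_contra hcon
      rw [Filter.not_eventually] at hcon
      obtain ⟨t, hct, htA⟩ := EReal.exists_between_coe_real hc
      obtain ⟨t', hct', ht't⟩ := EReal.exists_between_coe_real hct
      have ht'ltt : t' < t := by exact_mod_cast ht't
      have htneg : t < 0 := by
        have h1 : (t : EReal) < ((0:ℝ) : EReal) := by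
          refine lt_of_lt_of_le htA ?_; simpa using hA0
        exact_mod_cast h1
      have ht'neg : t' < 0 := lt_trans ht'ltt htneg
      obtain ⟨y₀, hy₀f, hy₀Y⟩ :=
        (hcon.and_eventually (eventually_le_atBot (min (t / (t - t')) (-1)))).exists
      rw [not_lt] at hy₀f
      have hy₀1 : y₀ ≤ -1 := le_trans hy₀Y (min_le_right _ _)
      have hy₀neg : y₀ < 0 := by linarith
      have hy₀s : y₀ ≤ t / (t - t') := le_trans hy₀Y (min_le_left _ _)
      have hs : t * (y₀ - 1) ≤ t' * y₀ := by
        have htt' : (0:ℝ) < t - t' := by linarith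
        have h2 : y₀ * (t - t') ≤ t := by
          have := (le_div_iff₀ htt').1 hy₀s
          linarith
        nlinarith
      have hφy₀ : φ y₀ ≠ ⊤ → t' * y₀ ≤ (φ y₀).toReal := by
        intro hT
        rw [ennreal_coe_ereal_toReal hT, ← EReal.coe_div] at hy₀f
        have h2 : ((φ y₀).toReal / y₀ : ℝ) < t' := by
          exact_mod_cast lt_of_le_of_lt hy₀f hct'
        have h3 := mul_lt_mul_of_neg_right h2 hy₀neg
        rw [div_mul_cancel₀ _ (ne_of_lt hy₀neg)] at h3
        linarith
      have hbound : conjE φ t ≤ ((t * y₀ : ℝ) : EReal) := by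
        refine conjE_le fun x hx => ?_
        have hty₀ : 0 ≤ t * y₀ := mul_nonneg_of_nonpos_of_nonpos htneg.le hy₀neg.le
        by_cases hxy : x < y₀
        · have := bound_left hconv hone ht'neg.le hy₀neg hs hφy₀ hxy hx
          linarith
        · push_neg at hxy
          have h1 : t * x ≤ t * y₀ := mul_le_mul_of_nonpos_left hxy htneg.le
          have h2 := ENNReal.toReal_nonneg (a := φ x)
          linarith
      have htS : (t : EReal) ∈ S := ⟨t, ne_top_of_le_ne_top (EReal.coe_ne_top _) hbound, rfl⟩
      exact absurd htA (not_lt.2 (sInf_le htS))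
    · -- (i)− : ∀ c > sInf S, eventually f y < c
      intro c hc
      obtain ⟨b, hbS, hbc⟩ := sInf_lt_iff.1 hc
      obtain ⟨t, htS, rfl⟩ := hbS
      have hconjne : conjE φ t ≠ ⊤ := htS
      have hconjnb : conjE φ t ≠ ⊥ :=
        ne_bot_of_le_ne_bot (EReal.coe_ne_bot t) (coe_le_conjE hone t)
      set C : ℝ := max ((conjE φ t).toReal) 0 with hCdef
      have hCle : conjE φ t ≤ (C : EReal) := by
        conv_lhs => rw [← EReal.coe_toReal hconjne hconjnb]
        exact_mod_cast le_max_left _ _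
      have hC0 : (0:ℝ) ≤ C := le_max_right _ _
      have hlb := lb_of_conjE_le hCle
      obtain ⟨c₂, htc₂, hc₂c⟩ := EReal.exists_between_coe_real hbc
      have htc₂' : t < c₂ := by exact_mod_cast show ((t:ℝ):EReal) < (c₂:EReal) from htc₂
      have hct : (0:ℝ) < c₂ - t := by linarith
      filter_upwards [eventually_le_atBot (min (-1) (-(C / (c₂ - t)) - 1))] with y hy
      have hy1 : y ≤ -1 := le_trans hy (min_le_left _ _)
      have hyneg : y < 0 := by linarith
      have hy2 : y ≤ -(C / (c₂ - t)) - 1 := le_trans hy (min_le_right _ _)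
      by_cases hT : φ y = ⊤
      · rw [hT, EReal.coe_ennreal_top,
          EReal.top_div_of_neg_ne_bot (by exact_mod_cast hyneg) (EReal.coe_ne_bot y)]
        exact lt_of_lt_of_le (EReal.bot_lt_coe t) (le_of_lt hbc)
      · rw [ennreal_coe_ereal_toReal hT, ← EReal.coe_div]
        refine lt_trans ?_ hc₂c
        rw [EReal.coe_lt_coe_iff]
        have hpy := hlb y hT
        have hdiv : (φ y).toReal / y ≤ (t * y - C) / y :=
          div_le_div_of_nonpos_of_le hyneg.le hpy
        have hD : C = (c₂ - t) * (C / (c₂ - t)) := (mul_div_cancel₀ C (ne_of_gt hct)).symm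
        have h9 : c₂ * y < t * y - C := by nlinarith
        have h10 : (t * y - C) / y < c₂ := by
          rw [div_lt_iff_of_neg hyneg]
          linarith
        linarith
  · -- atTop
    rw [tendsto_order]
    constructor
    · -- (i)+ : ∀ c < sSup S, eventually c < f y
      intro c hc
      obtain ⟨b, hbS, hcb⟩ := lt_sSup_iff.1 hc
      obtain ⟨t, htS, rfl⟩ := hbS
      have hconjne : conjE φ t ≠ ⊤ := htS
      have hconjnb : conjE φ t ≠ ⊥ :=
        ne_bot_of_le_ne_bot (EReal.coe_ne_bot t) (coe_le_conjE hone t)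
      set C : ℝ := max ((conjE φ t).toReal) 0 with hCdef
      have hCle : conjE φ t ≤ (C : EReal) := by
        conv_lhs => rw [← EReal.coe_toReal hconjne hconjnb]
        exact_mod_cast le_max_left _ _
      have hC0 : (0:ℝ) ≤ C := le_max_right _ _
      have hlb := lb_of_conjE_le hCle
      obtain ⟨c₂, hcc₂, hc₂t⟩ := EReal.exists_between_coe_real hcb
      have hc₂t' : c₂ < t := by exact_mod_cast show ((c₂:ℝ):EReal) < (t:EReal) from hc₂t
      have hct : (0:ℝ) < t - c₂ := by linarith
      filter_upwards [eventually_ge_atTop (max 1 (C / (t - c₂) + 1))] with y hy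
      have hy1 : (1:ℝ) ≤ y := le_trans (le_max_left _ _) hy
      have hypos : (0:ℝ) < y := by linarith
      have hy2 : C / (t - c₂) + 1 ≤ y := le_trans (le_max_right _ _) hy
      by_cases hT : φ y = ⊤
      · rw [hT, EReal.coe_ennreal_top,
          EReal.top_div_of_pos_ne_top (by exact_mod_cast hypos) (EReal.coe_ne_top y)]
        exact lt_of_lt_of_le hcb le_top
      · rw [ennreal_coe_ereal_toReal hT, ← EReal.coe_div]
        refine lt_trans hcc₂ ?_
        rw [EReal.coe_lt_coe_iff]
        have hpy := hlb y hT
        have hdiv : (t * y - C) / y ≤ (φ y).toReal / y := by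
          gcongr
        have hD : C = (t - c₂) * (C / (t - c₂)) := (mul_div_cancel₀ C (ne_of_gt hct)).symm
        have h9 : c₂ * y < t * y - C := by nlinarith
        have h10 : c₂ < (t * y - C) / y := by
          rw [lt_div_iff₀ hypos]
          linarith
        linarith
    · -- (ii)+ : ∀ c > sSup S, eventually f y < c
      intro c hc
      by_contra hcon
      rw [Filter.not_eventually] at hcon
      obtain ⟨t, hBt, htc⟩ := EReal.exists_between_coe_real hc
      have htpos : (0:ℝ) < t := by
        have h1 : ((0:ℝ) : EReal) < (t : EReal) := by
          refine lt_of_le_of_lt ?_ hBt; simpa using hB0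
        exact_mod_cast h1
      obtain ⟨y₀, hy₀f, hy₀2⟩ := (hcon.and_eventually (eventually_ge_atTop 2)).exists
      rw [not_lt] at hy₀f
      have hy₀1 : (1:ℝ) < y₀ := by linarith
      have hy₀pos : (0:ℝ) < y₀ := by linarith
      have hφy₀ : φ y₀ ≠ ⊤ → t * y₀ ≤ (φ y₀).toReal := by
        intro hT
        rw [ennreal_coe_ereal_toReal hT, ← EReal.coe_div] at hy₀f
        have h2 : (t:ℝ) < ((φ y₀).toReal / y₀ : ℝ) := by
          exact_mod_cast lt_of_lt_of_le htc hy₀f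
        have h3 := (lt_div_iff₀ hy₀pos).1 h2
        linarith
      have hbound : conjE φ t ≤ ((t * y₀ : ℝ) : EReal) := by
        refine conjE_le fun x hx => ?_
        by_cases hxy : y₀ < x
        · have := bound_right hconv hone htpos.le hy₀1 hφy₀ hxy hx
          nlinarith
        · push_neg at hxy
          have h1 : t * x ≤ t * y₀ := mul_le_mul_of_nonneg_left hxy htpos.le
          have h2 := ENNReal.toReal_nonneg (a := φ x)
          linarith
      have htS : (t : EReal) ∈ S := ⟨t, ne_top_of_le_ne_top (EReal.coe_ne_top _) hbound, rfl⟩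
      exact absurd hBt (not_lt.2 (le_sSup htS))
end
end

section
/- Let P be a probability measure and φ : ℝ → [0,∞] a proper closed convex function with φ(1)=0 which is strictly convex in a neighborhood of 1. Then for any finite signed measure Q absolutely continuous with respect to P, φ(Q,P) = 0 if and only if Q = P. -/
open MeasureTheory Filter Topology Set
open scoped ENNReal NNReal Classical

noncomputable section

variable {X : Type*} [MeasurableSpace X]

lemma withDensityv_one (P : Measure X) [IsFiniteMeasure P] :
    P.withDensityᵥ (fun _ => (1:ℝ)) = P.toSignedMeasure := by
  ext i hi
  rw [withDensityᵥ_apply (integrable_const 1) hi, Measure.toSignedMeasure_apply_measurable hi]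
  simp

lemma phi_zero_iff (φ : ℝ → ℝ≥0∞)
    (hconv : ConvexOn ℝ≥0 Set.univ φ)
    (hone : φ 1 = 0)
    (hstrict : ∃ ε > (0 : ℝ), ∀ x ∈ Ioo (1 - ε) (1 + ε), ∀ y ∈ Ioo (1 - ε) (1 + ε),
      x ≠ y → ∀ a b : ℝ, 0 < a → 0 < b → a + b = 1 →
        φ (a * x + b * y) < ENNReal.ofReal a * φ x + ENNReal.ofReal b * φ y)
    {t : ℝ} (ht : φ t = 0) : t = 1 := by
  obtain ⟨ε, hε, hs⟩ := hstrict
  by_contra htne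
  have h1 : (1:ℝ) ∈ Ioo (1 - ε) (1 + ε) := by constructor <;> linarith
  -- no zero inside the neighborhood other than 1
  have key : ∀ u ∈ Ioo (1 - ε) (1 + ε), u ≠ 1 → φ u ≠ 0 := by
    intro u hu hune hu0
    have := hs u hu 1 h1 hune (1/2) (1/2) (by norm_num) (by norm_num) (by norm_num)
    rw [hu0, hone] at this
    simp at this
  by_cases hmem : t ∈ Ioo (1 - ε) (1 + ε)
  · exact key t hmem htne ht
  · have habs : ε ≤ |t - 1| := by
      rcases abs_cases (t - 1) with ⟨h, h'⟩ | ⟨h, h'⟩ <;>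
        simp only [mem_Ioo, not_and_or, not_lt] at hmem <;> rcases hmem with h2 | h2 <;> linarith
    have habs0 : (0:ℝ) < |t - 1| := lt_of_lt_of_le hε habs
    set b : ℝ := (ε/2)/|t - 1| with hb_def
    have hb0 : 0 < b := div_pos (by linarith) habs0
    have hb1 : b ≤ 1/2 := by
      rw [hb_def, div_le_iff₀ habs0]; nlinarith
    set a : ℝ := 1 - b with ha_def
    have ha0 : 0 < a := by linarith
    set s : ℝ := a * 1 + b * t with hs_def
    have hsdist : |s - 1| = ε/2 := by
      have : s - 1 = b * (t - 1) := by rw [hs_def, ha_def]; ring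
      rw [this, abs_mul, abs_of_pos hb0, hb_def]
      field_simp
    have hsmem : s ∈ Ioo (1 - ε) (1 + ε) := by
      rcases abs_cases (s - 1) with ⟨h, h'⟩ | ⟨h, h'⟩ <;> constructor <;> nlinarith
    have hsne : s ≠ 1 := by
      intro h
      rw [h] at hsdist
      simp at hsdist
      linarith
    have hφs : φ s = 0 := by
      set na : ℝ≥0 := ⟨a, ha0.le⟩ with hna
      set nb : ℝ≥0 := ⟨b, hb0.le⟩ with hnb
      have hab : na + nb = 1 := by apply NNReal.coe_injective; change a + b = (1:ℝ); rw [ha_def]; ring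
      have hcv := hconv.2 (Set.mem_univ (1:ℝ)) (Set.mem_univ t) (zero_le (a := na)) (zero_le (a := nb)) hab
      rw [hone, ht, smul_zero, smul_zero, add_zero] at hcv
      have heq : na • (1:ℝ) + nb • t = s := by
        change a * (1:ℝ) + b * t = s; rw [hs_def]
      rw [heq] at hcv
      exact le_antisymm hcv zero_le
    exact key s hsmem hsne hφs

/-- Let `P` be a probability measure and `φ : ℝ → [0,∞]` a proper closed
convex function with `φ 1 = 0` which is strictly convex in a neighborhood of `1`.  Then for any
finite signed measure `Q ≪ P`, `φ(Q,P) = 0` if and only if `Q = P`. -/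
theorem stmt5 (P : Measure X) [IsProbabilityMeasure P]
    (φ : ℝ → ℝ≥0∞)
    (hconv : ConvexOn ℝ≥0 Set.univ φ)
    (hlsc : LowerSemicontinuous φ)
    (hone : φ 1 = 0)
    (hstrict : ∃ ε > (0 : ℝ), ∀ x ∈ Ioo (1 - ε) (1 + ε), ∀ y ∈ Ioo (1 - ε) (1 + ε),
      x ≠ y → ∀ a b : ℝ, 0 < a → 0 < b → a + b = 1 →
        φ (a * x + b * y) < ENNReal.ofReal a * φ x + ENNReal.ofReal b * φ y) :
    ∀ Q : SignedMeasure X, Q ≪ᵥ P.toENNRealVectorMeasure →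
      (div φ Q P = 0 ↔ Q = P.toSignedMeasure) := by
  intro Q hQ
  constructor
  · intro h
    have hmeas : Measurable fun x => φ (Q.rnDeriv P x) :=
      hlsc.measurable.comp (SignedMeasure.measurable_rnDeriv Q P)
    have h0 : (fun x => φ (Q.rnDeriv P x)) =ᵐ[P] 0 :=
      (lintegral_eq_zero_iff hmeas).mp h
    have h1 : Q.rnDeriv P =ᵐ[P] fun _ => (1:ℝ) := by
      filter_upwards [h0] with x hx
      exact phi_zero_iff φ hconv hone hstrict hx
    rw [← SignedMeasure.withDensityᵥ_rnDeriv_eq Q P hQ, WithDensityᵥEq.congr_ae h1,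
      withDensityv_one]
  · intro h
    subst h
    have h1 : (P.toSignedMeasure).rnDeriv P =ᵐ[P] fun _ => (1:ℝ) := by
      refine (SignedMeasure.eq_rnDeriv (μ := P) 0 (fun _ => (1:ℝ))
        (integrable_const 1) ?_ ?_).symm
      · exact VectorMeasure.MutuallySingular.zero_left
      · rw [zero_add, withDensityv_one]
    have : (fun x => φ ((P.toSignedMeasure).rnDeriv P x)) =ᵐ[P] fun _ => φ 1 := by
      filter_upwards [h1] with x hx
      rw [hx]
    rw [div, lintegral_congr_ae this, hone, lintegral_zero]
end
end

section
/- Let P be a probability measure and φ : ℝ → [0,∞] proper closed convex with φ(1)=0. The divergence functional Q ↦ φ(Q,P) is lower semicontinuous on the space of finite signed measures equipped with the τ-topology (the weak topology induced by all bounded measurable functions), where φ(Q,P) := ∫ φ(dQ/dP) dP if Q ≪ P and +∞ otherwise. -/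
open MeasureTheory Filter Topology Set
open scoped ENNReal NNReal Classical

noncomputable section

variable {X : Type*} [MeasurableSpace X]

/- ### Auxiliary development -/

def IsMino (φ : ℝ → ℝ≥0∞) (a b : ℝ) : Prop := ∀ s : ℝ, ENNReal.ofReal (a * s - b) ≤ φ s

lemma epi_closed (φ : ℝ → ℝ≥0∞) (hlsc : LowerSemicontinuous φ) :
    IsClosed {p : ℝ × ℝ | φ p.1 ≤ ENNReal.ofReal p.2 ∧ 0 ≤ p.2} := by
  refine IsClosed.inter ?_ (isClosed_le continuous_const continuous_snd)
  show IsClosed {p : ℝ × ℝ | φ p.1 ≤ ENNReal.ofReal p.2}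
  rw [← isOpen_compl_iff]
  rw [isOpen_iff_mem_nhds]
  rintro ⟨s, t⟩ hp
  have hp' : ENNReal.ofReal t < φ s := not_le.1 hp
  obtain ⟨c, hc1, hc2⟩ := exists_between hp'
  have h1 : ∀ᶠ s' in 𝓝 s, c < φ s' := hlsc s c hc2
  have h2 : ∀ᶠ t' in 𝓝 t, ENNReal.ofReal t' < c := by
    have : ENNReal.ofReal ⁻¹' (Iio c) ∈ 𝓝 t :=
      ENNReal.continuous_ofReal.continuousAt.preimage_mem_nhds (Iio_mem_nhds hc1)
    exact this
  rw [nhds_prod_eq]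
  filter_upwards [Filter.Eventually.prod_mk h1 h2] with q hq
  exact not_le.2 (hq.2.trans hq.1)

lemma epi_convex (φ : ℝ → ℝ≥0∞) (hconv : ConvexOn ℝ≥0 Set.univ φ) :
    Convex ℝ {p : ℝ × ℝ | φ p.1 ≤ ENNReal.ofReal p.2 ∧ 0 ≤ p.2} := by
  rintro ⟨x1, t1⟩ ⟨h1, ht1⟩ ⟨x2, t2⟩ ⟨h2, ht2⟩ a b ha hb hab
  constructor
  · have := hconv.2 (mem_univ x1) (mem_univ x2) (zero_le : 0 ≤ a.toNNReal) (zero_le : 0 ≤ b.toNNReal)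
      (by rw [← Real.toNNReal_add ha hb, hab, Real.toNNReal_one])
    have hax : a.toNNReal • x1 + b.toNNReal • x2 = (a • (x1, t1) + b • (x2, t2)).1 := by
      simp [NNReal.smul_def, Real.coe_toNNReal _ ha, Real.coe_toNNReal _ hb]
    rw [hax] at this
    refine this.trans ?_
    have key : ∀ (c : ℝ), 0 ≤ c → ∀ (u : ℝ≥0∞) (t : ℝ), u ≤ ENNReal.ofReal t →
        c.toNNReal • u ≤ ENNReal.ofReal (c * t) := by
      intro c hc u t hu
      rw [ENNReal.smul_def, smul_eq_mul, ENNReal.ofReal_mul hc]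
      exact mul_le_mul' (le_of_eq rfl) hu
    calc a.toNNReal • φ x1 + b.toNNReal • φ x2
        ≤ ENNReal.ofReal (a * t1) + ENNReal.ofReal (b * t2) :=
          add_le_add (key a ha _ _ h1) (key b hb _ _ h2)
      _ = ENNReal.ofReal (a * t1 + b * t2) :=
          (ENNReal.ofReal_add (by positivity) (by positivity)).symm
      _ = ENNReal.ofReal (a • (x1, t1) + b • (x2, t2)).2 := by simp
  · have : 0 ≤ a * t1 + b * t2 := by positivity
    simpa using this

lemma exists_mino_real (φ : ℝ → ℝ≥0∞) (hconv : ConvexOn ℝ≥0 Set.univ φ)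
    (hlsc : LowerSemicontinuous φ) (hone : φ 1 = 0) {s0 r : ℝ} (hr0 : 0 ≤ r)
    (hr : ENNReal.ofReal r < φ s0) :
    ∃ a b : ℝ, IsMino φ a b ∧ r < a * s0 - b := by
  set E : Set (ℝ × ℝ) := {p : ℝ × ℝ | φ p.1 ≤ ENNReal.ofReal p.2 ∧ 0 ≤ p.2} with hE
  have hx : (s0, r) ∉ E := by
    rintro ⟨h1, -⟩
    exact absurd h1 (not_le.2 hr)
  obtain ⟨f, u, hfu, hfE⟩ :=
    geometric_hahn_banach_point_closed (epi_convex φ hconv) (epi_closed φ hlsc) hx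
  set α := f (1, 0) with hα
  set β := f (0, 1) with hβ
  have hfst : ∀ s t : ℝ, f (s, t) = s * α + t * β := by
    intro s t
    have : (s, t) = s • ((1 : ℝ), (0 : ℝ)) + t • ((0 : ℝ), (1 : ℝ)) := by
      simp [Prod.ext_iff]
    rw [this, map_add, f.map_smul, f.map_smul, smul_eq_mul, smul_eq_mul]
  have hmem : ∀ s : ℝ, φ s ≠ ⊤ → u < s * α + (φ s).toReal * β := by
    intro s hs
    have : (s, (φ s).toReal) ∈ E :=
      ⟨by rw [ENNReal.ofReal_toReal hs], ENNReal.toReal_nonneg⟩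
    have := hfE _ this
    rwa [hfst] at this
  have hfu' : s0 * α + r * β < u := by rw [← hfst]; exact hfu
  have hβ0 : 0 ≤ β := by
    by_contra hneg
    push_neg at hneg
    set M : ℝ := max 0 ((u - α) / β) with hM
    have hM0 : 0 ≤ M := le_max_left _ _
    have h1M : ((1 : ℝ), M) ∈ E := ⟨by rw [hone]; exact zero_le, hM0⟩
    have := hfE _ h1M
    rw [hfst] at this
    have hMβ : M * β ≤ u - α := by
      rw [← div_le_iff_of_neg hneg]
      exact le_max_right _ _
    linarith
  rcases eq_or_lt_of_le hβ0 with hβeq | hβpos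
  · -- β = 0
    have hα1 : u < α := by
      have := hmem 1 (by rw [hone]; exact ENNReal.zero_ne_top)
      rw [← hβeq] at this; linarith
    have hs0α : s0 * α < u := by rw [← hβeq] at hfu'; linarith
    have hd : 0 < u - s0 * α := by linarith
    refine ⟨-((r + 1) / (u - s0 * α)) * α, -((r + 1) / (u - s0 * α)) * u, ?_, ?_⟩
    · intro s
      by_cases hφs : φ s = ⊤
      · rw [hφs]; exact le_top
      · have hus : u < s * α := by
          have := hmem s hφs; rw [← hβeq] at this; linarith
        have hlam : 0 ≤ (r + 1) / (u - s0 * α) := by positivity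
        have : -((r + 1) / (u - s0 * α)) * α * s - -((r + 1) / (u - s0 * α)) * u
            = (r + 1) / (u - s0 * α) * (u - s * α) := by ring
        rw [this]
        have hle : (r + 1) / (u - s0 * α) * (u - s * α) ≤ 0 :=
          mul_nonpos_of_nonneg_of_nonpos hlam (by linarith)
        rw [ENNReal.ofReal_eq_zero.2 hle]
        exact zero_le
    · have : -((r + 1) / (u - s0 * α)) * α * s0 - -((r + 1) / (u - s0 * α)) * u
          = (r + 1) / (u - s0 * α) * (u - s0 * α) := by ring
      rw [this, div_mul_cancel₀ _ (ne_of_gt hd)]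
      linarith
  · -- β > 0
    refine ⟨-α / β, -u / β, ?_, ?_⟩
    · intro s
      by_cases hφs : φ s = ⊤
      · rw [hφs]; exact le_top
      · have := hmem s hφs
        have hlt : -α / β * s - -u / β < (φ s).toReal := by
          rw [div_mul_eq_mul_div, div_sub_div_same, div_lt_iff₀ hβpos]
          nlinarith
        calc ENNReal.ofReal (-α / β * s - -u / β)
            ≤ ENNReal.ofReal (φ s).toReal := ENNReal.ofReal_le_ofReal hlt.le
          _ = φ s := ENNReal.ofReal_toReal hφs
    · rw [div_mul_eq_mul_div, div_sub_div_same, lt_div_iff₀ hβpos]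
      nlinarith

lemma isMino_zero (φ : ℝ → ℝ≥0∞) : IsMino φ 0 0 := by
  intro s; simp

lemma ofReal_max_zero (t : ℝ) : ENNReal.ofReal (max t 0) = ENNReal.ofReal t := by
  rcases le_total t 0 with h | h
  · rw [max_eq_right h, ENNReal.ofReal_zero, eq_comm, ENNReal.ofReal_eq_zero]; exact h
  · rw [max_eq_left h]

lemma isMino_of_le_hinge {φ : ℝ → ℝ≥0∞} {a b : ℝ} (hab : IsMino φ a b) {p q : ℝ}
    (h : ∀ s, p * s - q ≤ max (a * s - b) 0) : IsMino φ p q := by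
  intro s
  calc ENNReal.ofReal (p * s - q) ≤ ENNReal.ofReal (max (a * s - b) 0) :=
        ENNReal.ofReal_le_ofReal (h s)
    _ = ENNReal.ofReal (a * s - b) := ofReal_max_zero _
    _ ≤ φ s := hab s

lemma exists_mino_rat (φ : ℝ → ℝ≥0∞) (hconv : ConvexOn ℝ≥0 Set.univ φ)
    (hlsc : LowerSemicontinuous φ) (hone : φ 1 = 0) {s0 r : ℝ}
    (hr : ENNReal.ofReal r < φ s0) :
    ∃ p q : ℚ, IsMino φ (p : ℝ) (q : ℝ) ∧ r < (p : ℝ) * s0 - (q : ℝ) := by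
  rcases lt_or_ge r 0 with hr0 | hr0
  · exact ⟨0, 0, by simpa using isMino_zero φ, by simpa using hr0⟩
  obtain ⟨a, b, hab, hval⟩ := exists_mino_real φ hconv hlsc hone hr0 hr
  rcases lt_trichotomy a 0 with ha | ha | ha
  · -- a < 0 : s0 < b/a
    have ha' : a ≠ 0 := ne_of_lt ha
    have h2 : a * (s0 - b / a) = a * s0 - b := by
      field_simp
      try ring
    have hss : s0 - b / a < 0 := by
      by_contra hcon
      push_neg at hcon
      nlinarith [mul_nonpos_of_nonpos_of_nonneg ha.le hcon]
    have hra : a < r / (s0 - b / a) := by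
      rw [lt_div_iff_of_neg hss]
      nlinarith
    obtain ⟨p, hp1, hp2⟩ := exists_rat_btwn (lt_min hra (by linarith : a < 0))
    have hp0 : (p : ℝ) < 0 := hp2.trans_le (min_le_right _ _)
    have hpr : r < (p : ℝ) * (s0 - b / a) := by
      have h3 := hp2.trans_le (min_le_left _ _)
      calc r = r / (s0 - b / a) * (s0 - b / a) :=
            (div_mul_cancel₀ r (ne_of_lt hss)).symm
        _ < (p : ℝ) * (s0 - b / a) := mul_lt_mul_of_neg_right h3 hss
    obtain ⟨q, hq1, hq2⟩ := exists_rat_btwn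
      (show (p : ℝ) * (b / a) < (p : ℝ) * s0 - r by nlinarith)
    refine ⟨p, q, isMino_of_le_hinge hab ?_, by linarith⟩
    intro s
    rcases le_or_gt s (b / a) with hs | hs
    · refine le_trans ?_ (le_max_left _ _)
      have h1 : (p : ℝ) * (s - b / a) ≤ a * (s - b / a) := by nlinarith
      have h3 : a * (s - b / a) = a * s - b := by field_simp; try ring
      nlinarith [hq1]
    · refine le_trans ?_ (le_max_right _ _)
      nlinarith [hq1]
  · -- a = 0
    subst ha
    have hb : b < -r := by linarith [hval]
    obtain ⟨q, hq1, hq2⟩ := exists_rat_btwn hb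
    refine ⟨0, q, isMino_of_le_hinge hab ?_, by push_cast; linarith⟩
    intro s
    refine le_trans ?_ (le_max_left _ _)
    push_cast
    linarith
  · -- a > 0 : s0 > b/a
    have ha' : a ≠ 0 := ne_of_gt ha
    have h2 : a * (s0 - b / a) = a * s0 - b := by field_simp; try ring
    have hss : 0 < s0 - b / a := by
      by_contra hcon
      push_neg at hcon
      nlinarith [mul_nonpos_of_nonneg_of_nonpos ha.le hcon]
    have hra : r / (s0 - b / a) < a := by
      rw [div_lt_iff₀ hss]
      nlinarith
    obtain ⟨p, hp1, hp2⟩ := exists_rat_btwn (max_lt hra ha)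
    have hp0 : 0 < (p : ℝ) := (le_max_right _ _).trans_lt hp1
    have hpr : r < (p : ℝ) * (s0 - b / a) := by
      have h3 := (le_max_left _ _).trans_lt hp1
      calc r = r / (s0 - b / a) * (s0 - b / a) :=
            (div_mul_cancel₀ r (ne_of_gt hss)).symm
        _ < (p : ℝ) * (s0 - b / a) := mul_lt_mul_of_pos_right h3 hss
    obtain ⟨q, hq1, hq2⟩ := exists_rat_btwn
      (show (p : ℝ) * (b / a) < (p : ℝ) * s0 - r by nlinarith)
    refine ⟨p, q, isMino_of_le_hinge hab ?_, by linarith⟩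
    intro s
    rcases le_or_gt s (b / a) with hs | hs
    · refine le_trans ?_ (le_max_right _ _)
      nlinarith [hq1]
    · refine le_trans ?_ (le_max_left _ _)
      have h1 : (p : ℝ) * (s - b / a) ≤ a * (s - b / a) := by nlinarith
      have h3 : a * (s - b / a) = a * s - b := by field_simp; try ring
      nlinarith [hq1]

/-- A countable family of affine minorants of `φ` whose pointwise supremum is `φ`. -/
def fam (φ : ℝ → ℝ≥0∞) (n : ℕ) : ℝ × ℝ :=
  if IsMino φ ((Denumerable.ofNat (ℚ × ℚ) n).1 : ℝ) ((Denumerable.ofNat (ℚ × ℚ) n).2 : ℝ) then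
    (((Denumerable.ofNat (ℚ × ℚ) n).1 : ℝ), ((Denumerable.ofNat (ℚ × ℚ) n).2 : ℝ))
  else (0, 0)

lemma fam_mino (φ : ℝ → ℝ≥0∞) (n : ℕ) : IsMino φ (fam φ n).1 (fam φ n).2 := by
  unfold fam
  split_ifs with h
  · exact h
  · exact isMino_zero φ

lemma iSup_fam (φ : ℝ → ℝ≥0∞) (hconv : ConvexOn ℝ≥0 Set.univ φ)
    (hlsc : LowerSemicontinuous φ) (hone : φ 1 = 0) (s : ℝ) :
    ⨆ n, ENNReal.ofReal ((fam φ n).1 * s - (fam φ n).2) = φ s := by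
  refine le_antisymm (iSup_le fun n => fam_mino φ n s) ?_
  refine le_of_forall_lt fun c hc => ?_
  have hctop : c ≠ ⊤ := hc.ne_top
  have hr : ENNReal.ofReal c.toReal < φ s := by rwa [ENNReal.ofReal_toReal hctop]
  obtain ⟨p, q, hpq, hval⟩ := exists_mino_rat φ hconv hlsc hone hr
  obtain ⟨n, hn⟩ : ∃ m, Denumerable.ofNat (ℚ × ℚ) m = (p, q) :=
    ⟨_, Denumerable.ofNat_encode (p, q)⟩
  have hfam : fam φ n = ((p : ℝ), (q : ℝ)) := by
    unfold fam
    rw [hn]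
    exact if_pos hpq
  calc c = ENNReal.ofReal c.toReal := (ENNReal.ofReal_toReal hctop).symm
    _ < ENNReal.ofReal ((fam φ n).1 * s - (fam φ n).2) := by
        rw [hfam]
        exact (ENNReal.ofReal_lt_ofReal_iff_of_nonneg ENNReal.toReal_nonneg).2 hval
    _ ≤ _ := le_iSup (fun n => ENNReal.ofReal ((fam φ n).1 * s - (fam φ n).2)) n

section MaxRec

/-- Iteratively select the best affine minorant among the first `n` of the family. -/
def mp (φ : ℝ → ℝ≥0∞) (f0 : X → ℝ) : ℕ → X → ℝ × ℝ
  | 0 => fun _ => (0, 0)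
  | n + 1 => fun x =>
      if (mp φ f0 n x).1 * f0 x - (mp φ f0 n x).2 < (fam φ n).1 * f0 x - (fam φ n).2 then
        fam φ n
      else mp φ f0 n x

/-- The running maximum `max (0, max_{j<n} (a_j f0(x) - b_j))`. -/
def Hmax (φ : ℝ → ℝ≥0∞) (f0 : X → ℝ) (n : ℕ) (x : X) : ℝ :=
  (mp φ f0 n x).1 * f0 x - (mp φ f0 n x).2

lemma mp_succ (φ : ℝ → ℝ≥0∞) (f0 : X → ℝ) (n : ℕ) (x : X) :
    mp φ f0 (n + 1) x =
      if (mp φ f0 n x).1 * f0 x - (mp φ f0 n x).2 < (fam φ n).1 * f0 x - (fam φ n).2 then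
        fam φ n
      else mp φ f0 n x := rfl

lemma Hmax_zero (φ : ℝ → ℝ≥0∞) (f0 : X → ℝ) (x : X) : Hmax φ f0 0 x = 0 := by
  simp [Hmax, mp]

lemma Hmax_succ (φ : ℝ → ℝ≥0∞) (f0 : X → ℝ) (n : ℕ) (x : X) :
    Hmax φ f0 (n + 1) x = max (Hmax φ f0 n x) ((fam φ n).1 * f0 x - (fam φ n).2) := by
  unfold Hmax
  rw [mp_succ]
  split_ifs with h
  · exact (max_eq_right h.le).symm
  · exact (max_eq_left (not_lt.1 h)).symm

lemma Hmax_nonneg (φ : ℝ → ℝ≥0∞) (f0 : X → ℝ) (n : ℕ) (x : X) : 0 ≤ Hmax φ f0 n x := by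
  induction n with
  | zero => rw [Hmax_zero]
  | succ n ih => rw [Hmax_succ]; exact ih.trans (le_max_left _ _)

lemma Hmax_mono (φ : ℝ → ℝ≥0∞) (f0 : X → ℝ) (x : X) : Monotone fun n => Hmax φ f0 n x := by
  refine monotone_nat_of_le_succ fun n => ?_
  rw [Hmax_succ]
  exact le_max_left _ _

lemma Hmax_ge_fam (φ : ℝ → ℝ≥0∞) (f0 : X → ℝ) (j : ℕ) (x : X) :
    (fam φ j).1 * f0 x - (fam φ j).2 ≤ Hmax φ f0 (j + 1) x := by
  rw [Hmax_succ]
  exact le_max_right _ _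

lemma mp_mino (φ : ℝ → ℝ≥0∞) (f0 : X → ℝ) (n : ℕ) (x : X) :
    IsMino φ (mp φ f0 n x).1 (mp φ f0 n x).2 := by
  induction n with
  | zero => exact isMino_zero φ
  | succ n ih =>
      rw [mp_succ]
      split_ifs with h
      · exact fam_mino φ n
      · exact ih

lemma mp_bound (φ : ℝ → ℝ≥0∞) (f0 : X → ℝ) (n : ℕ) :
    ∃ C : ℝ, ∀ x : X, |(mp φ f0 n x).1| ≤ C ∧ |(mp φ f0 n x).2| ≤ C := by
  induction n with
  | zero => exact ⟨0, fun x => by simp [mp]⟩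
  | succ n ih =>
      obtain ⟨C, hC⟩ := ih
      refine ⟨max C (max |(fam φ n).1| |(fam φ n).2|), fun x => ?_⟩
      rw [mp_succ]
      split_ifs with h
      · exact ⟨(le_max_left _ _).trans (le_max_right _ _),
          (le_max_right _ _).trans (le_max_right _ _)⟩
      · exact ⟨(hC x).1.trans (le_max_left _ _), (hC x).2.trans (le_max_left _ _)⟩

lemma measurable_mp (φ : ℝ → ℝ≥0∞) {f0 : X → ℝ} (hf0 : Measurable f0)
    (n : ℕ) : Measurable (fun x => (mp φ f0 n x).1) ∧ Measurable (fun x => (mp φ f0 n x).2) := by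
  induction n with
  | zero => exact ⟨measurable_const, measurable_const⟩
  | succ n ih =>
      have hset : MeasurableSet {x : X |
          (mp φ f0 n x).1 * f0 x - (mp φ f0 n x).2 < (fam φ n).1 * f0 x - (fam φ n).2} :=
        measurableSet_lt ((ih.1.mul hf0).sub ih.2) ((measurable_const.mul hf0).sub measurable_const)
      constructor
      · simp only [mp_succ, apply_ite Prod.fst]
        exact Measurable.ite hset measurable_const ih.1
      · simp only [mp_succ, apply_ite Prod.snd]
        exact Measurable.ite hset measurable_const ih.2

lemma measurable_Hmax (φ : ℝ → ℝ≥0∞) {f0 : X → ℝ} (hf0 : Measurable f0)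
    (n : ℕ) : Measurable (Hmax φ f0 n) :=
  (((measurable_mp φ hf0 n).1.mul hf0).sub (measurable_mp φ hf0 n).2)

lemma iSup_Hmax (φ : ℝ → ℝ≥0∞) (hconv : ConvexOn ℝ≥0 Set.univ φ)
    (hlsc : LowerSemicontinuous φ) (hone : φ 1 = 0) (f0 : X → ℝ) (x : X) :
    ⨆ n, ENNReal.ofReal (Hmax φ f0 n x) = φ (f0 x) := by
  refine le_antisymm (iSup_le fun n => mp_mino φ f0 n x (f0 x)) ?_
  rw [← iSup_fam φ hconv hlsc hone (f0 x)]
  refine iSup_le fun j => ?_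
  calc ENNReal.ofReal ((fam φ j).1 * f0 x - (fam φ j).2)
      ≤ ENNReal.ofReal (Hmax φ f0 (j + 1) x) :=
        ENNReal.ofReal_le_ofReal (Hmax_ge_fam φ f0 j x)
    _ ≤ _ := le_iSup (fun n => ENNReal.ofReal (Hmax φ f0 n x)) (j + 1)

end MaxRec

section MeasureStuff

lemma absCont_parts {P : Measure X} {Q : SignedMeasure X}
    (h : Q ≪ᵥ P.toENNRealVectorMeasure) :
    Q.toJordanDecomposition.posPart ≪ P ∧ Q.toJordanDecomposition.negPart ≪ P := by
  rw [SignedMeasure.absolutelyContinuous_ennreal_iff,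
    VectorMeasure.ennrealToMeasure_toENNRealVectorMeasure] at h
  have hTV : ∀ s : Set X, P s = 0 → Q.toJordanDecomposition.posPart s = 0 ∧
      Q.toJordanDecomposition.negPart s = 0 := by
    intro s hs
    have := h hs
    rw [SignedMeasure.totalVariation, Measure.add_apply] at this
    exact add_eq_zero.1 this
  exact ⟨Measure.AbsolutelyContinuous.mk fun s _ hs => (hTV s hs).1,
    Measure.AbsolutelyContinuous.mk fun s _ hs => (hTV s hs).2⟩

lemma integrable_of_bdd {P : Measure X} [IsFiniteMeasure P] {g : X → ℝ} {C : ℝ}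
    (hg : Measurable g) (hb : ∀ x, |g x| ≤ C) : Integrable g P := by
  refine Integrable.mono' (integrable_const C) hg.aestronglyMeasurable
    (ae_of_all _ fun x => ?_)
  rw [Real.norm_eq_abs]
  exact hb x

lemma sint_eq (P : Measure X) [IsFiniteMeasure P] {Q : SignedMeasure X}
    (hQ : Q ≪ᵥ P.toENNRealVectorMeasure) {g : X → ℝ} {C : ℝ}
    (hg : Measurable g) (hb : ∀ x, |g x| ≤ C) :
    sint Q g = ∫ x, g x * Q.rnDeriv P x ∂P := by
  obtain ⟨hpos, hneg⟩ := absCont_parts hQ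
  have hgp : Integrable g Q.toJordanDecomposition.posPart := integrable_of_bdd hg hb
  have hgn : Integrable g Q.toJordanDecomposition.negPart := integrable_of_bdd hg hb
  have h1 : ∫ x, g x ∂Q.toJordanDecomposition.posPart
      = ∫ x, (Q.toJordanDecomposition.posPart.rnDeriv P x).toReal • g x ∂P :=
    (integral_rnDeriv_smul hpos).symm
  have h2 : ∫ x, g x ∂Q.toJordanDecomposition.negPart
      = ∫ x, (Q.toJordanDecomposition.negPart.rnDeriv P x).toReal • g x ∂P :=
    (integral_rnDeriv_smul hneg).symm
  have hip : Integrable (fun x => (Q.toJordanDecomposition.posPart.rnDeriv P x).toReal • g x) P :=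
    (integrable_rnDeriv_smul_iff hpos).2 hgp
  have hin : Integrable (fun x => (Q.toJordanDecomposition.negPart.rnDeriv P x).toReal • g x) P :=
    (integrable_rnDeriv_smul_iff hneg).2 hgn
  rw [sint, h1, h2, ← integral_sub hip hin]
  refine integral_congr_ae (ae_of_all _ fun x => ?_)
  rw [SignedMeasure.rnDeriv_def]
  simp only [smul_eq_mul]
  ring

end MeasureStuff

lemma weak_duality (P : Measure X) [IsFiniteMeasure P] (φ : ℝ → ℝ≥0∞) {Q : SignedMeasure X}
    (hQ : Q ≪ᵥ P.toENNRealVectorMeasure) {g b : X → ℝ} {C : ℝ}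
    (hg : Measurable g) (hgb : ∀ x, |g x| ≤ C) (hbm : Measurable b) (hbb : ∀ x, |b x| ≤ C)
    (hmino : ∀ x, IsMino φ (g x) (b x)) :
    ENNReal.ofReal (sint Q g - ∫ x, b x ∂P) ≤ div φ Q P := by
  have hfi : Integrable (Q.rnDeriv P) P := SignedMeasure.integrable_rnDeriv Q P
  have hgf : Integrable (fun x => g x * Q.rnDeriv P x) P :=
    hfi.bdd_mul hg.aestronglyMeasurable (ae_of_all _ fun x => by rw [Real.norm_eq_abs]; exact hgb x)
  have hbi : Integrable b P := integrable_of_bdd hbm hbb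
  have hu : Integrable (fun x => g x * Q.rnDeriv P x - b x) P := hgf.sub hbi
  have h1 : sint Q g - ∫ x, b x ∂P = ∫ x, (g x * Q.rnDeriv P x - b x) ∂P := by
    rw [sint_eq P hQ hg hgb, integral_sub hgf hbi]
  rw [h1]
  calc ENNReal.ofReal (∫ x, (g x * Q.rnDeriv P x - b x) ∂P)
      ≤ ENNReal.ofReal (∫ x, max (g x * Q.rnDeriv P x - b x) 0 ∂P) :=
        ENNReal.ofReal_le_ofReal (integral_mono hu hu.pos_part fun x => le_max_left _ _)
    _ = ∫⁻ x, ENNReal.ofReal (max (g x * Q.rnDeriv P x - b x) 0) ∂P :=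
        ofReal_integral_eq_lintegral_ofReal hu.pos_part (ae_of_all _ fun x => le_max_right _ _)
    _ ≤ ∫⁻ x, φ (Q.rnDeriv P x) ∂P := by
        refine lintegral_mono fun x => ?_
        rw [ofReal_max_zero]
        exact hmino x (Q.rnDeriv P x)
    _ = div φ Q P := rfl

lemma sint_continuous {g : X → ℝ} (hg : Measurable g) (hb : ∃ C, ∀ x, |g x| ≤ C) :
    Continuous[tauTop (X := X) ∅, inferInstance] fun Q => sint Q g := by
  rw [continuous_iff_le_induced, tauTop]
  exact iInf₂_le g (Set.mem_union_left ∅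
    (show Measurable g ∧ ∃ C, ∀ x, |g x| ≤ C from ⟨hg, hb⟩))


/-- The divergence functional `Q ↦ φ(Q,P)` (equal to `∫ φ(dQ/dP) dP` if
`Q ≪ P` and `+∞` otherwise) is lower semicontinuous on the space of finite signed measures
equipped with the τ-topology induced by the bounded measurable functions. -/
theorem stmt7 (P : Measure X) [IsProbabilityMeasure P]
    (φ : ℝ → ℝ≥0∞)
    (hconv : ConvexOn ℝ≥0 Set.univ φ)
    (hlsc : LowerSemicontinuous φ)
    (hone : φ 1 = 0) :
    @LowerSemicontinuous _ ℝ≥0∞ (tauTop (X := X) ∅) _ (fun Q => divext φ Q P) := by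
  classical
  letI : TopologicalSpace (SignedMeasure X) := tauTop (X := X) ∅
  intro Q0 y hy
  by_cases hac : Q0 ≪ᵥ P.toENNRealVectorMeasure
  · -- `Q0` absolutely continuous: use the affine-minorant approximation
    simp only [divext, if_pos hac] at hy
    have hytop : y ≠ ⊤ := hy.ne_top
    set f0 := Q0.rnDeriv P with hf0
    have hf0m : Measurable f0 := SignedMeasure.measurable_rnDeriv Q0 P
    have hlim : (⨆ n, ∫⁻ x, ENNReal.ofReal (Hmax φ f0 n x) ∂P) = ∫⁻ x, φ (f0 x) ∂P := by
      rw [← lintegral_iSup (fun n => (measurable_Hmax φ hf0m n).ennreal_ofReal)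
        (fun n m hnm x => ENNReal.ofReal_le_ofReal (Hmax_mono φ f0 x hnm))]
      exact lintegral_congr fun x => iSup_Hmax φ hconv hlsc hone f0 x
    have hy2 : y < ⨆ n, ∫⁻ x, ENNReal.ofReal (Hmax φ f0 n x) ∂P := by
      rw [hlim]; exact hy
    obtain ⟨n, hn⟩ := lt_iSup_iff.1 hy2
    set g : X → ℝ := fun x => (mp φ f0 n x).1 with hgdef
    set b : X → ℝ := fun x => (mp φ f0 n x).2 with hbdef
    obtain ⟨C, hC⟩ := mp_bound φ f0 n
    have hgm : Measurable g := (measurable_mp φ hf0m n).1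
    have hbm : Measurable b := (measurable_mp φ hf0m n).2
    have hgb : ∀ x, |g x| ≤ C := fun x => (hC x).1
    have hbb : ∀ x, |b x| ≤ C := fun x => (hC x).2
    have hmino : ∀ x, IsMino φ (g x) (b x) := fun x => mp_mino φ f0 n x
    have hui : Integrable (fun x => g x * f0 x - b x) P :=
      ((SignedMeasure.integrable_rnDeriv Q0 P).bdd_mul hgm.aestronglyMeasurable
        (ae_of_all _ fun x => by rw [Real.norm_eq_abs]; exact hgb x)).sub (integrable_of_bdd hbm hbb)
    have hunn : 0 ≤ᵐ[P] fun x => g x * f0 x - b x :=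
      ae_of_all _ fun x => Hmax_nonneg φ f0 n x
    have hI : ∫ x, (g x * f0 x - b x) ∂P
        = (∫⁻ x, ENNReal.ofReal (Hmax φ f0 n x) ∂P).toReal := by
      rw [integral_eq_lintegral_of_nonneg_ae hunn hui.1]
      rfl
    have hfin : ∫⁻ x, ENNReal.ofReal (Hmax φ f0 n x) ∂P ≠ ⊤ := by
      have h5 := hui.pos_part.hasFiniteIntegral
      rw [hasFiniteIntegral_iff_ofReal (f := fun x => max (g x * f0 x - b x) 0)
        (ae_of_all _ fun x => le_max_right _ _)] at h5
      refine ne_of_lt (lt_of_le_of_lt (le_of_eq ?_) h5)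
      exact lintegral_congr fun x => (ofReal_max_zero _).symm
    set θ : ℝ := y.toReal + ∫ x, b x ∂P with hθ
    have hQ0U : θ < sint Q0 g := by
      have h1 : sint Q0 g = ∫ x, g x * f0 x ∂P := sint_eq P hac hgm hgb
      have h2 : ∫ x, (g x * f0 x - b x) ∂P = ∫ x, g x * f0 x ∂P - ∫ x, b x ∂P :=
        integral_sub ((SignedMeasure.integrable_rnDeriv Q0 P).bdd_mul hgm.aestronglyMeasurable
          (ae_of_all _ fun x => by rw [Real.norm_eq_abs]; exact hgb x)) (integrable_of_bdd hbm hbb)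
      have h3 : y.toReal < (∫⁻ x, ENNReal.ofReal (Hmax φ f0 n x) ∂P).toReal :=
        (ENNReal.toReal_lt_toReal hytop hfin).2 hn
      rw [hθ, h1]
      linarith [hI, h2, h3]
    have hUopen : IsOpen ((fun Q => sint Q g) ⁻¹' Set.Ioi θ) :=
      (sint_continuous hgm ⟨C, hgb⟩).isOpen_preimage _ isOpen_Ioi
    refine Filter.eventually_of_mem (hUopen.mem_nhds hQ0U) fun Q hQU => ?_
    simp only [Set.mem_preimage, Set.mem_Ioi] at hQU
    by_cases hQ : Q ≪ᵥ P.toENNRealVectorMeasure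
    · simp only [divext, if_pos hQ]
      have h4 : ENNReal.ofReal (sint Q g - ∫ x, b x ∂P) ≤ div φ Q P :=
        weak_duality P φ hQ hgm hgb hbm hbb hmino
      have h5 : y < ENNReal.ofReal (sint Q g - ∫ x, b x ∂P) := by
        conv_lhs => rw [← ENNReal.ofReal_toReal hytop]
        exact (ENNReal.ofReal_lt_ofReal_iff_of_nonneg ENNReal.toReal_nonneg).2
          (by rw [hθ] at hQU; linarith)
      exact lt_of_lt_of_le h5 h4
    · simp only [divext, if_neg hQ]
      exact lt_top_iff_ne_top.2 hytop
  · -- `Q0` not absolutely continuous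
    have hytop : y < ⊤ := by
      simpa only [divext, if_neg hac] using hy
    obtain ⟨A, hA0, hQA⟩ : ∃ A : Set X, P.toENNRealVectorMeasure A = 0 ∧ Q0 A ≠ 0 := by
      by_contra hcon
      push_neg at hcon
      exact hac fun A hA => hcon A hA
    have hA : MeasurableSet A := by
      by_contra hA
      exact hQA (VectorMeasure.not_measurable Q0 hA)
    have hPA : P A = 0 := by
      rwa [Measure.toENNRealVectorMeasure_apply_measurable hA] at hA0
    set g : X → ℝ := A.indicator 1 with hgdef
    have hgm : Measurable g := measurable_one.indicator hA
    have hgb : ∀ x, |g x| ≤ 1 := by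
      intro x
      rw [hgdef]
      by_cases hx : x ∈ A
      · simp [Set.indicator_of_mem hx]
      · simp [Set.indicator_of_notMem hx]
    have hind : ∀ Q : SignedMeasure X, sint Q g = (Q.toJordanDecomposition.posPart A).toReal
        - (Q.toJordanDecomposition.negPart A).toReal := by
      intro Q
      rw [sint, hgdef, integral_indicator_one hA, integral_indicator_one hA]
      rfl
    have hQ0A : sint Q0 g = Q0 A := by
      rw [hind]
      conv_rhs => rw [← Q0.toSignedMeasure_toJordanDecomposition]
      rw [JordanDecomposition.toSignedMeasure, VectorMeasure.sub_apply,
        Measure.toSignedMeasure_apply_measurable hA, Measure.toSignedMeasure_apply_measurable hA]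
      rfl
    have habs : 0 < |Q0 A| := abs_pos.2 hQA
    have hUopen : IsOpen ((fun Q => sint Q g) ⁻¹' {t : ℝ | |Q0 A| / 2 < |t|}) :=
      (sint_continuous hgm ⟨1, hgb⟩).isOpen_preimage _
        (isOpen_lt continuous_const continuous_abs)
    have hQ0U : Q0 ∈ (fun Q => sint Q g) ⁻¹' {t : ℝ | |Q0 A| / 2 < |t|} := by
      simp only [Set.mem_preimage, Set.mem_setOf_eq, hQ0A]
      exact half_lt_self habs
    refine Filter.eventually_of_mem (hUopen.mem_nhds hQ0U) fun Q hQU => ?_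
    simp only [Set.mem_preimage, Set.mem_setOf_eq] at hQU
    by_cases hQ : Q ≪ᵥ P.toENNRealVectorMeasure
    · exfalso
      obtain ⟨hp, hn⟩ := absCont_parts hQ
      have : sint Q g = 0 := by
        rw [hind, hp hPA, hn hPA]
        simp
      rw [this] at hQU
      simp only [abs_zero] at hQU
      linarith
    · simp only [divext, if_neg hQ]
      exact hytop
end
end

section
/- Let P be a probability measure and Ω a compact subset of the space of finite signed measures (with the topology induced by a family F of measurable functions together with all bounded measurable functions). Then there exists at least one φ-projection of P on Ω, i.e., a measure Q* ∈ Ω with φ(Q*,P) = inf_{Q∈Ω} φ(Q,P). -/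
open MeasureTheory Filter Topology Set
open scoped ENNReal NNReal Classical

noncomputable section

variable {X : Type*} [MeasurableSpace X]

/-- Affine minorant lemma (Fenchel–Moreau style) for convex lsc `φ : ℝ → ℝ≥0∞`. -/
theorem fm_aux (φ : ℝ → ℝ≥0∞)
    (hconv : ConvexOn ℝ≥0 Set.univ φ)
    (hlsc : LowerSemicontinuous φ)
    (hone : φ 1 = 0) (x₀ : ℝ) (c : ℝ≥0∞) (hc : c < φ x₀) :
    ∃ a b : ℝ, (∀ x, ENNReal.ofReal (a * x + b) ≤ φ x) ∧
      c ≤ ENNReal.ofReal (a * x₀ + b) := by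
  have hcne : c ≠ ⊤ := hc.ne_top
  set E : Set (ℝ × ℝ) := {p | φ p.1 ≤ ENNReal.ofReal p.2 ∧ 0 ≤ p.2} with hE
  -- E is closed
  have hclosed : IsClosed E := by
    have h1 : IsClosed {p : ℝ × ℝ | φ p.1 ≤ ENNReal.ofReal p.2} := by
      rw [← isOpen_compl_iff]
      have : {p : ℝ × ℝ | φ p.1 ≤ ENNReal.ofReal p.2}ᶜ
          = ⋃ r : ℚ, ({p : ℝ × ℝ | p.2 < (r : ℝ)} ∩ {p | ENNReal.ofReal (r : ℝ) < φ p.1}) := by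
        ext p
        simp only [mem_compl_iff, mem_setOf_eq, not_le, mem_iUnion, mem_inter_iff]
        constructor
        · intro h
          have h' : ENNReal.ofReal (max p.2 0) < φ p.1 := by
            rcases le_total p.2 0 with h2 | h2
            · simpa [max_eq_right h2] using (lt_of_le_of_lt (by simp [ENNReal.ofReal_of_nonpos h2]) h)
            · simpa [max_eq_left h2] using h
          obtain ⟨d, hd1, hd2⟩ := exists_between h'
          have hdne : d ≠ ⊤ := by
            intro h; subst h; exact (lt_irrefl _ (hd2.trans_le le_top)).elim
          have hlt : max p.2 0 < d.toReal :=
            (ENNReal.ofReal_lt_iff_lt_toReal (le_max_right _ _) hdne).mp hd1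
          obtain ⟨r, hr1, hr2⟩ := exists_rat_btwn hlt
          refine ⟨r, lt_of_le_of_lt (le_max_left _ _) hr1, ?_⟩
          calc ENNReal.ofReal (r : ℝ) ≤ ENNReal.ofReal d.toReal := ENNReal.ofReal_le_ofReal hr2.le
          _ = d := ENNReal.ofReal_toReal hdne
          _ < φ p.1 := hd2
        · rintro ⟨r, hr1, hr2⟩
          exact lt_of_le_of_lt (ENNReal.ofReal_le_ofReal hr1.le) hr2
      rw [this]
      refine isOpen_iUnion fun r => IsOpen.inter ?_ ?_
      · exact isOpen_lt continuous_snd continuous_const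
      · exact (hlsc.isOpen_preimage _).preimage continuous_fst
    exact h1.inter (isClosed_le continuous_const continuous_snd)
  -- E is convex
  have hconvE : Convex ℝ E := by
    rintro p hp q hq a b ha hb hab
    have hg1 : (a • p + b • q).1 = a * p.1 + b * q.1 := by simp [smul_eq_mul]
    have hg2 : (a • p + b • q).2 = a * p.2 + b * q.2 := by simp [smul_eq_mul]
    have h1 : φ (a * p.1 + b * q.1) ≤ a.toNNReal • φ p.1 + b.toNNReal • φ q.1 := by
      have := hconv.2 (mem_univ p.1) (mem_univ q.1) (by exact_mod_cast (zero_le (a := a.toNNReal)))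
        (by exact_mod_cast (zero_le (a := b.toNNReal)))
        (by rw [← Real.toNNReal_add ha hb, hab]; simp)
      simpa [NNReal.smul_def, Real.coe_toNNReal _ ha, Real.coe_toNNReal _ hb] using this
    refine ⟨?_, by rw [hg2]; exact add_nonneg (mul_nonneg ha hp.2) (mul_nonneg hb hq.2)⟩
    rw [hg1, hg2]
    refine h1.trans ?_
    have h2 : a.toNNReal • φ p.1 ≤ ENNReal.ofReal (a * p.2) := by
      calc a.toNNReal • φ p.1 ≤ a.toNNReal • ENNReal.ofReal p.2 := by
            exact smul_le_smul_of_nonneg_left hp.1 zero_le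
      _ = ENNReal.ofReal a * ENNReal.ofReal p.2 := by
            simp [ENNReal.smul_def, ENNReal.ofReal]
      _ = ENNReal.ofReal (a * p.2) := (ENNReal.ofReal_mul ha).symm
    have h3 : b.toNNReal • φ q.1 ≤ ENNReal.ofReal (b * q.2) := by
      calc b.toNNReal • φ q.1 ≤ b.toNNReal • ENNReal.ofReal q.2 := by
            exact smul_le_smul_of_nonneg_left hq.1 zero_le
      _ = ENNReal.ofReal b * ENNReal.ofReal q.2 := by
            simp [ENNReal.smul_def, ENNReal.ofReal]
      _ = ENNReal.ofReal (b * q.2) := (ENNReal.ofReal_mul hb).symm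
    calc a.toNNReal • φ p.1 + b.toNNReal • φ q.1
        ≤ ENNReal.ofReal (a * p.2) + ENNReal.ofReal (b * q.2) := add_le_add h2 h3
    _ = ENNReal.ofReal (a * p.2 + b * q.2) := by
        rw [ENNReal.ofReal_add (mul_nonneg ha hp.2) (mul_nonneg hb hq.2)]
  -- the point to separate
  set y₀ : ℝ := c.toReal with hy₀
  have hy₀nn : 0 ≤ y₀ := ENNReal.toReal_nonneg
  have hy₀c : ENNReal.ofReal y₀ = c := ENNReal.ofReal_toReal hcne
  have hnotmem : (x₀, y₀) ∉ E := by
    rintro ⟨h1, -⟩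
    rw [hy₀c] at h1
    exact absurd hc (not_lt.2 h1)
  obtain ⟨f, u, hfu, hfE⟩ := geometric_hahn_banach_point_closed hconvE hclosed hnotmem
  set a : ℝ := f (1, 0) with ha
  set b : ℝ := f (0, 1) with hb
  have hf : ∀ x y : ℝ, f (x, y) = a * x + b * y := by
    intro x y
    have : (x, y) = x • ((1 : ℝ), (0 : ℝ)) + y • ((0 : ℝ), (1 : ℝ)) := by
      simp [Prod.ext_iff]
    rw [this, map_add, f.map_smul, f.map_smul, smul_eq_mul, smul_eq_mul, ← ha, ← hb]
    ring
  have hone' : ∀ t : ℝ, 0 ≤ t → ((1 : ℝ), t) ∈ E := by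
    intro t ht; exact ⟨by simp [hone], ht⟩
  have hbnn : 0 ≤ b := by
    by_contra hneg
    push_neg at hneg
    set t : ℝ := max 0 ((u - a) / b + 1) with ht
    have h1 := hfE _ (hone' t (le_max_left _ _))
    rw [hf] at h1
    have h2 : (u - a) / b < t := lt_of_lt_of_le (by linarith) (le_max_right _ _)
    have h3 : b * t < u - a := by
      have := (div_lt_iff_of_neg hneg).mp h2
      linarith
    simp only [mul_one] at h1
    linarith
  rcases eq_or_lt_of_le hbnn with hb0 | hbpos
  · -- b = 0
    have hEa : ∀ x : ℝ, φ x ≠ ⊤ → u < a * x := by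
      intro x hx
      have h1 := hfE (x, (φ x).toReal) ⟨by rw [ENNReal.ofReal_toReal hx], ENNReal.toReal_nonneg⟩
      rw [hf, ← hb0] at h1
      simpa using h1
    have hd : 0 < u - a * x₀ := by
      have h1 : f (x₀, y₀) = a * x₀ := by rw [hf, ← hb0]; ring
      rw [h1] at hfu; linarith
    set n : ℝ := y₀ / (u - a * x₀) with hn
    have hnnn : 0 ≤ n := div_nonneg hy₀nn hd.le
    refine ⟨-(n * a), n * u, ?_, ?_⟩
    · intro x
      by_cases hx : φ x = ⊤
      · rw [hx]; exact le_top
      · have h1 := hEa x hx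
        have h2 : -(n * a) * x + n * u = n * (u - a * x) := by ring
        rw [h2]
        have : n * (u - a * x) ≤ 0 := by
          rcases eq_or_lt_of_le hnnn with h | h
          · rw [← h]; simp
          · nlinarith
        rw [ENNReal.ofReal_of_nonpos this]
        exact zero_le
    · have h2 : -(n * a) * x₀ + n * u = n * (u - a * x₀) := by ring
      rw [h2, hn, div_mul_cancel₀ _ hd.ne', hy₀c]
  · -- b > 0
    refine ⟨-a / b, u / b, ?_, ?_⟩
    · intro x
      by_cases hx : φ x = ⊤
      · rw [hx]; exact le_top
      · have h1 := hfE (x, (φ x).toReal) ⟨by rw [ENNReal.ofReal_toReal hx], ENNReal.toReal_nonneg⟩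
        rw [hf] at h1
        have h2 : -a / b * x + u / b ≤ (φ x).toReal := by
          rw [div_mul_eq_mul_div, ← add_div, div_le_iff₀ hbpos]
          nlinarith
        calc ENNReal.ofReal (-a / b * x + u / b) ≤ ENNReal.ofReal (φ x).toReal :=
              ENNReal.ofReal_le_ofReal h2
        _ = φ x := ENNReal.ofReal_toReal hx
    · have h1 : f (x₀, y₀) = a * x₀ + b * y₀ := hf _ _
      rw [h1] at hfu
      have h2 : y₀ ≤ -a / b * x₀ + u / b := by
        rw [div_mul_eq_mul_div, ← add_div, le_div_iff₀ hbpos]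
        nlinarith
      calc c = ENNReal.ofReal y₀ := hy₀c.symm
      _ ≤ _ := ENNReal.ofReal_le_ofReal h2


/-- Jensen's inequality for lsc convex `φ : ℝ → ℝ≥0∞` and a probability measure. -/
theorem jensen_aux (φ : ℝ → ℝ≥0∞)
    (hconv : ConvexOn ℝ≥0 Set.univ φ)
    (hlsc : LowerSemicontinuous φ)
    (hone : φ 1 = 0) (μ : Measure X) [IsProbabilityMeasure μ]
    {g : X → ℝ} (hg : Integrable g μ) :
    φ (∫ x, g x ∂μ) ≤ ∫⁻ x, φ (g x) ∂μ := by
  by_contra hcon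
  push_neg at hcon
  obtain ⟨c, hc1, hc2⟩ := exists_between hcon
  obtain ⟨a, b, hmin, hval⟩ := fm_aux φ hconv hlsc hone (∫ x, g x ∂μ) c hc2
  set h : X → ℝ := fun x => a * g x + b with hh
  have hhint : Integrable h μ := by
    exact (hg.const_mul a).add (integrable_const b)
  have hint : a * (∫ x, g x ∂μ) + b = ∫ x, h x ∂μ := by
    rw [integral_add (hg.const_mul a) (integrable_const b), integral_const_mul, integral_const]
    simp
  have key : ENNReal.ofReal (∫ x, h x ∂μ) ≤ ∫⁻ x, φ (g x) ∂μ := by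
    have h1 : ∫ x, h x ∂μ ≤ ∫ x, max (h x) 0 ∂μ :=
      integral_mono hhint hhint.pos_part (fun x => le_max_left _ _)
    have h2 : ENNReal.ofReal (∫ x, max (h x) 0 ∂μ) = ∫⁻ x, ENNReal.ofReal (max (h x) 0) ∂μ :=
      ofReal_integral_eq_lintegral_ofReal hhint.pos_part
        (Filter.Eventually.of_forall fun x => le_max_right _ _)
    have h3 : ∀ x, ENNReal.ofReal (max (h x) 0) = ENNReal.ofReal (h x) := by
      intro x
      rcases le_total (h x) 0 with hx | hx
      · rw [max_eq_right hx, ENNReal.ofReal_of_nonpos hx, ENNReal.ofReal_zero]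
      · rw [max_eq_left hx]
    calc ENNReal.ofReal (∫ x, h x ∂μ) ≤ ENNReal.ofReal (∫ x, max (h x) 0 ∂μ) :=
          ENNReal.ofReal_le_ofReal h1
    _ = ∫⁻ x, ENNReal.ofReal (max (h x) 0) ∂μ := h2
    _ = ∫⁻ x, ENNReal.ofReal (h x) ∂μ := by simp_rw [h3]
    _ ≤ ∫⁻ x, φ (g x) ∂μ := lintegral_mono fun x => hmin (g x)
  rw [← hint] at key
  exact absurd (hval.trans key) (not_le.2 hc1)

/-- The "cell" function of the partition representation. -/
def zeta (φ : ℝ → ℝ≥0∞) (p : ℝ≥0∞) (q : ℝ) : ℝ≥0∞ :=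
  if p = 0 then (if q = 0 then 0 else ⊤) else p * φ (q / p.toReal)

theorem zeta_le_setLIntegral (φ : ℝ → ℝ≥0∞)
    (hconv : ConvexOn ℝ≥0 Set.univ φ)
    (hlsc : LowerSemicontinuous φ)
    (hone : φ 1 = 0) (P : Measure X) [IsProbabilityMeasure P]
    {g : X → ℝ} (hg : Integrable g P)
    {A : Set X} (hA : MeasurableSet A) :
    zeta φ (P A) (∫ x in A, g x ∂P) ≤ ∫⁻ x in A, φ (g x) ∂P := by
  by_cases h0 : P A = 0
  · have : P.restrict A = 0 := Measure.restrict_eq_zero.mpr h0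
    rw [zeta, if_pos h0, this]
    simp
  · have hAtop : P A ≠ ⊤ := measure_ne_top P A
    set μ : Measure X := (P A)⁻¹ • P.restrict A with hμ
    have : IsProbabilityMeasure μ := by
      constructor
      rw [hμ, Measure.smul_apply, Measure.restrict_apply MeasurableSet.univ, Set.univ_inter,
        smul_eq_mul, ENNReal.inv_mul_cancel h0 hAtop]
    have hgμ : Integrable g μ := by
      exact (hg.restrict).smul_measure (by simp [h0])
    have hmean : ∫ x, g x ∂μ = (∫ x in A, g x ∂P) / (P A).toReal := by
      rw [hμ, integral_smul_measure, ENNReal.toReal_inv, smul_eq_mul, div_eq_inv_mul]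
    have hj := jensen_aux φ hconv hlsc hone μ hgμ
    rw [hmean] at hj
    have hlint : ∫⁻ x, φ (g x) ∂μ = (P A)⁻¹ * ∫⁻ x in A, φ (g x) ∂P := by
      rw [hμ, lintegral_smul_measure, smul_eq_mul]
    rw [hlint] at hj
    rw [zeta, if_neg h0]
    calc P A * φ ((∫ x in A, g x ∂P) / (P A).toReal)
        ≤ P A * ((P A)⁻¹ * ∫⁻ x in A, φ (g x) ∂P) := mul_le_mul_right hj _
    _ = ∫⁻ x in A, φ (g x) ∂P := by
        rw [← mul_assoc, ENNReal.mul_inv_cancel h0 hAtop, one_mul]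



def Jfun (φ : ℝ → ℝ≥0∞) (P : Measure X) (σ : X → ℤ) (Q : SignedMeasure X) : ℝ≥0∞ :=
  ∑' k : ℤ, zeta φ (P (σ ⁻¹' {k})) (Q (σ ⁻¹' {k}))

theorem key_identity (φ : ℝ → ℝ≥0∞)
    (hconv : ConvexOn ℝ≥0 Set.univ φ)
    (hlsc : LowerSemicontinuous φ)
    (hone : φ 1 = 0) (P : Measure X) [IsProbabilityMeasure P] (Q : SignedMeasure X) :
    divext φ Q P = ⨆ σ : {σ : X → ℤ // Measurable σ}, Jfun φ P σ.1 Q := by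
  have hφm : Measurable φ := hlsc.measurable
  by_cases hac : Q ≪ᵥ P.toENNRealVectorMeasure
  · rw [divext, if_pos hac, div]
    set g : X → ℝ := Q.rnDeriv P with hg
    have hgm : Measurable g := SignedMeasure.measurable_rnDeriv Q P
    have hgint : Integrable g P := SignedMeasure.integrable_rnDeriv Q P
    have hQA : ∀ A : Set X, MeasurableSet A → Q A = ∫ x in A, g x ∂P := by
      intro A hA
      conv_lhs => rw [← SignedMeasure.withDensityᵥ_rnDeriv_eq Q P hac]
      rw [withDensityᵥ_apply hgint hA]
    apply le_antisymm
    · -- approximation direction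
      set σn : ℕ → X → ℤ := fun n x => ⌊g x * 2 ^ n⌋ with hσn
      have hσm : ∀ n, Measurable (σn n) := fun n => (hgm.mul_const _).floor
      set A : ℕ → ℤ → Set X := fun n k => σn n ⁻¹' {k} with hAdef
      have hAm : ∀ n k, MeasurableSet (A n k) := fun n k => hσm n (measurableSet_singleton k)
      set cc : ℕ → ℤ → ℝ := fun n k => (P (A n k)).toReal⁻¹ * ∫ x in A n k, g x ∂P with hccdef
      set N : ℕ → Set X := fun n => σn n ⁻¹' {k | P (A n k) = 0} with hNdef
      have hNm : ∀ n, MeasurableSet (N n) :=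
        fun n => hσm n (Set.to_countable _).measurableSet
      set m : ℕ → X → ℝ := fun n => (N n).piecewise g (fun x => cc n (σn n x)) with hmdef
      have hmm : ∀ n, Measurable (m n) := by
        intro n
        refine Measurable.piecewise (hNm n) hgm ?_
        exact (measurable_of_countable (cc n)).comp (hσm n)
      have hgmem : ∀ n k, ∀ y ∈ A n k, (k : ℝ) / 2 ^ n ≤ g y ∧ g y ≤ ((k : ℝ) + 1) / 2 ^ n := by
        intro n k y hy
        have h2 : (0 : ℝ) < 2 ^ n := by positivity
        have hfl : ⌊g y * 2 ^ n⌋ = k := hy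
        rw [Int.floor_eq_iff] at hfl
        constructor
        · rw [div_le_iff₀ h2]; exact hfl.1
        · rw [le_div_iff₀ h2]; exact_mod_cast hfl.2.le
      have hccmem : ∀ n k, P (A n k) ≠ 0 →
          (k : ℝ) / 2 ^ n ≤ cc n k ∧ cc n k ≤ ((k : ℝ) + 1) / 2 ^ n := by
        intro n k hk
        have hPA : (0 : ℝ) < (P (A n k)).toReal :=
          ENNReal.toReal_pos hk (measure_ne_top _ _)
        have hint : IntegrableOn g (A n k) P := hgint.restrict
        have h1 : (P (A n k)).toReal * ((k : ℝ) / 2 ^ n) ≤ ∫ x in A n k, g x ∂P := by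
          have := setIntegral_mono_on
            (integrableOn_const (measure_ne_top _ _)) hint
            (hAm n k) (fun x hx => (hgmem n k x hx).1)
          rwa [setIntegral_const, smul_eq_mul] at this
        have h2 : ∫ x in A n k, g x ∂P ≤ (P (A n k)).toReal * (((k : ℝ) + 1) / 2 ^ n) := by
          have := setIntegral_mono_on hint
            (integrableOn_const (measure_ne_top _ _))
            (hAm n k) (fun x hx => (hgmem n k x hx).2)
          rwa [setIntegral_const, smul_eq_mul] at this
        constructor
        · show (k : ℝ) / 2 ^ n ≤ (P (A n k)).toReal⁻¹ * ∫ x in A n k, g x ∂P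
          calc (k : ℝ) / 2 ^ n
              = (P (A n k)).toReal⁻¹ * ((P (A n k)).toReal * ((k : ℝ) / 2 ^ n)) := by
                field_simp
          _ ≤ _ := mul_le_mul_of_nonneg_left h1 (inv_nonneg.mpr hPA.le)
        · show (P (A n k)).toReal⁻¹ * (∫ x in A n k, g x ∂P) ≤ ((k : ℝ) + 1) / 2 ^ n
          calc (P (A n k)).toReal⁻¹ * (∫ x in A n k, g x ∂P)
              ≤ (P (A n k)).toReal⁻¹ * ((P (A n k)).toReal * (((k : ℝ) + 1) / 2 ^ n)) :=
                mul_le_mul_of_nonneg_left h2 (inv_nonneg.mpr hPA.le)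
          _ = ((k : ℝ) + 1) / 2 ^ n := by field_simp
      have hbound : ∀ n x, |m n x - g x| ≤ (1 / 2 : ℝ) ^ n := by
        intro n x
        by_cases hx : x ∈ N n
        · show |(N n).piecewise g (fun x => cc n (σn n x)) x - g x| ≤ (1 / 2 : ℝ) ^ n
          rw [Set.piecewise_eq_of_mem _ _ _ hx, sub_self, abs_zero]
          positivity
        · have hPx : P (A n (σn n x)) ≠ 0 := by
            intro h
            exact hx (by simpa [hNdef] using h)
          have hmx : m n x = cc n (σn n x) := by
            show (N n).piecewise g (fun x => cc n (σn n x)) x = cc n (σn n x)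
            exact Set.piecewise_eq_of_notMem _ _ _ hx
          set k : ℤ := σn n x with hk
          have hxA : x ∈ A n k := rfl
          have hgx := hgmem n k x hxA
          have hcx := hccmem n k hPx
          have hhalf : (1 / 2 : ℝ) ^ n = ((k : ℝ) + 1) / 2 ^ n - (k : ℝ) / 2 ^ n := by
            rw [div_pow, one_pow, div_sub_div_same, add_sub_cancel_left]
          rw [hmx, abs_le, hhalf]
          refine ⟨by linarith [hcx.1, hgx.2], by linarith [hcx.2, hgx.1]⟩
      have htend : ∀ x, Filter.Tendsto (fun n => m n x) atTop (𝓝 (g x)) := by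
        intro x
        rw [tendsto_iff_dist_tendsto_zero]
        refine squeeze_zero (g := fun n => (1 / 2 : ℝ) ^ n) (fun n => dist_nonneg)
          (fun n => by rw [Real.dist_eq]; exact hbound n x) ?_
        exact tendsto_pow_atTop_nhds_zero_of_lt_one (by norm_num) (by norm_num)
      have hliminf : ∀ x, φ (g x) ≤ Filter.liminf (fun n => φ (m n x)) atTop := by
        intro x
        by_contra hlt
        push_neg at hlt
        obtain ⟨y, hy1, hy2⟩ := exists_between hlt
        have hev : ∀ᶠ n in atTop, y < φ (m n x) := (htend x).eventually (hlsc (g x) y hy2)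
        exact absurd (le_liminf_of_le (by isBoundedDefault) (hev.mono fun n h => h.le))
          (not_le.2 hy1)
      have hlin : ∀ n, ∫⁻ x, φ (m n x) ∂P = Jfun φ P (σn n) Q := by
        intro n
        have hdisj : Pairwise (Function.onFun Disjoint fun k : ℤ => A n k) := by
          intro i j hij
          refine Set.disjoint_left.mpr ?_
          rintro x hxi hxj
          exact hij ((Set.mem_preimage.mp hxi).symm.trans (Set.mem_preimage.mp hxj))
        have huniv : (⋃ k : ℤ, A n k) = Set.univ := by
          ext x; simp [hAdef]
        have h1 : ∫⁻ x, φ (m n x) ∂P = ∑' k : ℤ, ∫⁻ x in A n k, φ (m n x) ∂P := by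
          rw [← lintegral_iUnion (hAm n) hdisj, huniv, Measure.restrict_univ]
        rw [h1]
        unfold Jfun
        congr 1
        ext k
        by_cases hk : P (A n k) = 0
        · have hres : P.restrict (A n k) = 0 := Measure.restrict_eq_zero.mpr hk
          have hQ0 : Q (A n k) = 0 := by
            rw [hQA _ (hAm n k), hres, integral_zero_measure]
          rw [hres, lintegral_zero_measure]
          rw [show (σn n ⁻¹' {k}) = A n k from rfl, zeta, if_pos hk, hQ0, if_pos rfl]
        · have hconst : ∀ x ∈ A n k, φ (m n x) = φ (cc n k) := by
            intro x hx
            have hkx : σn n x = k := hx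
            have hxN : x ∉ N n := by
              intro hmem
              have : P (A n (σn n x)) = 0 := by simpa [hNdef] using hmem
              rw [hkx] at this
              exact hk this
            have : m n x = cc n k := by
              show (N n).piecewise g (fun x => cc n (σn n x)) x = cc n k
              rw [Set.piecewise_eq_of_notMem _ _ _ hxN, hkx]
            rw [this]
          rw [setLIntegral_congr_fun (hAm n k) hconst,
            setLIntegral_const]
          rw [show (σn n ⁻¹' {k}) = A n k from rfl, zeta, if_neg hk, hQA _ (hAm n k)]
          rw [hccdef]
          rw [mul_comm, div_eq_inv_mul]
      calc ∫⁻ x, φ (g x) ∂P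
          ≤ ∫⁻ x, Filter.liminf (fun n => φ (m n x)) atTop ∂P := lintegral_mono hliminf
      _ ≤ Filter.liminf (fun n => ∫⁻ x, φ (m n x) ∂P) atTop :=
            lintegral_liminf_le (fun n => hφm.comp (hmm n))
      _ ≤ ⨆ n : ℕ, ∫⁻ x, φ (m n x) ∂P := by
            rw [Filter.liminf_eq_iSup_iInf_of_nat]
            exact iSup_mono fun n => iInf₂_le n le_rfl
      _ ≤ ⨆ σ : {σ : X → ℤ // Measurable σ}, Jfun φ P σ.1 Q := by
            refine iSup_le fun n => ?_
            rw [hlin n]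
            exact le_iSup (fun σ' : {σ' : X → ℤ // Measurable σ'} => Jfun φ P σ'.1 Q)
              ⟨σn n, hσm n⟩
    · refine iSup_le ?_
      rintro ⟨σ, hσ⟩
      have hAm : ∀ k : ℤ, MeasurableSet (σ ⁻¹' {k}) := fun k => hσ (measurableSet_singleton k)
      have hdisj : Pairwise (Function.onFun Disjoint fun k : ℤ => σ ⁻¹' {k}) := by
        intro i j hij
        refine Set.disjoint_left.mpr ?_
        rintro x hxi hxj
        exact hij ((Set.mem_preimage.mp hxi).symm.trans (Set.mem_preimage.mp hxj))
      have huniv : (⋃ k : ℤ, σ ⁻¹' {k}) = Set.univ := by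
        ext x; simp
      calc Jfun φ P σ Q = ∑' k : ℤ, zeta φ (P (σ ⁻¹' {k})) (∫ x in σ ⁻¹' {k}, g x ∂P) := by
            unfold Jfun; congr 1; ext k; rw [hQA _ (hAm k)]
      _ ≤ ∑' k : ℤ, ∫⁻ x in σ ⁻¹' {k}, φ (g x) ∂P :=
            ENNReal.tsum_le_tsum fun k => zeta_le_setLIntegral φ hconv hlsc hone P hgint (hAm k)
      _ = ∫⁻ x in ⋃ k : ℤ, σ ⁻¹' {k}, φ (g x) ∂P := (lintegral_iUnion hAm hdisj _).symm
      _ = ∫⁻ x, φ (g x) ∂P := by rw [huniv, Measure.restrict_univ]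
  · rw [divext, if_neg hac]
    refine le_antisymm ?_ le_top
    unfold VectorMeasure.AbsolutelyContinuous at hac
    push_neg at hac
    obtain ⟨s, hs0, hQs⟩ := hac
    have hsm : MeasurableSet s := by
      by_contra h
      exact hQs (VectorMeasure.not_measurable _ h)
    have hPs : P s = 0 := by
      rw [← Measure.toENNRealVectorMeasure_apply_measurable hsm]
      exact hs0
    set σ : X → ℤ := fun x => if x ∈ s then 0 else 1 with hσdef
    have hσm : Measurable σ := Measurable.ite hsm measurable_const measurable_const
    have hpre : σ ⁻¹' {0} = s := by
      ext x
      by_cases hx : x ∈ s <;> simp [hσdef, hx]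
    have h1 : (⊤ : ℝ≥0∞) ≤ Jfun φ P σ Q := by
      have h2 : zeta φ (P (σ ⁻¹' {0})) (Q (σ ⁻¹' {0})) = ⊤ := by
        rw [hpre, zeta, if_pos hPs, if_neg hQs]
      calc (⊤ : ℝ≥0∞) = zeta φ (P (σ ⁻¹' {0})) (Q (σ ⁻¹' {0})) := h2.symm
      _ ≤ Jfun φ P σ Q := ENNReal.le_tsum 0
    exact h1.trans (le_iSup (fun σ'' : {σ'' : X → ℤ // Measurable σ''} => Jfun φ P σ''.1 Q) ⟨σ, hσm⟩)



theorem sint_indicator (Q : SignedMeasure X) {A : Set X} (hA : MeasurableSet A) :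
    sint Q (A.indicator 1) = Q A := by
  rw [sint, integral_indicator_one hA, integral_indicator_one hA]
  conv_rhs => rw [← Q.toSignedMeasure_toJordanDecomposition]
  show _ = (Q.toJordanDecomposition.posPart.toSignedMeasure -
      Q.toJordanDecomposition.negPart.toSignedMeasure) A
  rw [VectorMeasure.sub_apply, Measure.toSignedMeasure_apply_measurable hA,
    Measure.toSignedMeasure_apply_measurable hA]

theorem continuous_eval (F : Set (X → ℝ)) {A : Set X} (hA : MeasurableSet A) :
    @Continuous _ _ (tauTop F) _ (fun Q : SignedMeasure X => (Q A : ℝ)) := by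
  have hmem : (A.indicator 1 : X → ℝ) ∈
      {f : X → ℝ | Measurable f ∧ ∃ C, ∀ x, |f x| ≤ C} ∪ F := by
    refine Or.inl ⟨measurable_one.indicator hA, 1, fun x => ?_⟩
    by_cases hx : x ∈ A <;> simp [Set.indicator_apply, hx]
  have hle : tauTop F ≤ TopologicalSpace.induced
      (fun Q : SignedMeasure X => sint Q (A.indicator 1)) inferInstance :=
    iInf₂_le _ hmem
  have heq : (fun Q : SignedMeasure X => sint Q (A.indicator 1))
      = fun Q : SignedMeasure X => (Q A : ℝ) :=
    funext fun Q => sint_indicator Q hA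
  rw [← heq]
  exact continuous_le_dom hle continuous_induced_dom

theorem zeta_lsc (φ : ℝ → ℝ≥0∞) (hlsc : LowerSemicontinuous φ)
    {p : ℝ≥0∞} (hp : p ≠ ⊤) : LowerSemicontinuous (fun q : ℝ => zeta φ p q) := by
  by_cases h0 : p = 0
  · subst h0
    intro q y hy
    simp only [zeta, if_pos (rfl : (0 : ℝ≥0∞) = 0)] at hy
    by_cases hq : q = 0
    · rw [hq, if_pos rfl] at hy
      exact absurd hy (by simp)
    · rw [if_neg hq] at hy
      filter_upwards [eventually_ne_nhds hq] with z hz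
      rw [show zeta φ 0 z = if z = 0 then 0 else ⊤ from if_pos rfl, if_neg hz]
      exact hy.trans_le le_top
  · have : (fun q : ℝ => zeta φ p q) = (fun z : ℝ≥0∞ => p * z) ∘ (fun q : ℝ => φ (q / p.toReal)) := by
      funext q; simp [zeta, if_neg h0]
    rw [this]
    refine Continuous.comp_lowerSemicontinuous (ENNReal.continuous_const_mul hp) ?_
      (fun a b hab => mul_le_mul_right hab p)
    exact hlsc.comp (continuous_id.div_const _)


/-- Let `P` be a probability measure and `Ω` a nonempty compact subset of the
space of finite signed measures, for the topology induced by a family `F` of measurable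
functions together with all bounded measurable functions.  Then there exists at least one
φ-projection of `P` on `Ω`. -/
theorem stmt9 (P : Measure X) [IsProbabilityMeasure P]
    (φ : ℝ → ℝ≥0∞)
    (hconv : ConvexOn ℝ≥0 Set.univ φ)
    (hlsc : LowerSemicontinuous φ)
    (hone : φ 1 = 0)
    (F : Set (X → ℝ)) (hF : ∀ f ∈ F, Measurable f)
    (Ω : Set (SignedMeasure X)) (hne : Ω.Nonempty)
    (hcomp : @IsCompact _ (tauTop F) Ω) :
    ∃ Qs ∈ Ω, ∀ Q ∈ Ω, divext φ Qs P ≤ divext φ Q P := by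
  letI : TopologicalSpace (SignedMeasure X) := tauTop F
  set G : SignedMeasure X → ℝ≥0∞ := fun Q => divext φ Q P with hG
  have hGlsc : LowerSemicontinuous G := by
    have hGeq : G = fun Q => ⨆ σ : {σ : X → ℤ // Measurable σ}, Jfun φ P σ.1 Q :=
      funext fun Q => key_identity φ hconv hlsc hone P Q
    rw [hGeq]
    refine lowerSemicontinuous_iSup fun σ => ?_
    show LowerSemicontinuous fun Q : SignedMeasure X => Jfun φ P σ.1 Q
    have hJ : (fun Q : SignedMeasure X => Jfun φ P σ.1 Q)
        = fun Q : SignedMeasure X =>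
          ⨆ s : Finset ℤ, ∑ k ∈ s, zeta φ (P (σ.1 ⁻¹' {k})) (Q (σ.1 ⁻¹' {k})) := by
      funext Q; exact ENNReal.tsum_eq_iSup_sum
    rw [hJ]
    refine lowerSemicontinuous_iSup fun s => ?_
    classical
    induction s using Finset.induction_on with
    | empty => simpa using lowerSemicontinuous_const
    | insert k s' hk ih =>
      have hterm : LowerSemicontinuous
          (fun Q : SignedMeasure X => zeta φ (P (σ.1 ⁻¹' {k})) (Q (σ.1 ⁻¹' {k}))) :=
        (zeta_lsc φ hlsc (measure_ne_top P _)).comp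
          (continuous_eval F (σ.2 (measurableSet_singleton k)))
      have : (fun Q : SignedMeasure X =>
          ∑ j ∈ insert k s', zeta φ (P (σ.1 ⁻¹' {j})) (Q (σ.1 ⁻¹' {j})))
          = fun Q => zeta φ (P (σ.1 ⁻¹' {k})) (Q (σ.1 ⁻¹' {k}))
            + ∑ j ∈ s', zeta φ (P (σ.1 ⁻¹' {j})) (Q (σ.1 ⁻¹' {j})) := by
        funext Q; exact Finset.sum_insert hk
      rw [this]
      exact hterm.add ih
  by_cases hT : ∀ Q ∈ Ω, G Q = ⊤
  · obtain ⟨Q₀, hQ₀⟩ := hne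
    exact ⟨Q₀, hQ₀, fun Q hQ => by show G Q₀ ≤ G Q; rw [hT Q hQ]; exact le_top⟩
  · push_neg at hT
    obtain ⟨Q₁, hQ₁, hQ₁ne⟩ := hT
    set mm : ℝ≥0∞ := ⨅ Q ∈ Ω, G Q with hmm
    have hmmne : mm ≠ ⊤ := by
      intro h
      exact hQ₁ne (top_unique (h ▸ iInf₂_le Q₁ hQ₁))
    set Z : ℕ → Set (SignedMeasure X) := fun n => {Q | G Q ≤ mm + (↑(n + 1) : ℝ≥0∞)⁻¹} with hZ
    have hZc : ∀ n, IsClosed (Z n) := fun n => hGlsc.isClosed_preimage _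
    have hfin : ∀ u : Finset ℕ, (Ω ∩ ⋂ n ∈ u, Z n).Nonempty := by
      intro u
      rcases u.eq_empty_or_nonempty with rfl | hu
      · simpa using hne
      · set N : ℕ := u.max' hu with hN
        have hlt : mm < mm + (↑(N + 1) : ℝ≥0∞)⁻¹ :=
          ENNReal.lt_add_right hmmne (by simp)
        have hex : ∃ Q ∈ Ω, G Q < mm + (↑(N + 1) : ℝ≥0∞)⁻¹ := by
          by_contra hcon
          push_neg at hcon
          exact absurd hlt (not_lt.2 (le_iInf₂ hcon))
        obtain ⟨Q2, hQ2Ω, hQ2⟩ := hex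
        refine ⟨Q2, hQ2Ω, Set.mem_iInter₂.mpr fun n hn => ?_⟩
        have hn' : n ≤ N := u.le_max' n hn
        have hcast : (↑(N + 1) : ℝ≥0∞)⁻¹ ≤ (↑(n + 1) : ℝ≥0∞)⁻¹ :=
          ENNReal.inv_le_inv.mpr (by exact_mod_cast Nat.succ_le_succ hn')
        exact le_trans hQ2.le (add_le_add_right hcast mm)
    obtain ⟨Qs, hQsΩ, hQsZ⟩ := hcomp.inter_iInter_nonempty Z hZc hfin
    refine ⟨Qs, hQsΩ, fun Q hQ => ?_⟩
    show G Qs ≤ G Q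
    have hle : G Qs ≤ mm := by
      by_contra hcon
      push_neg at hcon
      have hd : (0 : ℝ≥0∞) < G Qs - mm := tsub_pos_iff_lt.mpr hcon
      obtain ⟨n, hn⟩ := ENNReal.exists_inv_nat_lt hd.ne'
      have h1 : G Qs ≤ mm + (↑(n + 1) : ℝ≥0∞)⁻¹ := Set.mem_iInter.mp hQsZ n
      have h2 : (↑(n + 1) : ℝ≥0∞)⁻¹ ≤ (↑n : ℝ≥0∞)⁻¹ :=
        ENNReal.inv_le_inv.mpr (by exact_mod_cast Nat.le_succ n)
      have h3 : mm + (↑(n + 1) : ℝ≥0∞)⁻¹ < mm + (G Qs - mm) :=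
        ENNReal.add_lt_add_left hmmne (lt_of_le_of_lt h2 hn)
      rw [add_tsub_cancel_of_le hcon.le] at h3
      exact lt_irrefl _ (h1.trans_lt h3)
    exact hle.trans (iInf₂_le Q hQ)
end
end

section
/- Let φ be a convex function satisfying: there exists 0<δ<1 such that for all c ∈ [1−δ,1+δ] there are constants c₁,c₂,c₃ with φ(c x) ≤ c₁ φ(x) + c₂|x| + c₃ for all x. Then for every finite signed measure Q ≪ P with φ(Q,P) = ∫ φ(dQ/dP) dP < ∞: (1) for each c ∈ [1−δ,1+δ], φ(c·dQ/dP) ∈ L¹(P); and (2) lim_{c→1} φ(cQ,P) = φ(Q,P). -/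
open MeasureTheory Filter Topology Set
open scoped ENNReal NNReal Classical

noncomputable section

variable {X : Type*} [MeasurableSpace X]

/-- Auxiliary convexity inequality: `φ((1-s)p + sq) ≤ φ p + ofReal s * φ q` for `s ∈ [0,1]`. -/
lemma cvx_aux {φ : ℝ → ℝ≥0∞} (hconv : ConvexOn ℝ≥0 Set.univ φ)
    (p q s : ℝ) (h0 : 0 ≤ s) (h1 : s ≤ 1) :
    φ ((1 - s) * p + s * q) ≤ φ p + ENNReal.ofReal s * φ q := by
  have hab : Real.toNNReal (1 - s) + Real.toNNReal s = 1 := by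
    rw [← Real.toNNReal_add (by linarith) h0]
    norm_num
  have h := hconv.2 (Set.mem_univ p) (Set.mem_univ q)
    (Real.toNNReal (1 - s)).coe_nonneg (Real.toNNReal s).coe_nonneg hab
  have e1 : (Real.toNNReal (1 - s) : ℝ≥0) • p = (1 - s) * p := by
    simp [NNReal.smul_def, Real.coe_toNNReal _ (by linarith : (0:ℝ) ≤ 1 - s)]
  have e2 : (Real.toNNReal s : ℝ≥0) • q = s * q := by
    simp [NNReal.smul_def, Real.coe_toNNReal _ h0]
  rw [e1, e2] at h
  refine h.trans (add_le_add ?_ ?_)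
  · have : ((Real.toNNReal (1 - s) : ℝ≥0) : ℝ≥0∞) ≤ 1 := by
      rw [← ENNReal.coe_one, ENNReal.coe_le_coe]
      exact Real.toNNReal_le_one.2 (by linarith)
    calc (Real.toNNReal (1 - s) : ℝ≥0) • φ p
        = ((Real.toNNReal (1 - s) : ℝ≥0) : ℝ≥0∞) * φ p := rfl
      _ ≤ 1 * φ p := mul_le_mul_left this _
      _ = φ p := one_mul _
  · exact le_of_eq rfl

/-- Let `φ` be convex with `φ 1 = 0` satisfying the scaling growth condition:
there is `0<δ<1` such that for all `c ∈ [1−δ,1+δ]` there are constants `c₁,c₂,c₃` with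
`φ(c x) ≤ c₁ φ(x) + c₂|x| + c₃` for all `x`.  Then for every finite signed measure `Q ≪ P`
with `φ(Q,P) < ∞`: (1) for each `c ∈ [1−δ,1+δ]`, `φ(c·dQ/dP) ∈ L¹(P)`; and
(2) `lim_{c→1} φ(cQ,P) = φ(Q,P)`. -/
theorem stmt12 (P : Measure X) [IsProbabilityMeasure P]
    (φ : ℝ → ℝ≥0∞)
    (hconv : ConvexOn ℝ≥0 Set.univ φ)
    (hlsc : LowerSemicontinuous φ)
    (hone : φ 1 = 0)
    (δ : ℝ) (hδ : δ ∈ Ioo (0 : ℝ) 1)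
    (hgrow : ∀ c ∈ Icc (1 - δ) (1 + δ), ∃ c₁ c₂ c₃ : ℝ≥0, ∀ x : ℝ,
      φ (c * x) ≤ (c₁ : ℝ≥0∞) * φ x + (c₂ : ℝ≥0∞) * ENNReal.ofReal |x| + (c₃ : ℝ≥0∞)) :
    ∀ Q : SignedMeasure X, Q ≪ᵥ P.toENNRealVectorMeasure → div φ Q P ≠ ⊤ →
      (∀ c ∈ Icc (1 - δ) (1 + δ), ∫⁻ x, φ (c * Q.rnDeriv P x) ∂P ≠ ⊤) ∧
      Tendsto (fun c : ℝ => ∫⁻ x, φ (c * Q.rnDeriv P x) ∂P) (𝓝 1) (𝓝 (div φ Q P)) := by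
  intro Q hQP hfin
  obtain ⟨hδ0, hδ1⟩ := hδ
  set f := Q.rnDeriv P with hf
  have hfmeas : Measurable f := SignedMeasure.measurable_rnDeriv Q P
  have hφmeas : Measurable φ := hlsc.measurable
  have hfint : Integrable f P := SignedMeasure.integrable_rnDeriv Q P
  have hIf : ∫⁻ x, ENNReal.ofReal |f x| ∂P ≠ ⊤ := by
    have := hfint.2
    rw [hasFiniteIntegral_iff_norm] at this
    simpa [Real.norm_eq_abs] using this.ne
  have hIφ : ∫⁻ x, φ (f x) ∂P ≠ ⊤ := hfin
  -- Part (1)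
  have part1 : ∀ c ∈ Icc (1 - δ) (1 + δ), ∫⁻ x, φ (c * f x) ∂P ≠ ⊤ := by
    intro c hc
    obtain ⟨c₁, c₂, c₃, h⟩ := hgrow c hc
    have hle : ∫⁻ x, φ (c * f x) ∂P
        ≤ (c₁ : ℝ≥0∞) * ∫⁻ x, φ (f x) ∂P
          + (c₂ : ℝ≥0∞) * ∫⁻ x, ENNReal.ofReal |f x| ∂P + (c₃ : ℝ≥0∞) := by
      calc ∫⁻ x, φ (c * f x) ∂P
          ≤ ∫⁻ x, ((c₁ : ℝ≥0∞) * φ (f x)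
              + (c₂ : ℝ≥0∞) * ENNReal.ofReal |f x| + (c₃ : ℝ≥0∞)) ∂P :=
            lintegral_mono fun x => h (f x)
        _ = (c₁ : ℝ≥0∞) * ∫⁻ x, φ (f x) ∂P
              + (c₂ : ℝ≥0∞) * ∫⁻ x, ENNReal.ofReal |f x| ∂P + (c₃ : ℝ≥0∞) := by
            rw [lintegral_add_right _ measurable_const,
              lintegral_add_right _ ((hfmeas.abs.ennreal_ofReal).const_mul _),
              lintegral_const_mul _ (show Measurable fun x => φ (f x) from hφmeas.comp hfmeas),
              lintegral_const_mul _ hfmeas.abs.ennreal_ofReal, lintegral_const,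
              measure_univ, mul_one]
    exact ne_top_of_le_ne_top
      (by
        refine ENNReal.add_ne_top.2 ⟨ENNReal.add_ne_top.2 ⟨?_, ?_⟩, ENNReal.coe_ne_top⟩
        · exact ENNReal.mul_ne_top ENNReal.coe_ne_top hIφ
        · exact ENNReal.mul_ne_top ENNReal.coe_ne_top hIf) hle
  refine ⟨part1, ?_⟩
  -- Part (2)
  have hm1 : (1 - δ) ∈ Icc (1 - δ) (1 + δ) := ⟨le_refl _, by linarith⟩
  have hm2 : (1 + δ) ∈ Icc (1 - δ) (1 + δ) := ⟨by linarith, le_refl _⟩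
  obtain ⟨a₁, a₂, a₃, hA⟩ := hgrow (1 - δ) hm1
  obtain ⟨b₁, b₂, b₃, hB⟩ := hgrow (1 + δ) hm2
  -- a.e. finiteness of the relevant values
  have haefin : ∀ᵐ x ∂P, φ (f x) ≠ ⊤ ∧ φ ((1 - δ) * f x) ≠ ⊤ ∧ φ ((1 + δ) * f x) ≠ ⊤ := by
    have h1 : ∀ᵐ x ∂P, φ (f x) < ⊤ :=
      ae_lt_top (hφmeas.comp hfmeas) hIφ
    filter_upwards [h1] with x hx
    have hv : φ (f x) ≠ ⊤ := hx.ne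
    refine ⟨hv, ?_, ?_⟩
    · refine ne_top_of_le_ne_top ?_ (hA (f x))
      refine ENNReal.add_ne_top.2 ⟨ENNReal.add_ne_top.2 ⟨?_, ?_⟩, ENNReal.coe_ne_top⟩
      · exact ENNReal.mul_ne_top ENNReal.coe_ne_top hv
      · exact ENNReal.mul_ne_top ENNReal.coe_ne_top ENNReal.ofReal_ne_top
    · refine ne_top_of_le_ne_top ?_ (hB (f x))
      refine ENNReal.add_ne_top.2 ⟨ENNReal.add_ne_top.2 ⟨?_, ?_⟩, ENNReal.coe_ne_top⟩
      · exact ENNReal.mul_ne_top ENNReal.coe_ne_top hv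
      · exact ENNReal.mul_ne_top ENNReal.coe_ne_top ENNReal.ofReal_ne_top
  -- domination: for c in the interval, φ(cx) ≤ φ((1-δ)x) + φ((1+δ)x)
  have hdom : ∀ c ∈ Icc (1 - δ) (1 + δ), ∀ x : ℝ,
      φ (c * x) ≤ φ ((1 - δ) * x) + φ ((1 + δ) * x) := by
    intro c hc x
    have hs0 : 0 ≤ (c - (1 - δ)) / (2 * δ) := div_nonneg (by linarith [hc.1]) (by linarith)
    have hs1 : (c - (1 - δ)) / (2 * δ) ≤ 1 := by
      rw [div_le_one (by linarith)]; linarith [hc.2]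
    have heq : (1 - (c - (1 - δ)) / (2 * δ)) * ((1 - δ) * x)
        + ((c - (1 - δ)) / (2 * δ)) * ((1 + δ) * x) = c * x := by
      field_simp
      ring
    calc φ (c * x)
        = φ ((1 - (c - (1 - δ)) / (2 * δ)) * ((1 - δ) * x)
            + ((c - (1 - δ)) / (2 * δ)) * ((1 + δ) * x)) := by rw [heq]
      _ ≤ φ ((1 - δ) * x) + ENNReal.ofReal ((c - (1 - δ)) / (2 * δ)) * φ ((1 + δ) * x) :=
          cvx_aux hconv _ _ _ hs0 hs1
      _ ≤ φ ((1 - δ) * x) + 1 * φ ((1 + δ) * x) :=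
          add_le_add le_rfl (mul_le_mul_left (ENNReal.ofReal_le_one.2 hs1) _)
      _ = φ ((1 - δ) * x) + φ ((1 + δ) * x) := by rw [one_mul]
  -- the dominating function
  set bound : X → ℝ≥0∞ := fun x =>
    ((a₁ : ℝ≥0∞) + b₁) * φ (f x) + ((a₂ : ℝ≥0∞) + b₂) * ENNReal.ofReal |f x|
      + ((a₃ : ℝ≥0∞) + b₃) with hbound
  have hbound_le : ∀ c ∈ Icc (1 - δ) (1 + δ), ∀ x, φ (c * f x) ≤ bound x := by
    intro c hc x
    calc φ (c * f x) ≤ φ ((1 - δ) * f x) + φ ((1 + δ) * f x) := hdom c hc (f x)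
      _ ≤ ((a₁ : ℝ≥0∞) * φ (f x) + (a₂ : ℝ≥0∞) * ENNReal.ofReal |f x| + (a₃ : ℝ≥0∞))
          + ((b₁ : ℝ≥0∞) * φ (f x) + (b₂ : ℝ≥0∞) * ENNReal.ofReal |f x| + (b₃ : ℝ≥0∞)) :=
        add_le_add (hA (f x)) (hB (f x))
      _ = bound x := by rw [hbound]; ring
  have hbound_fin : ∫⁻ x, bound x ∂P ≠ ⊤ := by
    have : ∫⁻ x, bound x ∂P
        = ((a₁ : ℝ≥0∞) + b₁) * ∫⁻ x, φ (f x) ∂P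
          + ((a₂ : ℝ≥0∞) + b₂) * ∫⁻ x, ENNReal.ofReal |f x| ∂P + ((a₃ : ℝ≥0∞) + b₃) := by
      rw [hbound]
      rw [lintegral_add_right _ measurable_const,
        lintegral_add_right _ ((hfmeas.abs.ennreal_ofReal).const_mul _),
        lintegral_const_mul _ (show Measurable fun x => φ (f x) from hφmeas.comp hfmeas),
        lintegral_const_mul _ hfmeas.abs.ennreal_ofReal, lintegral_const,
        measure_univ, mul_one]
    rw [this]
    refine ENNReal.add_ne_top.2 ⟨ENNReal.add_ne_top.2 ⟨?_, ?_⟩, ?_⟩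
    · exact ENNReal.mul_ne_top (ENNReal.add_ne_top.2 ⟨ENNReal.coe_ne_top, ENNReal.coe_ne_top⟩) hIφ
    · exact ENNReal.mul_ne_top (ENNReal.add_ne_top.2 ⟨ENNReal.coe_ne_top, ENNReal.coe_ne_top⟩) hIf
    · exact ENNReal.add_ne_top.2 ⟨ENNReal.coe_ne_top, ENNReal.coe_ne_top⟩
  have hIcc : Icc (1 - δ) (1 + δ) ∈ 𝓝 (1 : ℝ) :=
    Icc_mem_nhds (by linarith) (by linarith)
  -- pointwise convergence
  have h_lim : ∀ᵐ x ∂P, Tendsto (fun c : ℝ => φ (c * f x)) (𝓝 1) (𝓝 (φ (f x))) := by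
    filter_upwards [haefin] with x hx
    obtain ⟨hv, hA', hB'⟩ := hx
    have ht : Tendsto (fun c : ℝ => c * f x) (𝓝 1) (𝓝 (f x)) := by
      have := (continuous_mul_right (f x)).tendsto 1
      simpa using this
    -- upper bound eventually
    have hub : ∀ᶠ c in 𝓝 (1 : ℝ), φ (c * f x)
        ≤ φ (f x) + ENNReal.ofReal (|c - 1| / δ) * (φ ((1 - δ) * f x) + φ ((1 + δ) * f x)) := by
      filter_upwards [hIcc] with c hc
      rcases le_total c 1 with hc1 | hc1
      · have hs0 : 0 ≤ (1 - c) / δ := div_nonneg (by linarith) hδ0.le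
        have hs1 : (1 - c) / δ ≤ 1 := by rw [div_le_one hδ0]; linarith [hc.1]
        have heq : (1 - (1 - c) / δ) * f x + ((1 - c) / δ) * ((1 - δ) * f x) = c * f x := by
          field_simp
          ring
        have habs : |c - 1| = 1 - c := by rw [abs_of_nonpos (by linarith)]; ring
        calc φ (c * f x)
            = φ ((1 - (1 - c) / δ) * f x + ((1 - c) / δ) * ((1 - δ) * f x)) := by rw [heq]
          _ ≤ φ (f x) + ENNReal.ofReal ((1 - c) / δ) * φ ((1 - δ) * f x) :=
              cvx_aux hconv _ _ _ hs0 hs1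
          _ ≤ φ (f x) + ENNReal.ofReal (|c - 1| / δ)
              * (φ ((1 - δ) * f x) + φ ((1 + δ) * f x)) := by
              rw [habs]
              exact add_le_add le_rfl (mul_le_mul_right le_self_add _)
      · have hs0 : 0 ≤ (c - 1) / δ := div_nonneg (by linarith) hδ0.le
        have hs1 : (c - 1) / δ ≤ 1 := by rw [div_le_one hδ0]; linarith [hc.2]
        have heq : (1 - (c - 1) / δ) * f x + ((c - 1) / δ) * ((1 + δ) * f x) = c * f x := by
          field_simp
          ring
        have habs : |c - 1| = c - 1 := abs_of_nonneg (by linarith)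
        calc φ (c * f x)
            = φ ((1 - (c - 1) / δ) * f x + ((c - 1) / δ) * ((1 + δ) * f x)) := by rw [heq]
          _ ≤ φ (f x) + ENNReal.ofReal ((c - 1) / δ) * φ ((1 + δ) * f x) :=
              cvx_aux hconv _ _ _ hs0 hs1
          _ ≤ φ (f x) + ENNReal.ofReal (|c - 1| / δ)
              * (φ ((1 - δ) * f x) + φ ((1 + δ) * f x)) := by
              rw [habs]
              exact add_le_add le_rfl (mul_le_mul_right le_add_self _)
    -- the upper bound tends to φ (f x)
    have htend : Tendsto (fun c : ℝ => φ (f x) + ENNReal.ofReal (|c - 1| / δ)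
        * (φ ((1 - δ) * f x) + φ ((1 + δ) * f x))) (𝓝 1) (𝓝 (φ (f x))) := by
      have h0 : Tendsto (fun c : ℝ => ENNReal.ofReal (|c - 1| / δ)) (𝓝 1) (𝓝 0) := by
        have hr : Tendsto (fun c : ℝ => |c - 1| / δ) (𝓝 1) (𝓝 0) := by
          have : Continuous fun c : ℝ => |c - 1| / δ :=
            ((continuous_id.sub continuous_const).abs).div_const δ
          have := this.tendsto 1
          simpa using this
        have := (ENNReal.continuous_ofReal.tendsto 0).comp hr
        simpa [Function.comp_def] using this
      have hmul : Tendsto (fun c : ℝ => ENNReal.ofReal (|c - 1| / δ)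
          * (φ ((1 - δ) * f x) + φ ((1 + δ) * f x))) (𝓝 1) (𝓝 0) := by
        have := ENNReal.Tendsto.mul_const h0
          (Or.inr (ENNReal.add_ne_top.2 ⟨hA', hB'⟩))
        simpa using this
      have := hmul.const_add (φ (f x))
      simpa using this
    -- combine via liminf/limsup
    apply tendsto_of_le_liminf_of_limsup_le
    · rw [le_liminf_iff]
      intro y hy
      exact ht.eventually (hlsc (f x) y hy)
    · calc limsup (fun c : ℝ => φ (c * f x)) (𝓝 1)
          ≤ limsup (fun c : ℝ => φ (f x) + ENNReal.ofReal (|c - 1| / δ)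
              * (φ ((1 - δ) * f x) + φ ((1 + δ) * f x))) (𝓝 1) :=
            limsup_le_limsup hub
        _ = φ (f x) := htend.limsup_eq
    · isBoundedDefault
    · isBoundedDefault
  -- conclude by dominated convergence
  have hFmeas : ∀ᶠ c in 𝓝 (1 : ℝ), Measurable fun x => φ (c * f x) :=
    Eventually.of_forall fun c => hφmeas.comp (hfmeas.const_mul c)
  have h_bound : ∀ᶠ c in 𝓝 (1 : ℝ), ∀ᵐ x ∂P, φ (c * f x) ≤ bound x := by
    filter_upwards [hIcc] with c hc
    exact Eventually.of_forall fun x => hbound_le c hc x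
  exact tendsto_lintegral_filter_of_dominated_convergence bound hFmeas h_bound hbound_fin h_lim
end
end

section
/- Let φ be differentiable convex satisfying the growth condition: ∃ 0<δ<1 such that ∀ c∈[1−δ,1+δ] ∃ c₁,c₂,c₃ with φ(cx) ≤ c₁φ(x)+c₂|x|+c₃ for all x. Then for every Q ≪ P with φ(Q,P) < ∞, the function q·φ'(q) belongs to L¹(X,P), where q = dQ/dP. -/
open MeasureTheory Filter Topology Set
open scoped ENNReal NNReal Classical

noncomputable section

variable {X : Type*} [MeasurableSpace X]

lemma aux_convexOn_toReal (φ : ℝ → ℝ≥0∞) (hconv : ConvexOn ℝ≥0 Set.univ φ) :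
    ConvexOn ℝ {y : ℝ | φ y ≠ ⊤} (fun y => (φ y).toReal) := by
  have key : ∀ x y : ℝ, ∀ a b : ℝ, 0 ≤ a → 0 ≤ b → a + b = 1 →
      φ (a * x + b * y) ≤ ENNReal.ofReal a * φ x + ENNReal.ofReal b * φ y := by
    intro x y a b ha hb hab
    have hab' : a.toNNReal + b.toNNReal = 1 := by
      ext
      push_cast
      rw [Real.coe_toNNReal _ ha, Real.coe_toNNReal _ hb]
      exact hab
    have := hconv.2 (Set.mem_univ x) (Set.mem_univ y)
      (by positivity) (by positivity) hab'
    simpa [NNReal.smul_def, ENNReal.smul_def, Real.coe_toNNReal _ ha, Real.coe_toNNReal _ hb,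
      ENNReal.ofReal] using this
  have hSconv : Convex ℝ {y : ℝ | φ y ≠ ⊤} := by
    intro x hx y hy a b ha hb hab
    simp only [Set.mem_setOf_eq] at hx hy ⊢
    have h := key x y a b ha hb hab
    have hne : ENNReal.ofReal a * φ x + ENNReal.ofReal b * φ y ≠ ⊤ :=
      ENNReal.add_ne_top.2 ⟨ENNReal.mul_ne_top ENNReal.ofReal_ne_top hx,
        ENNReal.mul_ne_top ENNReal.ofReal_ne_top hy⟩
    exact ne_top_of_le_ne_top hne (by simpa using h)
  refine ⟨hSconv, ?_⟩
  intro x hx y hy a b ha hb hab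
  simp only [Set.mem_setOf_eq] at hx hy
  have h := key x y a b ha hb hab
  have hne1 : ENNReal.ofReal a * φ x ≠ ⊤ := ENNReal.mul_ne_top ENNReal.ofReal_ne_top hx
  have hne2 : ENNReal.ofReal b * φ y ≠ ⊤ := ENNReal.mul_ne_top ENNReal.ofReal_ne_top hy
  have := ENNReal.toReal_mono (ENNReal.add_ne_top.2 ⟨hne1, hne2⟩) h
  rw [ENNReal.toReal_add hne1 hne2, ENNReal.toReal_mul, ENNReal.toReal_mul,
    ENNReal.toReal_ofReal ha, ENNReal.toReal_ofReal hb] at this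
  simpa [smul_eq_mul] using this

/-- Let `φ` be differentiable convex (with derivative `φ'` on its domain)
satisfying the scaling growth condition.  Then for every `Q ≪ P` with `φ(Q,P) < ∞`, the
function `q·φ'(q)` belongs to `L¹(X,P)`, where `q = dQ/dP`. -/
theorem stmt13 (P : Measure X) [IsProbabilityMeasure P]
    (φ : ℝ → ℝ≥0∞) (φ' : ℝ → ℝ)
    (hconv : ConvexOn ℝ≥0 Set.univ φ)
    (hlsc : LowerSemicontinuous φ)
    (hone : φ 1 = 0)
    (hderiv : ∀ x ∈ {y : ℝ | φ y ≠ ⊤},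
      HasDerivWithinAt (fun y => (φ y).toReal) (φ' x) {y : ℝ | φ y ≠ ⊤} x)
    (hgrow : ∃ δ : ℝ, δ ∈ Ioo (0 : ℝ) 1 ∧ ∀ c ∈ Icc (1 - δ) (1 + δ),
      ∃ c₁ c₂ c₃ : ℝ≥0, ∀ x : ℝ,
        φ (c * x) ≤ (c₁ : ℝ≥0∞) * φ x + (c₂ : ℝ≥0∞) * ENNReal.ofReal |x| + (c₃ : ℝ≥0∞)) :
    ∀ Q : SignedMeasure X, Q ≪ᵥ P.toENNRealVectorMeasure → div φ Q P ≠ ⊤ →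
      Integrable (fun x => Q.rnDeriv P x * φ' (Q.rnDeriv P x)) P := by
  classical
  obtain ⟨δ, ⟨hδ0, hδ1⟩, hg⟩ := hgrow
  obtain ⟨c₁, c₂, c₃, hg₁⟩ := hg (1 + δ) ⟨by linarith, le_refl _⟩
  obtain ⟨d₁, d₂, d₃, hg₂⟩ := hg (1 - δ) ⟨le_refl _, by linarith⟩
  set S : Set ℝ := {y : ℝ | φ y ≠ ⊤} with hSdef
  set f : ℝ → ℝ := fun y => (φ y).toReal with hfdef
  have hfS : ConvexOn ℝ S f := aux_convexOn_toReal φ hconv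
  have hφm : Measurable φ := hlsc.measurable
  have hSm : MeasurableSet S := (hφm (measurableSet_singleton ⊤)).compl
  have hfnonneg : ∀ y, 0 ≤ f y := fun y => ENNReal.toReal_nonneg
  have hplus : ∀ y ∈ S, (1 + δ) * y ∈ S := by
    intro y hy
    exact ne_top_of_le_ne_top (ENNReal.add_ne_top.2 ⟨ENNReal.add_ne_top.2
      ⟨ENNReal.mul_ne_top ENNReal.coe_ne_top hy,
       ENNReal.mul_ne_top ENNReal.coe_ne_top ENNReal.ofReal_ne_top⟩,
      ENNReal.coe_ne_top⟩) (hg₁ y)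
  have hminus : ∀ y ∈ S, (1 - δ) * y ∈ S := by
    intro y hy
    exact ne_top_of_le_ne_top (ENNReal.add_ne_top.2 ⟨ENNReal.add_ne_top.2
      ⟨ENNReal.mul_ne_top ENNReal.coe_ne_top hy,
       ENNReal.mul_ne_top ENNReal.coe_ne_top ENNReal.ofReal_ne_top⟩,
      ENNReal.coe_ne_top⟩) (hg₂ y)
  have hmono : MonotoneOn φ' S := by
    intro x hx y hy hxy
    rcases eq_or_lt_of_le hxy with rfl | hlt
    · exact le_refl _
    calc φ' x ≤ slope f x y := hfS.le_slope_of_hasDerivWithinAt hx hy hlt (hderiv x hx)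
      _ ≤ φ' y := hfS.slope_le_of_hasDerivWithinAt hx hy hlt (hderiv y hy)
  set h : ℝ → ℝ := fun y => if y ∈ S then φ' y else 0 with hhdef
  have hhm : Measurable h := by
    apply measurable_of_Iio
    intro t
    have hE : MeasurableSet {y | y ∈ S ∧ φ' y < t} := by
      have hoc : OrdConnected {y | y ∈ S ∧ φ' y < t} := by
        constructor
        intro y₁ h₁ y₂ h₂ z hz
        have hzS : z ∈ S := hfS.1.ordConnected.out h₁.1 h₂.1 hz
        exact ⟨hzS, lt_of_le_of_lt (hmono hzS h₂.1 hz.2) h₂.2⟩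
      exact hoc.measurableSet
    by_cases ht : (0:ℝ) < t
    · have heq : h ⁻¹' Iio t = {y | y ∈ S ∧ φ' y < t} ∪ Sᶜ := by
        ext y
        by_cases hy : y ∈ S
        · have hy' : φ y ≠ ⊤ := hy
          simp [hhdef, hy, ht, hy']
        · have hy' : ¬ φ y ≠ ⊤ := hy
          simp [hhdef, hy, ht, hy']
      rw [heq]; exact hE.union hSm.compl
    · have heq : h ⁻¹' Iio t = {y | y ∈ S ∧ φ' y < t} := by
        ext y
        by_cases hy : y ∈ S
        · have hy' : φ y ≠ ⊤ := hy
          simp [hhdef, hy, ht, hy']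
        · have hy' : ¬ φ y ≠ ⊤ := hy
          simp [hhdef, hy, ht, hy']
      rw [heq]; exact hE
  have hR : ∀ (a₁ a₂ a₃ : ℝ≥0) (c : ℝ),
      (∀ x : ℝ, φ (c * x) ≤ (a₁ : ℝ≥0∞) * φ x + (a₂ : ℝ≥0∞) * ENNReal.ofReal |x| + (a₃ : ℝ≥0∞)) →
      ∀ y ∈ S, f (c * y) ≤ (a₁ : ℝ) * f y + (a₂ : ℝ) * |y| + (a₃ : ℝ) := by
    intro a₁ a₂ a₃ c hgc y hy
    have h1 := hgc y
    have hne1 : (a₁ : ℝ≥0∞) * φ y ≠ ⊤ := ENNReal.mul_ne_top ENNReal.coe_ne_top hy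
    have hne2 : (a₂ : ℝ≥0∞) * ENNReal.ofReal |y| ≠ ⊤ :=
      ENNReal.mul_ne_top ENNReal.coe_ne_top ENNReal.ofReal_ne_top
    have hne : (a₁ : ℝ≥0∞) * φ y + (a₂ : ℝ≥0∞) * ENNReal.ofReal |y| + (a₃ : ℝ≥0∞) ≠ ⊤ :=
      ENNReal.add_ne_top.2 ⟨ENNReal.add_ne_top.2 ⟨hne1, hne2⟩, ENNReal.coe_ne_top⟩
    have h2 := ENNReal.toReal_mono hne h1
    rw [ENNReal.toReal_add (ENNReal.add_ne_top.2 ⟨hne1, hne2⟩) ENNReal.coe_ne_top,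
      ENNReal.toReal_add hne1 hne2, ENNReal.toReal_mul, ENNReal.toReal_mul,
      ENNReal.coe_toReal, ENNReal.coe_toReal, ENNReal.coe_toReal,
      ENNReal.toReal_ofReal (abs_nonneg y)] at h2
    exact h2
  have key : ∀ y ∈ S, |y * φ' y| * δ ≤ f ((1+δ)*y) + f ((1-δ)*y) + 2 * f y := by
    intro y hy
    have hA := hfnonneg ((1+δ)*y)
    have hB := hfnonneg ((1-δ)*y)
    have hC := hfnonneg y
    rcases lt_trichotomy y 0 with hy0 | hy0 | hy0
    · have hP := hplus y hy
      have hM := hminus y hy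
      have h2 : y < (1-δ)*y := by nlinarith
      have h1 : (1+δ)*y < y := by nlinarith
      have hu : φ' y ≤ slope f y ((1-δ)*y) :=
        hfS.le_slope_of_hasDerivWithinAt hy hM h2 (hderiv y hy)
      have hl : slope f ((1+δ)*y) y ≤ φ' y :=
        hfS.slope_le_of_hasDerivWithinAt hP hy h1 (hderiv y hy)
      rw [slope_def_field] at hu hl
      have hden : (1-δ)*y - y = -(δ*y) := by ring
      have hden' : y - (1+δ)*y = -(δ*y) := by ring
      have hpos : (0:ℝ) < -(δ*y) := by nlinarith
      rw [hden] at hu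
      rw [hden'] at hl
      have hu' : φ' y * (-(δ*y)) ≤ f ((1-δ)*y) - f y := (le_div_iff₀ hpos).1 hu
      have hl' : f y - f ((1+δ)*y) ≤ φ' y * (-(δ*y)) := (div_le_iff₀ hpos).1 hl
      have habs : |φ' y * (-(δ*y))| ≤ f ((1+δ)*y) + f ((1-δ)*y) + 2 * f y := by
        rw [abs_le]; constructor <;> linarith
      calc |y * φ' y| * δ = |φ' y * (-(δ*y))| := by
            simp only [abs_mul, abs_neg, abs_of_pos hδ0]; ring
        _ ≤ _ := habs
    · subst hy0
      simp only [zero_mul, mul_zero, abs_zero]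
      linarith
    · have hP := hplus y hy
      have hM := hminus y hy
      have h2 : y < (1+δ)*y := by nlinarith
      have h1 : (1-δ)*y < y := by nlinarith
      have hu : φ' y ≤ slope f y ((1+δ)*y) :=
        hfS.le_slope_of_hasDerivWithinAt hy hP h2 (hderiv y hy)
      have hl : slope f ((1-δ)*y) y ≤ φ' y :=
        hfS.slope_le_of_hasDerivWithinAt hM hy h1 (hderiv y hy)
      rw [slope_def_field] at hu hl
      have hden : (1+δ)*y - y = δ*y := by ring
      have hden' : y - (1-δ)*y = δ*y := by ring
      have hpos : (0:ℝ) < δ*y := by nlinarith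
      rw [hden] at hu
      rw [hden'] at hl
      have hu' : φ' y * (δ*y) ≤ f ((1+δ)*y) - f y := (le_div_iff₀ hpos).1 hu
      have hl' : f y - f ((1-δ)*y) ≤ φ' y * (δ*y) := (div_le_iff₀ hpos).1 hl
      have habs : |φ' y * (δ*y)| ≤ f ((1+δ)*y) + f ((1-δ)*y) + 2 * f y := by
        rw [abs_le]; constructor <;> linarith
      calc |y * φ' y| * δ = |φ' y * (δ*y)| := by
            simp only [abs_mul, abs_of_pos hδ0]; ring
        _ ≤ _ := habs
  intro Q hQP hdiv
  set q : X → ℝ := Q.rnDeriv P with hqdef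
  have hqm : Measurable q := SignedMeasure.measurable_rnDeriv Q P
  have hdiv' : ∫⁻ x, φ (q x) ∂P ≠ ⊤ := hdiv
  have hqae : ∀ᵐ x ∂P, q x ∈ S := by
    have hlt : ∀ᵐ x ∂P, φ (q x) < ⊤ := ae_lt_top (hφm.comp hqm) hdiv'
    filter_upwards [hlt] with x hx using hx.ne
  have hfq : Integrable (fun x => f (q x)) P :=
    integrable_toReal_of_lintegral_ne_top ((hφm.comp hqm).aemeasurable) hdiv'
  have habsq : Integrable (fun x => |q x|) P := (SignedMeasure.integrable_rnDeriv Q P).abs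
  have hGint : Integrable (fun x =>
      δ⁻¹ * (((c₁:ℝ) + d₁ + 2) * f (q x) + ((c₂:ℝ) + d₂) * |q x| + ((c₃:ℝ) + d₃))) P :=
    (((hfq.const_mul _).add (habsq.const_mul _)).add (integrable_const _)).const_mul _
  have hcongr : (fun x => q x * h (q x)) =ᵐ[P] fun x => q x * φ' (q x) := by
    filter_upwards [hqae] with x hx
    simp [hhdef, hx]
  refine (Integrable.mono' hGint ((hqm.mul (hhm.comp hqm)).aestronglyMeasurable) ?_).congr hcongr
  filter_upwards [hqae] with x hx
  have hkey := key (q x) hx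
  have hb1 := hR c₁ c₂ c₃ (1+δ) hg₁ (q x) hx
  have hb2 := hR d₁ d₂ d₃ (1-δ) hg₂ (q x) hx
  have hCx := hfnonneg (q x)
  have hmain : |q x * φ' (q x)| * δ ≤
      ((c₁:ℝ) + d₁ + 2) * f (q x) + ((c₂:ℝ) + d₂) * |q x| + ((c₃:ℝ) + d₃) := by
    linarith
  have hhx : h (q x) = φ' (q x) := by simp [hhdef, hx]
  rw [Real.norm_eq_abs, Pi.mul_apply, Function.comp_apply, hhx]
  calc |q x * φ' (q x)| = δ⁻¹ * (|q x * φ' (q x)| * δ) := by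
        field_simp
    _ ≤ δ⁻¹ * (((c₁:ℝ) + d₁ + 2) * f (q x) + ((c₂:ℝ) + d₂) * |q x| + ((c₃:ℝ) + d₃)) :=
        mul_le_mul_of_nonneg_left hmain (by positivity)
end
end

section
/- (Necessity on convex sets.) Let φ be differentiable convex satisfying the scaling growth condition (∃ 0<δ<1 such that ∀c∈[1−δ,1+δ] ∃ c₁,c₂,c₃ with φ(cx) ≤ c₁φ(x)+c₂|x|+c₃ for all x), and let Ω be a convex set of finite signed measures. If Q* ∈ Ω is a φ-projection of P on Ω with φ(Q*,P) < ∞, then for every Q ∈ Ω with φ(Q,P) < ∞, the function φ'(q*)·q is in L¹(X,P) and ∫ φ'(q*) dQ* ≤ ∫ φ'(q*) dQ. -/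
open MeasureTheory Filter Topology Set
open scoped ENNReal NNReal Classical

noncomputable section

variable {X : Type*} [MeasurableSpace X]

private lemma aux_S_convex {φ : ℝ → ℝ≥0∞} (hconv : ConvexOn ℝ≥0 Set.univ φ) :
    Convex ℝ {y : ℝ | φ y ≠ ⊤} := by
  intro x hx y hy a b ha hb hab
  have h2 := hconv.2 (mem_univ x) (mem_univ y) (bot_le (a := a.toNNReal)) (bot_le (a := b.toNNReal))
    (by rw [← Real.toNNReal_add ha hb, hab, Real.toNNReal_one])
  simp only [NNReal.smul_def, Real.coe_toNNReal a ha, Real.coe_toNNReal b hb,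
    smul_eq_mul, ENNReal.smul_def] at h2
  refine mem_setOf.2 (ne_top_of_le_ne_top ?_ h2)
  exact ENNReal.add_ne_top.2 ⟨ENNReal.mul_ne_top ENNReal.coe_ne_top hx,
    ENNReal.mul_ne_top ENNReal.coe_ne_top hy⟩

private lemma aux_f_convex {φ : ℝ → ℝ≥0∞} (hconv : ConvexOn ℝ≥0 Set.univ φ) :
    ConvexOn ℝ {y : ℝ | φ y ≠ ⊤} (fun y => (φ y).toReal) := by
  refine ⟨aux_S_convex hconv, ?_⟩
  intro x hx y hy a b ha hb hab
  have h2 := hconv.2 (mem_univ x) (mem_univ y) (bot_le (a := a.toNNReal)) (bot_le (a := b.toNNReal))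
    (by rw [← Real.toNNReal_add ha hb, hab, Real.toNNReal_one])
  simp only [NNReal.smul_def, Real.coe_toNNReal a ha, Real.coe_toNNReal b hb,
    smul_eq_mul, ENNReal.smul_def] at h2
  have hne : (a.toNNReal : ℝ≥0∞) * φ x + (b.toNNReal : ℝ≥0∞) * φ y ≠ ⊤ :=
    ENNReal.add_ne_top.2 ⟨ENNReal.mul_ne_top ENNReal.coe_ne_top hx,
      ENNReal.mul_ne_top ENNReal.coe_ne_top hy⟩
  calc (φ (a * x + b * y)).toReal ≤ ((a.toNNReal : ℝ≥0∞) * φ x + (b.toNNReal : ℝ≥0∞) * φ y).toReal :=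
        ENNReal.toReal_mono hne h2
    _ = a * (φ x).toReal + b * (φ y).toReal := by
        rw [ENNReal.toReal_add (ENNReal.mul_ne_top ENNReal.coe_ne_top hx)
          (ENNReal.mul_ne_top ENNReal.coe_ne_top hy), ENNReal.toReal_mul, ENNReal.toReal_mul]
        simp [Real.coe_toNNReal a ha, Real.coe_toNNReal b hb]

/-- difference quotient monotonicity for a convex function -/
private lemma aux_quot_mono {S : Set ℝ} {f : ℝ → ℝ} (hf : ConvexOn ℝ S f)
    {u v : ℝ} (hu : u ∈ S) (hv : v ∈ S) {ε ε' : ℝ} (hε : 0 < ε) (hεε' : ε ≤ ε') (hε' : ε' ≤ 1) :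
    (f ((1 - ε) * u + ε * v) - f u) / ε ≤ (f ((1 - ε') * u + ε' * v) - f u) / ε' := by
  have hε'0 : 0 < ε' := lt_of_lt_of_le hε hεε'
  set w := (1 - ε') * u + ε' * v with hw
  have hwS : w ∈ S := hf.1 hu hv (by linarith) (le_of_lt hε'0) (by ring)
  have ht0 : 0 ≤ ε / ε' := le_of_lt (div_pos hε hε'0)
  have ht1 : ε / ε' ≤ 1 := (div_le_one hε'0).2 hεε'
  have hcomb : (1 - ε / ε') * u + (ε / ε') * w = (1 - ε) * u + ε * v := by
    rw [hw]; field_simp; ring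
  have h2 := hf.2 hu hwS (show (0:ℝ) ≤ 1 - ε / ε' by linarith) ht0
    (show (1 - ε / ε') + ε / ε' = 1 by ring)
  simp only [smul_eq_mul] at h2
  rw [hcomb] at h2
  rw [div_le_div_iff₀ hε hε'0]
  have key : (f ((1 - ε) * u + ε * v) - f u) ≤ (ε / ε') * (f w - f u) := by nlinarith
  calc (f ((1 - ε) * u + ε * v) - f u) * ε' ≤ (ε / ε') * (f w - f u) * ε' := by nlinarith
    _ = (f w - f u) * ε := by field_simp

/-- limit of difference quotients along εₙ = (1/2)^n -/
private lemma aux_quot_tendsto {S : Set ℝ} {f : ℝ → ℝ} {f' : ℝ}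
    {u v : ℝ} (hu : u ∈ S) (hvS : ∀ ε : ℝ, 0 < ε → ε ≤ 1 → (1 - ε) * u + ε * v ∈ S)
    (hd : HasDerivWithinAt f f' S u) :
    Tendsto (fun n : ℕ => (f ((1 - (1/2:ℝ)^n) * u + (1/2:ℝ)^n * v) - f u) / (1/2:ℝ)^n)
      atTop (𝓝 (f' * (v - u))) := by
  by_cases hvu : v = u
  · have : (fun n : ℕ => (f ((1 - (1/2:ℝ)^n) * u + (1/2:ℝ)^n * v) - f u) / (1/2:ℝ)^n)
        = fun _ => 0 := by
      funext n; rw [hvu, show (1 - (1/2:ℝ)^n) * u + (1/2:ℝ)^n * u = u by ring]; simp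
    rw [this, hvu]; simpa using tendsto_const_nhds
  · have hslope := hasDerivWithinAt_iff_tendsto_slope.1 hd
    set y : ℕ → ℝ := fun n => (1 - (1/2:ℝ)^n) * u + (1/2:ℝ)^n * v with hy
    have hpow : ∀ n : ℕ, (0:ℝ) < (1/2:ℝ)^n ∧ (1/2:ℝ)^n ≤ 1 := fun n =>
      ⟨pow_pos (by norm_num) n, pow_le_one₀ (by norm_num) (by norm_num)⟩
    have hyu : ∀ n, y n - u = (1/2:ℝ)^n * (v - u) := by
      intro n; simp only [hy]; ring
    have hyn : ∀ n, y n ∈ S \ {u} := by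
      intro n
      refine ⟨hvS _ (hpow n).1 (hpow n).2, ?_⟩
      simp only [mem_singleton_iff]
      intro h
      have h0 : y n - u = 0 := by rw [h]; ring
      rw [hyu n] at h0
      rcases mul_eq_zero.1 h0 with h1 | h1
      · exact absurd h1 (ne_of_gt (hpow n).1)
      · exact hvu (by linarith)
    have hytend : Tendsto y atTop (𝓝[S \ {u}] u) := by
      rw [tendsto_nhdsWithin_iff]
      constructor
      · have h1 : Tendsto (fun n : ℕ => (1/2:ℝ)^n) atTop (𝓝 0) :=
          tendsto_pow_atTop_nhds_zero_of_lt_one (by norm_num) (by norm_num)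
        have h2 := ((h1.const_mul (v - u)).const_add u)
        simp only [mul_zero, add_zero] at h2
        refine h2.congr (fun n => ?_)
        simp only [hy]; ring
      · exact Eventually.of_forall hyn
    have hcomp := (hslope.comp hytend).mul_const (v - u)
    refine Tendsto.congr (fun n => ?_) hcomp
    show slope f u (y n) * (v - u) = _
    rw [slope_def_field, hyu n]
    have hne : (1/2:ℝ)^n ≠ 0 := ne_of_gt (hpow n).1
    have hvune : v - u ≠ 0 := sub_ne_zero.2 hvu
    rw [div_mul_eq_div_div, div_mul_cancel₀ _ hvune]
private lemma aux_deriv_le {S : Set ℝ} {f : ℝ → ℝ} {f' : ℝ} (hf : ConvexOn ℝ S f)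
    {u v : ℝ} (hu : u ∈ S) (hv : v ∈ S) (hd : HasDerivWithinAt f f' S u) :
    f' * (v - u) ≤ f v - f u := by
  have hvS : ∀ ε : ℝ, 0 < ε → ε ≤ 1 → (1 - ε) * u + ε * v ∈ S := fun ε he h1 =>
    hf.1 hu hv (by linarith) he.le (by ring)
  refine le_of_tendsto (aux_quot_tendsto hu hvS hd) (Eventually.of_forall fun n => ?_)
  have h := aux_quot_mono hf hu hv (ε := (1/2:ℝ)^n) (ε' := 1)
    (pow_pos (by norm_num) n) (pow_le_one₀ (by norm_num) (by norm_num)) le_rfl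
  calc (f ((1 - (1/2:ℝ)^n) * u + (1/2:ℝ)^n * v) - f u) / (1/2:ℝ)^n
      ≤ (f ((1-1) * u + 1 * v) - f u) / 1 := h
    _ = f v - f u := by norm_num

private lemma aux_phi_comb {φ : ℝ → ℝ≥0∞} (hconv : ConvexOn ℝ≥0 Set.univ φ)
    {ε : ℝ} (h0 : 0 ≤ ε) (h1 : ε ≤ 1) (a b : ℝ) :
    φ ((1-ε)*a + ε*b) ≤ ENNReal.ofReal (1-ε) * φ a + ENNReal.ofReal ε * φ b := by
  have h2 := hconv.2 (mem_univ a) (mem_univ b) (bot_le (a := (1-ε).toNNReal)) (bot_le (a := ε.toNNReal))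
    (by rw [← Real.toNNReal_add (by linarith) h0]; norm_num)
  simp only [NNReal.smul_def, Real.coe_toNNReal (1-ε) (by linarith), Real.coe_toNNReal ε h0,
    smul_eq_mul, ENNReal.smul_def] at h2
  refine le_trans h2 (le_of_eq ?_)
  rw [ENNReal.ofReal, ENNReal.ofReal]
/-- (Necessity on convex sets.)  Let `φ` be differentiable convex satisfying
the scaling growth condition and let `Ω` be a convex set of finite signed measures.  If
`Qs ∈ Ω` is a φ-projection of `P` on `Ω` with `φ(Qs,P) < ∞`, then for every `Q ∈ Ω` with
`φ(Q,P) < ∞` the function `φ'(q*)·q` is in `L¹(X,P)` and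
`∫ φ'(q*) dQ* ≤ ∫ φ'(q*) dQ`. -/
theorem stmt15 (P : Measure X) [IsProbabilityMeasure P]
    (φ : ℝ → ℝ≥0∞) (φ' : ℝ → ℝ)
    (hconv : ConvexOn ℝ≥0 Set.univ φ)
    (hlsc : LowerSemicontinuous φ)
    (hone : φ 1 = 0)
    (hderiv : ∀ x ∈ {y : ℝ | φ y ≠ ⊤},
      HasDerivWithinAt (fun y => (φ y).toReal) (φ' x) {y : ℝ | φ y ≠ ⊤} x)
    (hgrow : ∃ δ : ℝ, δ ∈ Ioo (0 : ℝ) 1 ∧ ∀ c ∈ Icc (1 - δ) (1 + δ),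
      ∃ c₁ c₂ c₃ : ℝ≥0, ∀ x : ℝ,
        φ (c * x) ≤ (c₁ : ℝ≥0∞) * φ x + (c₂ : ℝ≥0∞) * ENNReal.ofReal |x| + (c₃ : ℝ≥0∞))
    (Ω : Set (SignedMeasure X)) (hΩ : Convex ℝ Ω)
    (Qs : SignedMeasure X) (hQs : Qs ∈ Ω)
    (hfin : divext φ Qs P ≠ ⊤)
    (hproj : ∀ Q ∈ Ω, divext φ Qs P ≤ divext φ Q P) :
    ∀ Q ∈ Ω, divext φ Q P ≠ ⊤ →
      Integrable (fun x => φ' (Qs.rnDeriv P x) * Q.rnDeriv P x) P ∧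
      ∫ x, φ' (Qs.rnDeriv P x) * Qs.rnDeriv P x ∂P ≤
        ∫ x, φ' (Qs.rnDeriv P x) * Q.rnDeriv P x ∂P := by
  
  obtain ⟨δ, hδmem, hgrowth⟩ := hgrow
  obtain ⟨hδ0, hδ1⟩ := hδmem
  intro Q hQ hQfin
  set S : Set ℝ := {y : ℝ | φ y ≠ ⊤} with hSdef
  set f : ℝ → ℝ := fun y => (φ y).toReal with hfdef
  set q' : X → ℝ := Qs.rnDeriv P with hq'def
  set q : X → ℝ := Q.rnDeriv P with hqdef
  have hφm : Measurable φ := hlsc.measurable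
  have hfm : Measurable f := hφm.ennreal_toReal
  have hq'm : Measurable q' := SignedMeasure.measurable_rnDeriv Qs P
  have hqm : Measurable q := SignedMeasure.measurable_rnDeriv Q P
  have hq'i : Integrable q' P := SignedMeasure.integrable_rnDeriv Qs P
  have hqi : Integrable q P := SignedMeasure.integrable_rnDeriv Q P
  have hfconv : ConvexOn ℝ S f := aux_f_convex hconv
  have hSconv : Convex ℝ S := hfconv.1
  have hACs : Qs ≪ᵥ P.toENNRealVectorMeasure := by
    by_contra hna; exact hfin (by rw [divext, if_neg hna])
  have hACq : Q ≪ᵥ P.toENNRealVectorMeasure := by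
    by_contra hna; exact hQfin (by rw [divext, if_neg hna])
  have hA : ∫⁻ x, φ (q' x) ∂P ≠ ⊤ := by
    rw [divext, if_pos hACs, div] at hfin; exact hfin
  have hC : ∫⁻ x, φ (q x) ∂P ≠ ⊤ := by
    rw [divext, if_pos hACq, div] at hQfin; exact hQfin
  have hq'S : ∀ᵐ x ∂P, q' x ∈ S :=
    (ae_lt_top (hφm.comp hq'm) hA).mono fun x hx => ne_of_lt hx
  have hqS : ∀ᵐ x ∂P, q x ∈ S :=
    (ae_lt_top (hφm.comp hqm) hC).mono fun x hx => ne_of_lt hx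
  -- finiteness of the divergence of convex combinations
  have hcombfin : ∀ ε : ℝ, 0 ≤ ε → ε ≤ 1 →
      ∫⁻ x, φ ((1-ε) * q' x + ε * q x) ∂P ≠ ⊤ := by
    intro ε h0 h1
    refine ne_top_of_le_ne_top ?_
      (lintegral_mono fun x => aux_phi_comb hconv h0 h1 (q' x) (q x))
    have mφq' : Measurable fun x => φ (q' x) := hφm.comp hq'm
    have mφq : Measurable fun x => φ (q x) := hφm.comp hqm
    rw [lintegral_add_left (mφq'.const_mul _),
      lintegral_const_mul _ mφq', lintegral_const_mul _ mφq]
    exact ENNReal.add_ne_top.2 ⟨ENNReal.mul_ne_top ENNReal.ofReal_ne_top hA,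
      ENNReal.mul_ne_top ENNReal.ofReal_ne_top hC⟩
  -- the projection inequality, transported to densities
  have hkey : ∀ ε : ℝ, 0 < ε → ε ≤ 1 →
      ∫⁻ x, φ (q' x) ∂P ≤ ∫⁻ x, φ ((1-ε) * q' x + ε * q x) ∂P := by
    intro ε hε0 hε1
    have hQeΩ : (1-ε) • Qs + ε • Q ∈ Ω := hΩ hQs hQ (by linarith) hε0.le (by ring)
    have hACe : ((1-ε) • Qs + ε • Q) ≪ᵥ P.toENNRealVectorMeasure := by
      refine VectorMeasure.AbsolutelyContinuous.add ?_ ?_ <;>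
        refine VectorMeasure.AbsolutelyContinuous.mk fun s hs h0 => ?_
      · rw [VectorMeasure.smul_apply, hACs h0, smul_zero]
      · rw [VectorMeasure.smul_apply, hACq h0, smul_zero]
    have hrn : ∀ᵐ x ∂P,
        φ (((1-ε) • Qs + ε • Q).rnDeriv P x) = φ ((1-ε) * q' x + ε * q x) := by
      filter_upwards [SignedMeasure.rnDeriv_add ((1-ε) • Qs) (ε • Q) P,
        SignedMeasure.rnDeriv_smul Qs P (1-ε), SignedMeasure.rnDeriv_smul Q P ε]
        with x e1 e2 e3
      rw [e1, Pi.add_apply, e2, e3, Pi.smul_apply, Pi.smul_apply, smul_eq_mul, smul_eq_mul]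
    have hpr := hproj _ hQeΩ
    rw [divext, if_pos hACs, divext, if_pos hACe, div, div] at hpr
    exact le_of_le_of_eq hpr (lintegral_congr_ae hrn)
  -- real-valued integrals
  have hfq'i : Integrable (fun x => f (q' x)) P :=
    integrable_toReal_of_lintegral_ne_top (hφm.comp hq'm).aemeasurable hA
  have hfqi : Integrable (fun x => f (q x)) P :=
    integrable_toReal_of_lintegral_ne_top (hφm.comp hqm).aemeasurable hC
  have hIfq' : ∫ x, f (q' x) ∂P = (∫⁻ x, φ (q' x) ∂P).toReal :=
    integral_toReal (hφm.comp hq'm).aemeasurable (ae_lt_top (hφm.comp hq'm) hA)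
  -- the difference quotient sequence
  set g : ℕ → X → ℝ := fun n x =>
    (f ((1 - (1/2:ℝ)^n) * q' x + (1/2:ℝ)^n * q x) - f (q' x)) / (1/2:ℝ)^n with hgdef
  have hee0 : ∀ n : ℕ, (0:ℝ) < (1/2:ℝ)^n := fun n => pow_pos (by norm_num) n
  have hee1 : ∀ n : ℕ, ((1:ℝ)/2)^n ≤ 1 := fun n => pow_le_one₀ (by norm_num) (by norm_num)
  have hgm : ∀ n, Measurable (g n) := fun n =>
    ((hfm.comp ((hq'm.const_mul _).add (hqm.const_mul _))).sub (hfm.comp hq'm)).div_const _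
  have hcombint : ∀ n : ℕ,
      Integrable (fun x => f ((1 - (1/2:ℝ)^n) * q' x + (1/2:ℝ)^n * q x)) P := fun n =>
    integrable_toReal_of_lintegral_ne_top
      (hφm.comp ((hq'm.const_mul _).add (hqm.const_mul _))).aemeasurable
      (hcombfin _ (hee0 n).le (hee1 n))
  have hgint : ∀ n, Integrable (g n) P := fun n => ((hcombint n).sub hfq'i).div_const _
  -- nonnegativity of the integral of the difference quotient
  have hInn : ∀ n, 0 ≤ ∫ x, g n x ∂P := by
    intro n
    have hfe := hcombfin ((1/2:ℝ)^n) (hee0 n).le (hee1 n)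
    have hIcomb : ∫ x, f ((1 - (1/2:ℝ)^n) * q' x + (1/2:ℝ)^n * q x) ∂P
        = (∫⁻ x, φ ((1 - (1/2:ℝ)^n) * q' x + (1/2:ℝ)^n * q x) ∂P).toReal :=
      integral_toReal (hφm.comp ((hq'm.const_mul _).add (hqm.const_mul _))).aemeasurable
        (ae_lt_top (hφm.comp ((hq'm.const_mul _).add (hqm.const_mul _))) hfe)
    have hle := ENNReal.toReal_mono hfe (hkey _ (hee0 n) (hee1 n))
    have hIg : ∫ x, g n x ∂P
        = ((∫ x, f ((1 - (1/2:ℝ)^n) * q' x + (1/2:ℝ)^n * q x) ∂P) - ∫ x, f (q' x) ∂P)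
          / (1/2:ℝ)^n := by
      rw [hgdef, ← integral_sub (hcombint n) hfq'i, ← integral_div]
    rw [hIg]
    apply div_nonneg _ (hee0 n).le
    rw [hIcomb, hIfq']
    linarith
  -- pointwise a.e. properties of the sequence
  set h : X → ℝ := fun x => φ' (q' x) * (q x - q' x) with hhdef
  have haeg : ∀ᵐ x ∂P, (∀ n m : ℕ, n ≤ m → g m x ≤ g n x) ∧
      Tendsto (fun n => g n x) atTop (𝓝 (h x)) ∧ (∀ n, g n x ≤ g 0 x) ∧ h x ≤ g 0 x := by
    filter_upwards [hq'S, hqS] with x hx1 hx2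
    have hmono : ∀ n m : ℕ, n ≤ m → g m x ≤ g n x := by
      intro n m hnm
      exact aux_quot_mono hfconv hx1 hx2 (hee0 m)
        (pow_le_pow_of_le_one (by norm_num) (by norm_num) hnm) (hee1 n)
    have hvS : ∀ ε : ℝ, 0 < ε → ε ≤ 1 → (1-ε) * q' x + ε * q x ∈ S := fun ε a b =>
      hSconv hx1 hx2 (by linarith) a.le (by ring)
    have htd : Tendsto (fun n => g n x) atTop (𝓝 (h x)) :=
      aux_quot_tendsto hx1 hvS (hderiv _ hx1)
    have hle0 : ∀ n, g n x ≤ g 0 x := fun n => hmono 0 n (Nat.zero_le n)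
    exact ⟨hmono, htd, hle0, le_of_tendsto htd (Eventually.of_forall hle0)⟩
  have hhm : AEStronglyMeasurable h P :=
    aestronglyMeasurable_of_tendsto_ae atTop (fun n => (hgm n).aestronglyMeasurable)
      (haeg.mono fun x hx => hx.2.1)
  -- monotone convergence for g 0 - g n
  have hFtend : Tendsto (fun n => ∫⁻ x, ENNReal.ofReal (g 0 x - g n x) ∂P) atTop
      (𝓝 (∫⁻ x, ENNReal.ofReal (g 0 x - h x) ∂P)) := by
    apply lintegral_tendsto_of_tendsto_of_monotone
    · exact fun n => (ENNReal.measurable_ofReal.comp ((hgm 0).sub (hgm n))).aemeasurable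
    · filter_upwards [haeg] with x hx
      intro n m hnm
      exact ENNReal.ofReal_le_ofReal (by linarith [hx.1 n m hnm])
    · filter_upwards [haeg] with x hx
      exact (ENNReal.continuous_ofReal.tendsto _).comp (tendsto_const_nhds.sub hx.2.1)
  have hFval : ∀ n, ∫⁻ x, ENNReal.ofReal (g 0 x - g n x) ∂P
      = ENNReal.ofReal ((∫ x, g 0 x ∂P) - ∫ x, g n x ∂P) := by
    intro n
    rw [← integral_sub (hgint 0) (hgint n)]
    exact (ofReal_integral_eq_lintegral_ofReal ((hgint 0).sub (hgint n))
      (haeg.mono fun x hx => by simp only [Pi.zero_apply, Pi.sub_apply]; linarith [hx.2.2.1 n])).symm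
  have hFbd : ∀ n, ∫⁻ x, ENNReal.ofReal (g 0 x - g n x) ∂P
      ≤ ENNReal.ofReal (∫ x, g 0 x ∂P) := by
    intro n; rw [hFval n]
    exact ENNReal.ofReal_le_ofReal (by linarith [hInn n])
  have hlim_le : ∫⁻ x, ENNReal.ofReal (g 0 x - h x) ∂P ≤ ENNReal.ofReal (∫ x, g 0 x ∂P) :=
    le_of_tendsto hFtend (Eventually.of_forall hFbd)
  have hdiffnn : 0 ≤ᵐ[P] fun x => g 0 x - h x :=
    haeg.mono fun x hx => by simp only [Pi.zero_apply]; linarith [hx.2.2.2]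
  have hdiffint : Integrable (fun x => g 0 x - h x) P := by
    refine ⟨((hgm 0).aestronglyMeasurable).sub hhm, ?_⟩
    rw [hasFiniteIntegral_iff_norm]
    have heq : ∫⁻ x, ENNReal.ofReal ‖(fun x => g 0 x - h x) x‖ ∂P
        = ∫⁻ x, ENNReal.ofReal (g 0 x - h x) ∂P :=
      lintegral_congr_ae (hdiffnn.mono fun x hx => by
        simp only [Pi.zero_apply] at hx
        simp only [Real.norm_of_nonneg hx])
    rw [heq]
    exact lt_of_le_of_lt hlim_le ENNReal.ofReal_lt_top
  have hhint : Integrable h P := by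
    have h2 := (hgint 0).sub hdiffint
    have he : (g 0 - fun x => g 0 x - h x) = h := by
      funext x; simp [Pi.sub_apply]
    rwa [he] at h2
  have hIdiff : ∫ x, (g 0 x - h x) ∂P ≤ ∫ x, g 0 x ∂P := by
    have h1 : ENNReal.ofReal (∫ x, (g 0 x - h x) ∂P)
        = ∫⁻ x, ENNReal.ofReal (g 0 x - h x) ∂P :=
      ofReal_integral_eq_lintegral_ofReal hdiffint hdiffnn
    have h2 : ENNReal.ofReal (∫ x, (g 0 x - h x) ∂P) ≤ ENNReal.ofReal (∫ x, g 0 x ∂P) :=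
      h1 ▸ hlim_le
    exact (ENNReal.ofReal_le_ofReal_iff (hInn 0)).1 h2
  have hIh : 0 ≤ ∫ x, h x ∂P := by
    have heq : ∫ x, h x ∂P = ∫ x, g 0 x ∂P - ∫ x, (g 0 x - h x) ∂P := by
      rw [← integral_sub (hgint 0) hdiffint]
      apply integral_congr_ae
      filter_upwards with x
      ring
    rw [heq]
    linarith
  -- growth condition: integrability of f(c·q') and membership
  have hq'lint : ∫⁻ x, ENNReal.ofReal |q' x| ∂P ≠ ⊤ := by
    have h1 := hq'i.2
    rw [hasFiniteIntegral_iff_norm] at h1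
    simp only [Real.norm_eq_abs] at h1
    exact h1.ne
  have hgrowInt : ∀ (cc : ℝ) (c₁ c₂ c₃ : ℝ≥0),
      (∀ y : ℝ, φ (cc*y) ≤ (c₁ : ℝ≥0∞) * φ y + (c₂ : ℝ≥0∞) * ENNReal.ofReal |y| + (c₃ : ℝ≥0∞)) →
      Integrable (fun x => f (cc * q' x)) P ∧ (∀ᵐ x ∂P, cc * q' x ∈ S) := by
    intro cc c₁ c₂ c₃ hb
    have hlint : ∫⁻ x, φ (cc * q' x) ∂P ≠ ⊤ := by
      refine ne_top_of_le_ne_top ?_ (lintegral_mono fun x => hb (q' x))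
      have mφq' : Measurable fun x => φ (q' x) := hφm.comp hq'm
      have mabs : Measurable fun x => ENNReal.ofReal |q' x| :=
        ENNReal.measurable_ofReal.comp hq'm.abs
      rw [lintegral_add_right _ measurable_const,
        lintegral_add_left (mφq'.const_mul _),
        lintegral_const_mul _ mφq',
        lintegral_const_mul _ mabs,
        lintegral_const]
      refine ENNReal.add_ne_top.2 ⟨ENNReal.add_ne_top.2
        ⟨ENNReal.mul_ne_top ENNReal.coe_ne_top hA,
         ENNReal.mul_ne_top ENNReal.coe_ne_top hq'lint⟩, ?_⟩
      exact ENNReal.mul_ne_top ENNReal.coe_ne_top (measure_ne_top P univ)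
    refine ⟨integrable_toReal_of_lintegral_ne_top
      (hφm.comp (hq'm.const_mul cc)).aemeasurable hlint, ?_⟩
    exact (ae_lt_top (hφm.comp (hq'm.const_mul cc)) hlint).mono fun x hx => ne_of_lt hx
  obtain ⟨c₁, c₂, c₃, hgp⟩ := hgrowth (1+δ) ⟨by linarith, le_refl _⟩
  obtain ⟨d₁, d₂, d₃, hgmm⟩ := hgrowth (1-δ) ⟨le_refl _, by linarith⟩
  have hgpI := hgrowInt (1+δ) c₁ c₂ c₃ hgp
  have hgmI := hgrowInt (1-δ) d₁ d₂ d₃ hgmm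
  -- measurability of k via difference quotients
  set k : X → ℝ := fun x => φ' (q' x) * q' x with hkdef
  have hktend : ∀ᵐ x ∂P, Tendsto (fun n : ℕ =>
      (f ((1 - (1/2:ℝ)^n) * q' x + (1/2:ℝ)^n * ((1+δ) * q' x)) - f (q' x)) / (1/2:ℝ)^n)
      atTop (𝓝 (φ' (q' x) * (δ * q' x))) := by
    filter_upwards [hq'S, hgpI.2] with x hx1 hx2
    have hvS : ∀ ε : ℝ, 0 < ε → ε ≤ 1 → (1-ε) * q' x + ε * ((1+δ) * q' x) ∈ S :=
      fun ε a b => hSconv hx1 hx2 (by linarith) a.le (by ring)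
    have htd := aux_quot_tendsto hx1 hvS (hderiv _ hx1)
    have heq : (1+δ) * q' x - q' x = δ * q' x := by ring
    rwa [heq] at htd
  have hkm : AEStronglyMeasurable k P := by
    have h1 : AEStronglyMeasurable (fun x => φ' (q' x) * (δ * q' x)) P :=
      aestronglyMeasurable_of_tendsto_ae atTop (fun n =>
        (((hfm.comp ((hq'm.const_mul _).add ((hq'm.const_mul _).const_mul _))).sub
          (hfm.comp hq'm)).div_const _).aestronglyMeasurable) hktend
    have h2 : (fun x => δ⁻¹ * (φ' (q' x) * (δ * q' x))) = k := by
      funext x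
      rw [hkdef]
      field_simp
    rw [← h2]
    exact h1.const_mul δ⁻¹
  -- the bound on k
  have hkbd : ∀ᵐ x ∂P, ‖k x‖ ≤ δ⁻¹ * ((fun x => f ((1+δ) * q' x) + f ((1-δ) * q' x)) x) := by
    filter_upwards [hq'S, hgpI.2, hgmI.2] with x hu hp hm
    have h1 := aux_deriv_le hfconv hu hp (hderiv _ hu)
    have h2 := aux_deriv_le hfconv hu hm (hderiv _ hu)
    have e1 : (1+δ) * q' x - q' x = δ * q' x := by ring
    have e2 : (1-δ) * q' x - q' x = -(δ * q' x) := by ring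
    rw [e1] at h1
    rw [e2, mul_neg] at h2
    have hf0 : 0 ≤ f (q' x) := ENNReal.toReal_nonneg
    have hfp : 0 ≤ f ((1+δ) * q' x) := ENNReal.toReal_nonneg
    have hfm' : 0 ≤ f ((1-δ) * q' x) := ENNReal.toReal_nonneg
    have habs : |φ' (q' x) * (δ * q' x)| ≤ f ((1+δ) * q' x) + f ((1-δ) * q' x) :=
      abs_le.2 ⟨by linarith, by linarith⟩
    have e3 : φ' (q' x) * (δ * q' x) = δ * (φ' (q' x) * q' x) := by ring
    rw [e3, abs_mul, abs_of_pos hδ0] at habs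
    rw [Real.norm_eq_abs]
    calc |k x| = δ⁻¹ * (δ * |φ' (q' x) * q' x|) := by
          rw [hkdef]; field_simp
      _ ≤ δ⁻¹ * (f ((1+δ) * q' x) + f ((1-δ) * q' x)) :=
          mul_le_mul_of_nonneg_left habs (by positivity)
  have hkint : Integrable k P :=
    Integrable.mono' ((hgpI.1.add hgmI.1).const_mul δ⁻¹) hkm hkbd
  -- conclusion
  have htarget_eq : (fun x => φ' (q' x) * q x) = fun x => h x + k x := by
    funext x
    rw [hhdef, hkdef]
    ring
  have hint : Integrable (fun x => φ' (q' x) * q x) P := by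
    rw [htarget_eq]; exact hhint.add hkint
  refine ⟨hint, ?_⟩
  have hsplit : ∫ x, φ' (q' x) * q x ∂P = ∫ x, h x ∂P + ∫ x, k x ∂P := by
    rw [htarget_eq]; exact integral_add hhint hkint
  calc ∫ x, φ' (q' x) * q' x ∂P = ∫ x, k x ∂P := rfl
    _ ≤ ∫ x, h x ∂P + ∫ x, k x ∂P := by linarith
    _ = ∫ x, φ' (q' x) * q x ∂P := hsplit.symm
end
end

section
/- Let φ be differentiable, strictly convex with domain endpoints a_φ = 0 and φ'(0) = −∞, satisfying the scaling growth condition. Let Ω be a convex set of finite signed measures containing some Q₀ with φ(Q₀,P) < ∞ and dQ₀/dP > 0 P-a.e. Then any φ-projection Q* of P on Ω satisfies dQ*/dP > 0 P-a.e., i.e., Q* has the same support as P. -/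
open MeasureTheory Filter Topology Set
open scoped ENNReal NNReal Classical

noncomputable section

variable {X : Type*} [MeasurableSpace X]

lemma hconv2 {φ : ℝ → ℝ≥0∞} (hconv : ConvexOn ℝ≥0 Set.univ φ)
    (t u v : ℝ) (ht0 : 0 ≤ t) (ht1 : t ≤ 1) :
    φ ((1-t)*u + t*v) ≤ ENNReal.ofReal (1-t) * φ u + ENNReal.ofReal t * φ v := by
  have h1 : (1-t).toNNReal + t.toNNReal = 1 := by
    rw [← Real.toNNReal_add (by linarith) ht0]
    norm_num
  have h2 := hconv.2 (mem_univ u) (mem_univ v) (zero_le (a := (1-t).toNNReal)) (zero_le (a := t.toNNReal)) h1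
  simpa [NNReal.smul_def, ENNReal.smul_def, Real.coe_toNNReal _ ht0,
    Real.coe_toNNReal _ (by linarith : (0:ℝ) ≤ 1 - t), ENNReal.ofReal] using h2

lemma chord_key {φ : ℝ → ℝ≥0∞} {φ' : ℝ → ℝ} (hconv : ConvexOn ℝ≥0 Set.univ φ)
    (hone : φ 1 = 0) (hK : φ 0 ≠ ⊤)
    (hder : ∀ x ∈ Ioo (0:ℝ) 1, HasDerivAt (fun y => (φ y).toReal) (φ' x) x)
    {M s₀ : ℝ} (hs₀1 : s₀ ≤ 1/2)
    (hsl : ∀ x ∈ Ioc (0:ℝ) s₀, φ' x ≤ -M) :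
    ∀ s ∈ Ioc (0:ℝ) s₀, (φ s).toReal ≤ (φ 0).toReal - M * s := by
  set f := fun y => (φ y).toReal with hf
  have hfu : ∀ u : ℝ, 0 ≤ u → u ≤ 1 → f u ≤ (1-u) * f 0 := by
    intro u h0 h1'
    have h := hconv2 hconv u 0 1 h0 h1'
    have he : (1-u)*0 + u*1 = u := by ring
    rw [he, hone, mul_zero, add_zero] at h
    calc f u ≤ ((ENNReal.ofReal (1-u)) * φ 0).toReal :=
          ENNReal.toReal_mono (ENNReal.mul_ne_top ENNReal.ofReal_ne_top hK) h
      _ = (1-u) * f 0 := by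
          rw [ENNReal.toReal_mul, ENNReal.toReal_ofReal (by linarith)]
  intro s hs
  have claim : ∀ u ∈ Ioo (0:ℝ) s, f s ≤ (1-u)*f 0 - M*(s-u) := by
    intro u hu
    have hus : u < s := hu.2
    have hmem : ∀ x, u ≤ x → x ≤ s → x ∈ Ioo (0:ℝ) 1 :=
      fun x h1 h2 => ⟨lt_of_lt_of_le hu.1 h1, by
        have := hs.2; nlinarith⟩
    have hc : ContinuousOn f (Icc u s) := fun x hx =>
      ((hder x (hmem x hx.1 hx.2)).continuousAt).continuousWithinAt
    obtain ⟨ξ, hξ, hξeq⟩ := exists_hasDerivAt_eq_slope f φ' hus hc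
      (fun x hx => hder x (hmem x hx.1.le hx.2.le))
    have hM : φ' ξ ≤ -M := hsl ξ ⟨lt_trans hu.1 hξ.1, le_trans hξ.2.le hs.2⟩
    rw [hξeq] at hM
    have h2 : f s - f u ≤ -M * (s - u) := by
      have := (div_le_iff₀ (by linarith : (0:ℝ) < s - u)).mp hM
      linarith
    have h3 := hfu u hu.1.le (by nlinarith [hs.2])
    linarith
  have htend : Tendsto (fun u : ℝ => (1-u)*f 0 - M*(s-u)) (𝓝[>] (0:ℝ))
      (𝓝 ((1-0)*f 0 - M*(s-0))) := by
    apply Tendsto.mono_left _ nhdsWithin_le_nhds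
    exact (Continuous.tendsto (by continuity) 0)
  have hev : ∀ᶠ u in 𝓝[>] (0:ℝ), f s ≤ (1-u)*f 0 - M*(s-u) :=
    eventually_of_mem (Ioo_mem_nhdsGT_of_mem ⟨le_refl 0, hs.1⟩) claim
  have := ge_of_tendsto htend hev
  simpa using this

/-- Let `φ` be differentiable, strictly convex with domain left endpoint
`a_φ = 0` and `φ'(0) = −∞` (i.e. `φ'(x) → −∞` as `x ↓ 0`), satisfying the scaling growth
condition.  Let `Ω` be a convex set of finite signed measures containing some `Q₀` with
`φ(Q₀,P) < ∞` and `dQ₀/dP > 0` `P`-a.e.  Then any φ-projection `Qs` of `P` on `Ω` satisfies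
`dQs/dP > 0` `P`-a.e., i.e. `Qs` has the same support as `P`. -/
theorem stmt16 (P : Measure X) [IsProbabilityMeasure P]
    (φ : ℝ → ℝ≥0∞) (φ' : ℝ → ℝ)
    (hconv : ConvexOn ℝ≥0 Set.univ φ)
    (hlsc : LowerSemicontinuous φ)
    (hone : φ 1 = 0)
    (hdom : {y : ℝ | φ y ≠ ⊤} ⊆ Ici (0 : ℝ))
    (hinf : sInf {y : ℝ | φ y ≠ ⊤} = 0)
    (hderiv : ∀ x ∈ interior {y : ℝ | φ y ≠ ⊤},
      HasDerivAt (fun y => (φ y).toReal) (φ' x) x)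
    (hstrict : StrictConvexOn ℝ (interior {y : ℝ | φ y ≠ ⊤}) (fun y => (φ y).toReal))
    (hlim : Tendsto φ' (𝓝[>] (0 : ℝ)) atBot)
    (hgrow : ∃ δ : ℝ, δ ∈ Ioo (0 : ℝ) 1 ∧ ∀ c ∈ Icc (1 - δ) (1 + δ),
      ∃ c₁ c₂ c₃ : ℝ≥0, ∀ x : ℝ,
        φ (c * x) ≤ (c₁ : ℝ≥0∞) * φ x + (c₂ : ℝ≥0∞) * ENNReal.ofReal |x| + (c₃ : ℝ≥0∞))
    (Ω : Set (SignedMeasure X)) (hΩ : Convex ℝ Ω)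
    (Q₀ : SignedMeasure X) (hQ₀ : Q₀ ∈ Ω)
    (hQ₀fin : divext φ Q₀ P ≠ ⊤)
    (hQ₀pos : ∀ᵐ x ∂P, 0 < Q₀.rnDeriv P x)
    (Qs : SignedMeasure X) (hQs : Qs ∈ Ω)
    (hproj : ∀ Q ∈ Ω, divext φ Qs P ≤ divext φ Q P) :
    ∀ᵐ x ∂P, 0 < Qs.rnDeriv P x := by
  by_contra hcon
  set q := Qs.rnDeriv P with hqdef
  set q0 := Q₀.rnDeriv P with hq0def
  have hqm : Measurable q := SignedMeasure.measurable_rnDeriv Qs P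
  have hq0m : Measurable q0 := SignedMeasure.measurable_rnDeriv Q₀ P
  have hφm : Measurable φ := hlsc.measurable
  -- absolute continuity and finiteness
  have hQ₀ac : Q₀ ≪ᵥ P.toENNRealVectorMeasure := by
    by_contra h
    rw [divext, if_neg h] at hQ₀fin; exact hQ₀fin rfl
  have h1div : div φ Q₀ P ≠ ⊤ := by rwa [divext, if_pos hQ₀ac] at hQ₀fin
  have hle0 := hproj Q₀ hQ₀
  have h0top : divext φ Qs P ≠ ⊤ := fun h => hQ₀fin (top_le_iff.mp (h ▸ hle0))
  have hQsac : Qs ≪ᵥ P.toENNRealVectorMeasure := by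
    by_contra h
    exact h0top (by rw [divext, if_neg h])
  have hdiv0 : div φ Qs P ≠ ⊤ := by rwa [divext, if_pos hQsac] at h0top
  -- a.e. nonneg
  have hfin : ∀ᵐ x ∂P, φ (q x) ≠ ⊤ := by
    have := ae_lt_top (hφm.comp hqm) hdiv0
    filter_upwards [this] with x hx using hx.ne
  have hqnn : ∀ᵐ x ∂P, 0 ≤ q x := by
    filter_upwards [hfin] with x hx using hdom hx
  -- zero set has positive measure
  have hA : P {x | q x = 0} ≠ 0 := by
    intro h
    apply hcon
    have hne : ∀ᵐ x ∂P, ¬ q x = 0 := ae_iff.2 (by simpa using h)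
    filter_upwards [hqnn, hne] with x h1 h2 using lt_of_le_of_ne h1 (Ne.symm h2)
  have hAm : MeasurableSet {x | q x = 0} := hqm (measurableSet_singleton 0)
  -- φ 0 finite
  have hK : φ 0 ≠ ⊤ := by
    intro hKtop
    apply hdiv0
    rw [div]
    refine top_le_iff.mp ?_
    calc (⊤ : ℝ≥0∞) = ⊤ * P {x | q x = 0} := (ENNReal.top_mul hA).symm
      _ = ∫⁻ x in {x | q x = 0}, ⊤ ∂P := (setLIntegral_const _ _).symm
      _ = ∫⁻ x in {x | q x = 0}, φ (q x) ∂P := by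
          refine (setLIntegral_congr_fun hAm (fun x hx => ?_)).symm
          rw [show q x = 0 from hx, hKtop]
      _ ≤ ∫⁻ x, φ (q x) ∂P := setLIntegral_le_lintegral _ _
  -- good set B
  set B : ℕ → Set X := fun N => {x | q x = 0 ∧ (N:ℝ)⁻¹ ≤ q0 x ∧ q0 x ≤ N} with hBdef
  have hBm : ∀ N, MeasurableSet (B N) := by
    intro N
    exact hAm.inter ((measurableSet_le measurable_const hq0m).inter
      (measurableSet_le hq0m measurable_const))
  have hex : ∃ N : ℕ, P (B N) ≠ 0 := by
    by_contra h
    push_neg at h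
    apply hA
    refine measure_mono_null ?_
      (measure_union_null (measure_iUnion_null h) (ae_iff.mp hQ₀pos))
    intro x hx
    by_cases h0 : 0 < q0 x
    · left
      obtain ⟨N, hN⟩ := exists_nat_ge (max (q0 x) (q0 x)⁻¹)
      refine mem_iUnion.2 ⟨N, hx, ?_, le_trans (le_max_left _ _) hN⟩
      have h1 : (q0 x)⁻¹ ≤ (N:ℝ) := le_trans (le_max_right _ _) hN
      have hNpos : (0:ℝ) < N := lt_of_lt_of_le (inv_pos.mpr h0) h1
      rw [inv_le_comm₀ hNpos h0]
      exact h1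
    · right; exact h0
  obtain ⟨N, hBN⟩ := hex
  have hNpos : 0 < N := by
    rcases Nat.eq_zero_or_pos N with h | h
    · exfalso
      apply hBN
      subst h
      refine measure_mono_null (fun x hx => not_lt.2 ?_) (ae_iff.mp hQ₀pos)
      simpa using hx.2.2
    · exact h
  have hNr : (0:ℝ) < N := by exact_mod_cast hNpos
  set Bs := B N with hBsdef
  set pB := P Bs with hpBdef
  have hpB0 : pB ≠ 0 := hBN
  have hpBtop : pB ≠ ⊤ := measure_ne_top P Bs
  have hpBr : 0 < pB.toReal := ENNReal.toReal_pos hpB0 hpBtop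
  set C := ∫⁻ x in Bsᶜ, φ (q x) ∂P with hCdef
  set D := ∫⁻ x in Bsᶜ, φ (q0 x) ∂P with hDdef
  have hCtop : C ≠ ⊤ := ne_top_of_le_ne_top hdiv0 (setLIntegral_le_lintegral _ _)
  have hDtop : D ≠ ⊤ := ne_top_of_le_ne_top h1div (setLIntegral_le_lintegral _ _)
  -- decomposition of div φ Qs P
  have hsplit : div φ Qs P = φ 0 * pB + C := by
    rw [div, ← lintegral_add_compl (fun x => φ (q x)) (hBm N)]
    congr 1
    rw [show ∫⁻ x in Bs, φ (q x) ∂P = ∫⁻ _x in Bs, φ 0 ∂P from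
      setLIntegral_congr_fun (hBm N) (fun x hx => by rw [hx.1]),
      setLIntegral_const]
  -- constants
  set f0 := (φ 0).toReal with hf0def
  set M := (N:ℝ) * ((D.toReal + 1) / pB.toReal) with hMdef
  have hMpos : 0 < M := by positivity
  -- pick s₀
  have hev : {x | φ' x ≤ -M} ∈ 𝓝[>] (0:ℝ) := hlim.eventually (eventually_le_atBot (-M))
  obtain ⟨u, hu0, husub⟩ := mem_nhdsGT_iff_exists_Ioc_subset.1 hev
  set s₀ := min u (1/2) with hs₀def
  have hs₀pos : 0 < s₀ := lt_min hu0 (by norm_num)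
  have hs₀half : s₀ ≤ 1/2 := min_le_right _ _
  have hsl : ∀ x ∈ Ioc (0:ℝ) s₀, φ' x ≤ -M := fun x hx =>
    husub ⟨hx.1, le_trans hx.2 (min_le_left _ _)⟩
  -- domain facts
  have hIcc : Icc (0:ℝ) 1 ⊆ {y | φ y ≠ ⊤} := by
    intro y hy
    have h := hconv2 hconv y 0 1 hy.1 hy.2
    rw [show (1-y)*0 + y*1 = y by ring, hone, mul_zero, add_zero] at h
    exact ne_top_of_le_ne_top (ENNReal.mul_ne_top ENNReal.ofReal_ne_top hK) h
  have hsubint : Ioo (0:ℝ) 1 ⊆ interior {y | φ y ≠ ⊤} := by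
    rw [show Ioo (0:ℝ) 1 = interior (Icc 0 1) from interior_Icc.symm]
    exact interior_mono hIcc
  have hder : ∀ x ∈ Ioo (0:ℝ) 1, HasDerivAt (fun y => (φ y).toReal) (φ' x) x :=
    fun x hx => hderiv x (hsubint hx)
  have key := chord_key hconv hone hK hder hs₀half hsl
  -- pick t
  set t := min (s₀ / N) (1/2) with htdef
  have ht0 : 0 < t := lt_min (by positivity) (by norm_num)
  have ht1 : t ≤ 1/2 := min_le_right _ _
  have htN : t ≤ s₀ / N := min_le_left _ _
  -- combined measure
  set Qt := (1-t) • Qs + t • Q₀ with hQtdef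
  have hQtΩ : Qt ∈ Ω := hΩ hQs hQ₀ (by linarith) ht0.le (by ring)
  have hQtac : Qt ≪ᵥ P.toENNRealVectorMeasure :=
    VectorMeasure.AbsolutelyContinuous.add (hQsac.smul) (hQ₀ac.smul)
  have hrn : Qt.rnDeriv P =ᵐ[P] fun x => (1-t) * q x + t * q0 x := by
    have h1 := SignedMeasure.rnDeriv_add ((1-t) • Qs) (t • Q₀) P
    have h2 := SignedMeasure.rnDeriv_smul Qs P (1-t)
    have h3 := SignedMeasure.rnDeriv_smul Q₀ P t
    filter_upwards [h1, h2, h3] with x hx1 hx2 hx3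
    rw [hx1]
    simp only [Pi.add_apply, hx2, hx3, Pi.smul_apply, smul_eq_mul]
    rfl
  have hdivt : div φ Qt P = ∫⁻ x, φ ((1-t) * q x + t * q0 x) ∂P := by
    rw [div]
    refine lintegral_congr_ae ?_
    filter_upwards [hrn] with x hx
    rw [hx]
  -- the main strict inequality
  have hgm : Measurable fun x => φ ((1-t) * q x + t * q0 x) :=
    hφm.comp ((hqm.const_mul _).add (hq0m.const_mul _))
  have hbound1 : ∫⁻ x in Bs, φ ((1-t) * q x + t * q0 x) ∂P ≤
      ENNReal.ofReal (f0 - M*(t/N)) * pB := by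
    calc ∫⁻ x in Bs, φ ((1-t) * q x + t * q0 x) ∂P
        ≤ ∫⁻ _x in Bs, ENNReal.ofReal (f0 - M*(t/N)) ∂P := by
          refine setLIntegral_mono measurable_const (fun x hx => ?_)
          obtain ⟨hq0x, hlb, hub⟩ := hx
          have hq0pos : (0:ℝ) < q0 x := lt_of_lt_of_le (inv_pos.mpr hNr) hlb
          have hs1 : 0 < t * q0 x := mul_pos ht0 hq0pos
          have hs2 : t * q0 x ≤ s₀ := by
            calc t * q0 x ≤ (s₀ / N) * N := by
                  apply mul_le_mul htN hub hq0pos.le (by positivity)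
              _ = s₀ := div_mul_cancel₀ _ hNr.ne'
          have hkey := key (t * q0 x) ⟨hs1, hs2⟩
          have harg : (1-t) * q x + t * q0 x = t * q0 x := by rw [hq0x]; ring
          rw [harg, show φ (t * q0 x) = ENNReal.ofReal ((φ (t * q0 x)).toReal) from
            (ENNReal.ofReal_toReal (hIcc ⟨hs1.le, by linarith⟩)).symm]
          apply ENNReal.ofReal_le_ofReal
          have : M * (t/N) ≤ M * (t * q0 x) := by
            apply mul_le_mul_of_nonneg_left _ hMpos.le
            rw [div_eq_mul_inv]
            exact mul_le_mul_of_nonneg_left hlb ht0.le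
          linarith
      _ = ENNReal.ofReal (f0 - M*(t/N)) * pB := setLIntegral_const _ _
  have hbound2 : ∫⁻ x in Bsᶜ, φ ((1-t) * q x + t * q0 x) ∂P ≤ C + ENNReal.ofReal t * D := by
    calc ∫⁻ x in Bsᶜ, φ ((1-t) * q x + t * q0 x) ∂P
        ≤ ∫⁻ x in Bsᶜ, (ENNReal.ofReal (1-t) * φ (q x) + ENNReal.ofReal t * φ (q0 x)) ∂P := by
          refine setLIntegral_mono (((hφm.comp hqm).const_mul _).add
            ((hφm.comp hq0m).const_mul _)) (fun x _ => ?_)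
          exact hconv2 hconv t (q x) (q0 x) ht0.le (by linarith)
      _ = ENNReal.ofReal (1-t) * C + ENNReal.ofReal t * D := by
          have hmq : Measurable fun x => φ (q x) := hφm.comp hqm
          have hmq0 : Measurable fun x => φ (q0 x) := hφm.comp hq0m
          rw [lintegral_add_left (hmq.const_mul _),
            lintegral_const_mul _ hmq, lintegral_const_mul _ hmq0]
      _ ≤ C + ENNReal.ofReal t * D := by
          gcongr
          calc ENNReal.ofReal (1-t) * C ≤ 1 * C := by
                gcongr
                exact ENNReal.ofReal_le_one.2 (by linarith)
            _ = C := one_mul C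
  -- core strict inequality
  set r := M * (t/N) with hrdef
  have hr0 : 0 ≤ r := by positivity
  have hf0r : 0 ≤ f0 - r := by
    have h1 : (0:ℝ) < t/N := by positivity
    have h2 : t/N ≤ s₀ := by
      have ha : t/N ≤ t := div_le_self ht0.le (by exact_mod_cast hNpos)
      have hb : t ≤ s₀ := le_trans htN (by
        apply div_le_self hs₀pos.le
        exact_mod_cast hNpos)
      linarith
    have hkey := key (t/N) ⟨h1, h2⟩
    have := ENNReal.toReal_nonneg (a := φ (t/N))
    linarith
  have hcore : ENNReal.ofReal t * D < ENNReal.ofReal r * pB := by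
    have hrt : r = t * (M/N) := by rw [hrdef, hMdef]; ring
    rw [hrt, ENNReal.ofReal_mul ht0.le, mul_assoc]
    refine ENNReal.mul_lt_mul_right (by simpa using ht0) ENNReal.ofReal_ne_top ?_
    have hMN : M / N = (D.toReal + 1) / pB.toReal := by
      rw [hMdef]; field_simp
    have hEtop : ENNReal.ofReal (M/N) * pB ≠ ⊤ :=
      ENNReal.mul_ne_top ENNReal.ofReal_ne_top hpBtop
    refine (ENNReal.toReal_lt_toReal hDtop hEtop).1 ?_
    rw [ENNReal.toReal_mul, ENNReal.toReal_ofReal (by positivity), hMN,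
      div_mul_cancel₀ _ hpBr.ne']
    linarith
  -- assemble the strict inequality
  have hlt : div φ Qt P < div φ Qs P := by
    rw [hdivt, ← lintegral_add_compl (fun x => φ ((1-t) * q x + t * q0 x)) (hBm N), hsplit]
    have hφ0 : φ 0 = ENNReal.ofReal (f0 - r) + ENNReal.ofReal r := by
      rw [← ENNReal.ofReal_add hf0r hr0, show f0 - r + r = f0 by ring, hf0def,
        ENNReal.ofReal_toReal hK]
    calc (∫⁻ x in Bs, φ ((1-t) * q x + t * q0 x) ∂P)
          + ∫⁻ x in Bsᶜ, φ ((1-t) * q x + t * q0 x) ∂P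
        ≤ ENNReal.ofReal (f0 - r) * pB + (C + ENNReal.ofReal t * D) :=
          add_le_add hbound1 hbound2
      _ = (ENNReal.ofReal (f0 - r) * pB + C) + ENNReal.ofReal t * D := by ring
      _ < (ENNReal.ofReal (f0 - r) * pB + C) + ENNReal.ofReal r * pB := by
          refine ENNReal.add_lt_add_left ?_ hcore
          exact ENNReal.add_ne_top.2 ⟨ENNReal.mul_ne_top ENNReal.ofReal_ne_top hpBtop, hCtop⟩
      _ = φ 0 * pB + C := by rw [hφ0]; ring
  have hfinal := hproj Qt hQtΩ
  rw [divext, if_pos hQsac, divext, if_pos hQtac] at hfinal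
  exact absurd hfinal (not_le.2 hlt)
end
end

section
/- (Finite linear constraints, sufficiency.) Let g₁,…,g_l be measurable functions, S = { Q ≪ P finite signed measure : Q(X)=1, ∫ g_i dQ = 0 for i=1,…,l }, and φ differentiable convex. Let Q* ∈ S with φ(Q*,P) < ∞. If there exist constants c₀,…,c_l ∈ ℝ with φ'(dQ*/dP)(x) = c₀ + Σ_{i=1}^l c_i g_i(x) P-a.e., then Q* is a φ-projection of P on S: φ(Q*,P) ≤ φ(Q,P) for all Q ∈ S with the integrability φ'(q*)q ∈ L¹(P). -/
open MeasureTheory Filter Topology Set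
open scoped ENNReal NNReal Classical

noncomputable section

variable {X : Type*} [MeasurableSpace X]

/-- The set `S` of signed measures `Q ≪ P` with total mass one, integrating the functions
`g i` with `∫ g i dQ = 0`. -/
def linconSet (P : Measure X) {l : ℕ} (g : Fin l → X → ℝ) : Set (SignedMeasure X) :=
  {Q : SignedMeasure X | Q ≪ᵥ P.toENNRealVectorMeasure ∧ Q Set.univ = 1 ∧
    ∀ i, Integrable (g i) Q.totalVariation ∧ sint Q (g i) = 0}


lemma aux_grad_ineq (φ : ℝ → ℝ≥0∞) (φ' : ℝ → ℝ) (hconv : ConvexOn ℝ≥0 Set.univ φ)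
    (hderiv : ∀ x ∈ {y : ℝ | φ y ≠ ⊤},
      HasDerivWithinAt (fun y => (φ y).toReal) (φ' x) {y : ℝ | φ y ≠ ⊤} x)
    {a b : ℝ} (ha : φ a ≠ ⊤) (hb : φ b ≠ ⊤) :
    (φ a).toReal + φ' a * (b - a) ≤ (φ b).toReal := by
  have hc := aux_convexOn_toReal φ hconv
  rcases lt_trichotomy a b with h | h | h
  · have hs := hc.le_slope_of_hasDerivWithinAt ha hb h (hderiv a ha)
    rw [slope_def_field] at hs
    have hba : (0:ℝ) < b - a := by linarith
    nlinarith [(le_div_iff₀ hba).mp hs]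
  · simp [h]
  · have hs := hc.slope_le_of_hasDerivWithinAt hb ha h (hderiv a ha)
    rw [slope_def_field] at hs
    have hab : (0:ℝ) < a - b := by linarith
    nlinarith [(div_le_iff₀ hab).mp hs]

lemma aux_int_mul (P : Measure X) [IsFiniteMeasure P] (Q : SignedMeasure X)
    (hQ : Q.totalVariation ≪ P) (f : X → ℝ) (hf : Integrable f Q.totalVariation) :
    Integrable (fun x => Q.rnDeriv P x * f x) P ∧
      sint Q f = ∫ x, Q.rnDeriv P x * f x ∂P := by
  obtain ⟨hpos, hneg⟩ := (SignedMeasure.totalVariation_absolutelyContinuous_iff Q P).mp hQ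
  have hfp : Integrable f Q.toJordanDecomposition.posPart :=
    hf.mono_measure (Measure.le_add_right le_rfl)
  have hfn : Integrable f Q.toJordanDecomposition.negPart :=
    hf.mono_measure (Measure.le_add_left le_rfl)
  have i1 : Integrable (fun x => (Q.toJordanDecomposition.posPart.rnDeriv P x).toReal • f x) P :=
    (MeasureTheory.integrable_rnDeriv_smul_iff hpos).mpr hfp
  have i2 : Integrable (fun x => (Q.toJordanDecomposition.negPart.rnDeriv P x).toReal • f x) P :=
    (MeasureTheory.integrable_rnDeriv_smul_iff hneg).mpr hfn
  have heq : (fun x => Q.rnDeriv P x * f x) =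
      fun x => (Q.toJordanDecomposition.posPart.rnDeriv P x).toReal • f x -
        (Q.toJordanDecomposition.negPart.rnDeriv P x).toReal • f x := by
    funext x
    simp [SignedMeasure.rnDeriv, smul_eq_mul, sub_mul]
  refine ⟨heq ▸ (i1.sub i2), ?_⟩
  rw [sint, ← MeasureTheory.integral_rnDeriv_smul hpos,
    ← MeasureTheory.integral_rnDeriv_smul hneg, ← integral_sub i1 i2]
  exact (integral_congr_ae (Filter.EventuallyEq.of_eq heq)).symm

lemma aux_mass (P : Measure X) [IsFiniteMeasure P] (Q : SignedMeasure X)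
    (hac : Q ≪ᵥ P.toENNRealVectorMeasure) :
    Q Set.univ = ∫ x, Q.rnDeriv P x ∂P := by
  conv_lhs => rw [← MeasureTheory.SignedMeasure.withDensityᵥ_rnDeriv_eq Q P hac]
  rw [withDensityᵥ_apply (SignedMeasure.integrable_rnDeriv Q P) MeasurableSet.univ,
    setIntegral_univ]

lemma aux_tv_ac (P : Measure X) (Q : SignedMeasure X)
    (hac : Q ≪ᵥ P.toENNRealVectorMeasure) : Q.totalVariation ≪ P := by
  have h := (SignedMeasure.absolutelyContinuous_ennreal_iff Q _).mp hac
  rwa [VectorMeasure.ennrealToMeasure_toENNRealVectorMeasure] at h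

/-- (Finite linear constraints, sufficiency.)  Let `g₁,…,g_l` be measurable,
`S = {Q ≪ P : Q(X)=1, ∫ g_i dQ = 0}`, `φ` differentiable convex, and `Qs ∈ S` with
`φ(Qs,P) < ∞`.  If `φ'(dQs/dP) = c₀ + Σ c_i g_i` `P`-a.e. for some constants, then `Qs` is a
φ-projection of `P` on `S`: `φ(Qs,P) ≤ φ(Q,P)` for all `Q ∈ S` satisfying the integrability
condition `φ'(q*)·q ∈ L¹(P)`. -/
theorem stmt17 (P : Measure X) [IsProbabilityMeasure P]
    (φ : ℝ → ℝ≥0∞) (φ' : ℝ → ℝ)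
    (hconv : ConvexOn ℝ≥0 Set.univ φ)
    (hlsc : LowerSemicontinuous φ)
    (hone : φ 1 = 0)
    (hderiv : ∀ x ∈ {y : ℝ | φ y ≠ ⊤},
      HasDerivWithinAt (fun y => (φ y).toReal) (φ' x) {y : ℝ | φ y ≠ ⊤} x)
    (l : ℕ) (g : Fin l → X → ℝ) (hg : ∀ i, Measurable (g i))
    (Qs : SignedMeasure X) (hQs : Qs ∈ linconSet P g)
    (hfin : div φ Qs P ≠ ⊤)
    (hlin : ∃ (c₀ : ℝ) (c : Fin l → ℝ), ∀ᵐ x ∂P,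
      φ' (Qs.rnDeriv P x) = c₀ + ∑ i, c i * g i x) :
    ∀ Q ∈ linconSet P g,
      Integrable (fun x => φ' (Qs.rnDeriv P x) * Q.rnDeriv P x) P →
      div φ Qs P ≤ div φ Q P := by
  intro Q hQ hint
  by_cases hQfin : div φ Q P = ⊤
  · rw [hQfin]; exact le_top
  obtain ⟨hacQ, hQ1, hQg⟩ := hQ
  obtain ⟨hacs, hQs1, hQsg⟩ := hQs
  obtain ⟨c₀, c, hc⟩ := hlin
  have htvQ : Q.totalVariation ≪ P := aux_tv_ac P Q hacQ
  have htvQs : Qs.totalVariation ≪ P := aux_tv_ac P Qs hacs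
  set qs : X → ℝ := Qs.rnDeriv P with hqs
  set q : X → ℝ := Q.rnDeriv P with hqq
  have mqs : Measurable qs := SignedMeasure.measurable_rnDeriv Qs P
  have mq : Measurable q := SignedMeasure.measurable_rnDeriv Q P
  have mφ : Measurable φ := hlsc.measurable
  have aelt_s : ∀ᵐ x ∂P, φ (qs x) < ⊤ := ae_lt_top (mφ.comp mqs) hfin
  have aelt_q : ∀ᵐ x ∂P, φ (q x) < ⊤ := ae_lt_top (mφ.comp mq) hQfin
  -- integrability of the toReal parts
  have intS : Integrable (fun x => (φ (qs x)).toReal) P :=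
    integrable_toReal_of_lintegral_ne_top (mφ.comp mqs).aemeasurable hfin
  have intQ : Integrable (fun x => (φ (q x)).toReal) P :=
    integrable_toReal_of_lintegral_ne_top (mφ.comp mq).aemeasurable hQfin
  -- integrability of φ'(qs)·qs
  have base_s : Integrable qs P := SignedMeasure.integrable_rnDeriv Qs P
  have base_q : Integrable q P := SignedMeasure.integrable_rnDeriv Q P
  have intgs : ∀ i, Integrable (fun x => qs x * g i x) P :=
    fun i => (aux_int_mul P Qs htvQs (g i) (hQsg i).1).1
  have intgq : ∀ i, Integrable (fun x => q x * g i x) P :=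
    fun i => (aux_int_mul P Q htvQ (g i) (hQg i).1).1
  have int2 : Integrable (fun x => φ' (qs x) * qs x) P := by
    have h1 : Integrable (fun x => c₀ * qs x + ∑ i, c i * (qs x * g i x)) P :=
      (base_s.const_mul c₀).add
        (integrable_finset_sum _ (fun i _ => (intgs i).const_mul (c i)))
    refine h1.congr ?_
    filter_upwards [hc] with x hx
    rw [hx, add_mul, Finset.sum_mul]
    congr 1
    exact Finset.sum_congr rfl fun i _ => by ring
  have int1 : Integrable (fun x => φ' (qs x) * q x) P := hint
  -- linear functional values
  have val : ∀ (R : SignedMeasure X), R ≪ᵥ P.toENNRealVectorMeasure →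
      R Set.univ = 1 → (∀ i, Integrable (g i) R.totalVariation ∧ sint R (g i) = 0) →
      ∫ x, φ' (qs x) * R.rnDeriv P x ∂P = c₀ := by
    intro R hacR hR1 hRg
    have htvR : R.totalVariation ≪ P := aux_tv_ac P R hacR
    have baseR : Integrable (R.rnDeriv P) P := SignedMeasure.integrable_rnDeriv R P
    have intgR : ∀ i, Integrable (fun x => R.rnDeriv P x * g i x) P :=
      fun i => (aux_int_mul P R htvR (g i) (hRg i).1).1
    have e1 : ∫ x, φ' (qs x) * R.rnDeriv P x ∂P
        = ∫ x, (c₀ * R.rnDeriv P x + ∑ i, c i * (R.rnDeriv P x * g i x)) ∂P := by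
      refine integral_congr_ae ?_
      filter_upwards [hc] with x hx
      rw [hx, add_mul, Finset.sum_mul]
      congr 1
      exact Finset.sum_congr rfl fun i _ => by ring
    rw [e1, integral_add (baseR.const_mul c₀)
        (integrable_finset_sum _ (fun i _ => (intgR i).const_mul (c i))),
      integral_finset_sum _ (fun i _ => (intgR i).const_mul (c i))]
    have hR : ∫ x, R.rnDeriv P x ∂P = 1 := by rw [← aux_mass P R hacR, hR1]
    have hgz : ∀ i, ∫ x, R.rnDeriv P x * g i x ∂P = 0 := by
      intro i
      rw [← (aux_int_mul P R htvR (g i) (hRg i).1).2]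
      exact (hRg i).2
    simp only [integral_const_mul, hgz, mul_zero, Finset.sum_const_zero, hR, mul_one, add_zero]
  have valQ : ∫ x, φ' (qs x) * q x ∂P = c₀ := val Q hacQ hQ1 hQg
  have valS : ∫ x, φ' (qs x) * qs x ∂P = c₀ := val Qs hacs hQs1 hQsg
  -- the difference integrates to zero
  have intdiff : Integrable (fun x => φ' (qs x) * (q x - qs x)) P :=
    (int1.sub int2).congr (Filter.Eventually.of_forall (fun x => by simp only [Pi.sub_apply]; ring))
  have key : ∫ x, φ' (qs x) * (q x - qs x) ∂P = 0 := by
    have : (fun x => φ' (qs x) * (q x - qs x))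
        = fun x => φ' (qs x) * q x - φ' (qs x) * qs x := by funext x; ring
    rw [this, integral_sub int1 int2, valQ, valS, sub_self]
  -- pointwise convexity inequality
  have hptwise : ∀ᵐ x ∂P,
      (φ (qs x)).toReal + φ' (qs x) * (q x - qs x) ≤ (φ (q x)).toReal := by
    filter_upwards [aelt_s, aelt_q] with x h1 h2
    exact aux_grad_ineq φ φ' hconv hderiv h1.ne h2.ne
  -- integrate
  have hle : ∫ x, (φ (qs x)).toReal ∂P ≤ ∫ x, (φ (q x)).toReal ∂P := by
    have h1 : ∫ x, (φ (qs x)).toReal ∂P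
        = ∫ x, ((φ (qs x)).toReal + φ' (qs x) * (q x - qs x)) ∂P := by
      rw [integral_add intS intdiff, key, add_zero]
    rw [h1]
    exact integral_mono_ae (intS.add intdiff) intQ hptwise
  have e1 : ∫ x, (φ (qs x)).toReal ∂P = (∫⁻ x, φ (qs x) ∂P).toReal :=
    integral_toReal (mφ.comp mqs).aemeasurable aelt_s
  have e2 : ∫ x, (φ (q x)).toReal ∂P = (∫⁻ x, φ (q x) ∂P).toReal :=
    integral_toReal (mφ.comp mq).aemeasurable aelt_q
  refine (ENNReal.toReal_le_toReal hfin hQfin).mp ?_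
  rw [div, div, ← hqs, ← hqq, ← e1, ← e2]
  exact hle
end
end
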